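/- arXiv:2209.02060 — 8 statements merged into one kernel-verified Lean document; each statement's English description precedes it below -/
import Mathlib

section
/- (Eckart–Young, Frobenius norm) Let X be a real m×n matrix with singular values σ₁ ≥ σ₂ ≥ … ≥ σ_{min(m,n)} ≥ 0, and let 0 ≤ r ≤ min(m,n). Then for every m×n matrix Y with rank(Y) ≤ r one has ‖X − Y‖_F² ≥ Σ_{i=r+1}^{min(m,n)} σ_i², and there exists a matrix Y of rank at most r attaining this bound (a rank-r truncated SVD of X). -/
set_option maxHeartbeats 1000000

open Matrix

/-- The Frobenius norm of a real matrix. -/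
noncomputable def mfrob {m n : Type*} [Fintype m] [Fintype n] (X : Matrix m n ℝ) : ℝ :=
  Real.sqrt (∑ i, ∑ j, (X i j) ^ 2)

lemma EY.mfrob_sq {m n : Type*} [Fintype m] [Fintype n] (M : Matrix m n ℝ) :
    mfrob M ^ 2 = (Mᵀ * M).trace := by
  unfold mfrob
  rw [Real.sq_sqrt (by positivity)]
  simp only [Matrix.trace, Matrix.diag, Matrix.mul_apply, Matrix.transpose_apply, sq]
  exact Finset.sum_comm

lemma EY.trace_tmul_nonneg {m n : Type*} [Fintype m] [Fintype n] (M : Matrix m n ℝ) :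
    0 ≤ (Mᵀ * M).trace := by
  rw [← EY.mfrob_sq]; positivity

lemma EY.diag_tmul_nonneg {m n : Type*} [Fintype m] [Fintype n] (M : Matrix m n ℝ) (i : n) :
    0 ≤ (Mᵀ * M) i i := by
  simp only [Matrix.mul_apply, Matrix.transpose_apply]
  exact Finset.sum_nonneg fun k _ => mul_self_nonneg _

lemma EY.card_filter_lt (n r : ℕ) (hr : r ≤ n) :
    (Finset.univ.filter (fun i : Fin n => (i : ℕ) < r)).card = r := by
  rcases eq_or_lt_of_le hr with h | h
  · subst h
    rw [Finset.filter_true_of_mem (fun i _ => i.isLt), Finset.card_univ, Fintype.card_fin]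
  · have : (Finset.univ.filter (fun i : Fin n => (i : ℕ) < r)) = Finset.Iio ⟨r, h⟩ := by
      ext i; simp [Fin.lt_def]
    rw [this, Fin.card_Iio]

lemma EY.card_filter_le (n r : ℕ) (hr : r ≤ n) :
    (Finset.univ.filter (fun i : Fin n => r ≤ (i : ℕ))).card = n - r := by
  have h2 := Finset.card_filter_add_card_filter_not
    (s := (Finset.univ : Finset (Fin n))) (p := fun i : Fin n => (i : ℕ) < r)
  have h3 : Finset.univ.filter (fun i : Fin n => ¬ (i : ℕ) < r)
      = Finset.univ.filter (fun i : Fin n => r ≤ (i : ℕ)) := by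
    apply Finset.filter_congr; intro i _; simp [not_lt]
  rw [h3, EY.card_filter_lt n r hr, Finset.card_univ, Fintype.card_fin] at h2
  omega

lemma EY.key_arith (n r : ℕ) (hr : r ≤ n) (σ : Fin n → ℝ)
    (hnn : ∀ i, 0 ≤ σ i) (hmono : ∀ i j : Fin n, i ≤ j → σ j ≤ σ i)
    (s : Fin n → ℝ) (h0 : ∀ i, 0 ≤ s i) (h1 : ∀ i, s i ≤ 1)
    (hs : (n : ℝ) - r ≤ ∑ i, s i) :
    (∑ i : Fin n, if r ≤ (i : ℕ) then σ i ^ 2 else 0) ≤ ∑ i, σ i ^ 2 * s i := by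
  rcases eq_or_lt_of_le hr with h | h
  · have hz : (∑ i : Fin n, if r ≤ (i : ℕ) then σ i ^ 2 else 0) = 0 := by
      apply Finset.sum_eq_zero; intro i _
      rw [if_neg (by have := i.isLt; omega)]
    rw [hz]
    exact Finset.sum_nonneg fun i _ => mul_nonneg (sq_nonneg _) (h0 i)
  · set l : ℝ := σ ⟨r, h⟩ ^ 2 with hl
    have hlnn : 0 ≤ l := sq_nonneg _
    have key : ∀ i : Fin n,
        l * (s i - (if r ≤ (i : ℕ) then 1 else 0)) ≤
          σ i ^ 2 * s i - (if r ≤ (i : ℕ) then σ i ^ 2 else 0) := by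
      intro i
      by_cases hi : r ≤ (i : ℕ)
      · rw [if_pos hi, if_pos hi]
        have hle : σ i ^ 2 ≤ l := by
          apply pow_le_pow_left₀ (hnn i) _ 2
          exact hmono _ i (by simp [Fin.le_def, hi])
        nlinarith [h1 i]
      · rw [if_neg hi, if_neg hi]
        have hle : l ≤ σ i ^ 2 := by
          apply pow_le_pow_left₀ (hnn _) _ 2
          exact hmono i _ (by simp only [Fin.le_def]; omega)
        nlinarith [h0 i]
    have hsum := Finset.sum_le_sum (fun i (_ : i ∈ Finset.univ) => key i)
    rw [← Finset.mul_sum, Finset.sum_sub_distrib, Finset.sum_sub_distrib] at hsum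
    have hcount : (∑ i : Fin n, (if r ≤ (i : ℕ) then (1:ℝ) else 0)) = (n : ℝ) - r := by
      rw [Finset.sum_boole, EY.card_filter_le n r hr]
      push_cast [Nat.cast_sub hr]
      ring
    rw [hcount] at hsum
    nlinarith

/-- existence of an orthogonal-projection matrix annihilating `Y` with large trace -/
lemma EY.exists_proj (m n r : ℕ) (hrn : r ≤ n) (Y : Matrix (Fin m) (Fin n) ℝ) (hY : Y.rank ≤ r) :
    ∃ P : Matrix (Fin n) (Fin n) ℝ, Pᵀ = P ∧ P * P = P ∧ Y * P = 0 ∧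
      (n : ℝ) - r ≤ P.trace := by
  classical
  set L : EuclideanSpace ℝ (Fin n) →ₗ[ℝ] (Fin m → ℝ) :=
    (Matrix.mulVecLin Y).comp (WithLp.linearEquiv 2 ℝ (Fin n → ℝ)).toLinearMap with hL
  set K := LinearMap.ker L with hK
  have hrange : LinearMap.range L = LinearMap.range (Matrix.mulVecLin Y) := by
    rw [hL, LinearMap.range_comp, LinearEquiv.range, Submodule.map_top]
  have hdim : Module.finrank ℝ (LinearMap.range L) + Module.finrank ℝ K = n := by
    rw [hK]
    rw [LinearMap.finrank_range_add_finrank_ker L]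
    simp [finrank_euclideanSpace]
  have hrk : Module.finrank ℝ (LinearMap.range L) ≤ r := by
    rw [hrange]; exact hY
  set k := Module.finrank ℝ K with hk
  have hkge : n - r ≤ k := by omega
  let b : OrthonormalBasis (Fin k) ℝ K := stdOrthonormalBasis ℝ K
  let B : Matrix (Fin k) (Fin n) ℝ := fun i j => ((b i : EuclideanSpace ℝ (Fin n)) : Fin n → ℝ) j
  have hBB : B * Bᵀ = 1 := by
    ext i j
    simp only [Matrix.mul_apply, Matrix.transpose_apply, Matrix.one_apply, B]
    have := b.orthonormal
    rw [orthonormal_iff_ite] at this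
    have h2 := this i j
    rw [Submodule.coe_inner, PiLp.inner_apply] at h2
    simp only [RCLike.inner_apply, conj_trivial] at h2
    refine Eq.trans ?_ h2
    change ∑ x, B i x * B j x = ∑ x, B j x * B i x
    exact Finset.sum_congr rfl fun x _ => mul_comm _ _
  have hYB : Y * Bᵀ = 0 := by
    ext i j
    simp only [Matrix.mul_apply, Matrix.transpose_apply, Matrix.zero_apply]
    have hmem : L ((b j : K) : EuclideanSpace ℝ (Fin n)) = 0 := LinearMap.mem_ker.mp (b j).2
    have h3 : Y.mulVec (fun l => B j l) = 0 := hmem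
    have h4 := congrFun h3 i
    simpa [Matrix.mulVec, dotProduct] using h4
  refine ⟨Bᵀ * B, ?_, ?_, ?_, ?_⟩
  · rw [Matrix.transpose_mul, Matrix.transpose_transpose]
  · rw [Matrix.mul_assoc, ← Matrix.mul_assoc B, hBB, Matrix.one_mul]
  · rw [← Matrix.mul_assoc, hYB, Matrix.zero_mul]
  · rw [Matrix.trace_mul_comm, hBB, Matrix.trace_one]
    have : ((n - r : ℕ) : ℝ) ≤ (k : ℝ) := by exact_mod_cast hkge
    rw [Nat.cast_sub hrn] at this
    simpa using this

lemma EY.diag_conj_nonneg {n : ℕ} (U P : Matrix (Fin n) (Fin n) ℝ)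
    (hPt : Pᵀ = P) (hPP : P * P = P) (i : Fin n) :
    0 ≤ (Uᵀ * P * U) i i := by
  have key : (P * U)ᵀ * (P * U) = Uᵀ * P * U := by
    rw [Matrix.transpose_mul, hPt, Matrix.mul_assoc, ← Matrix.mul_assoc P P U, hPP,
      ← Matrix.mul_assoc]
  rw [← key]
  exact EY.diag_tmul_nonneg _ i

lemma EY.trace_tmul_proj {m n : ℕ} (M : Matrix (Fin m) (Fin n) ℝ) (P : Matrix (Fin n) (Fin n) ℝ)
    (hPt : Pᵀ = P) (hPP : P * P = P) :
    (Mᵀ * M * P).trace = ((M * P)ᵀ * (M * P)).trace := by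
  have h : ((M * P)ᵀ * (M * P)).trace = (Mᵀ * (M * P)).trace := by
    rw [Matrix.transpose_mul, hPt, Matrix.mul_assoc, Matrix.trace_mul_comm,
      Matrix.mul_assoc Mᵀ (M * P) P, Matrix.mul_assoc M P P, hPP]
  rw [Matrix.mul_assoc]
  exact h.symm

lemma EY.trace_diagonal_mul {n : ℕ} (d : Fin n → ℝ) (Q : Matrix (Fin n) (Fin n) ℝ) :
    (Matrix.diagonal d * Q).trace = ∑ i, d i * Q i i := by
  simp [Matrix.trace, Matrix.diag, Matrix.diagonal_mul]

/-- **Eckart–Young theorem (Frobenius norm).**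
Let `X` be a real `m × n` matrix and let `σ` be its singular values listed in nonincreasing
order, i.e. the nonnegative square roots of the eigenvalues of `Xᵀ * X` (there are `n` of them,
of which at most `min m n` are nonzero).  Then for `0 ≤ r ≤ min m n` and every matrix `Y` of
rank at most `r` one has `‖X - Y‖_F² ≥ Σ_{i = r+1}^{min(m,n)} σ_i²`, and there exists a matrix
of rank at most `r` attaining this bound. -/
theorem eckart_young_frobenius (m n r : ℕ) (hr : r ≤ min m n)
    (X : Matrix (Fin m) (Fin n) ℝ)
    (hH : (Xᵀ * X).IsHermitian)
    (σ : Fin n → ℝ)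
    (hσnonneg : ∀ i, 0 ≤ σ i)
    (hσmono : ∀ i j : Fin n, i ≤ j → σ j ≤ σ i)
    (hσeig : ∃ e : Equiv.Perm (Fin n), ∀ i, σ i ^ 2 = hH.eigenvalues (e i)) :
    (∀ Y : Matrix (Fin m) (Fin n) ℝ, Y.rank ≤ r →
      (∑ i : Fin n, if r ≤ (i : ℕ) ∧ (i : ℕ) < min m n then σ i ^ 2 else 0) ≤
        mfrob (X - Y) ^ 2) ∧
    (∃ Y : Matrix (Fin m) (Fin n) ℝ, Y.rank ≤ r ∧
      mfrob (X - Y) ^ 2 =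
        ∑ i : Fin n, if r ≤ (i : ℕ) ∧ (i : ℕ) < min m n then σ i ^ 2 else 0) := by
  classical
  obtain ⟨e, he⟩ := hσeig
  have hrn : r ≤ n := le_trans hr (min_le_right _ _)
  have hsU : star ((hH.eigenvectorUnitary : Matrix (Fin n) (Fin n) ℝ))
      = (hH.eigenvectorUnitary : Matrix (Fin n) (Fin n) ℝ)ᵀ := by
    rw [Matrix.star_eq_conjTranspose, Matrix.conjTranspose_eq_transpose_of_trivial]
  set U : Matrix (Fin n) (Fin n) ℝ := (hH.eigenvectorUnitary : Matrix (Fin n) (Fin n) ℝ)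
    with hUdef
  set lam : Fin n → ℝ := hH.eigenvalues with hlam
  have hU1 : U * Uᵀ = 1 := by
    have h := Matrix.mem_unitaryGroup_iff.mp (hH.eigenvectorUnitary).2
    rwa [hsU] at h
  have hU2 : Uᵀ * U = 1 := by
    have h := Matrix.mem_unitaryGroup_iff'.mp (hH.eigenvectorUnitary).2
    rwa [hsU] at h
  have hspec : Xᵀ * X = U * Matrix.diagonal lam * Uᵀ := by
    have h := hH.spectral_theorem
    rw [Unitary.conjStarAlgAut_apply] at h
    rw [hsU] at h
    have hdiag : (RCLike.ofReal ∘ hH.eigenvalues : Fin n → ℝ) = lam := by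
      funext i
      simp [RCLike.ofReal_real_eq_id, hlam]
    rw [h, hdiag, ← hUdef]
  -- singular values beyond `min m n` vanish
  have hzero : ∀ i : Fin n, min m n ≤ (i : ℕ) → σ i = 0 := by
    intro i hi
    by_contra hne
    have hpos : 0 < σ i := lt_of_le_of_ne (hσnonneg i) (Ne.symm hne)
    have hin := i.isLt
    have hmi : m ≤ (i : ℕ) := by omega
    have hrankX : (Xᵀ * X).rank ≤ m := by
      rw [Matrix.rank_transpose_mul_self]
      exact Matrix.rank_le_height X
    have hcard := hH.rank_eq_card_non_zero_eigs
    have h5 : (i : ℕ) + 1 ≤ Fintype.card {l // hH.eigenvalues l ≠ 0} := by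
      rw [Fintype.card_subtype]
      have hmem : ∀ j ∈ Finset.Iic i, e j ∈ Finset.univ.filter
          (fun l => hH.eigenvalues l ≠ 0) := by
        intro j hj
        rw [Finset.mem_filter]
        refine ⟨Finset.mem_univ _, ?_⟩
        have hσj : 0 < σ j := lt_of_lt_of_le hpos (hσmono j i (Finset.mem_Iic.mp hj))
        exact fun hc => (ne_of_gt (pow_pos hσj 2)) ((he j).trans hc)
      have h6 := Finset.card_le_card_of_injOn (fun j => e j) hmem
        (Function.Injective.injOn e.injective)
      rwa [Fin.card_Iic] at h6
    omega
  have hsum_eq : (∑ i : Fin n, if r ≤ (i : ℕ) ∧ (i : ℕ) < min m n then σ i ^ 2 else 0)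
      = ∑ i : Fin n, if r ≤ (i : ℕ) then σ i ^ 2 else 0 := by
    apply Finset.sum_congr rfl
    intro i _
    by_cases h1 : r ≤ (i : ℕ)
    · by_cases h2 : (i : ℕ) < min m n
      · rw [if_pos ⟨h1, h2⟩, if_pos h1]
      · rw [if_neg (by tauto), if_pos h1, hzero i (not_lt.mp h2)]
        ring
    · rw [if_neg (by tauto), if_neg h1]
  have htraceAP : ∀ P : Matrix (Fin n) (Fin n) ℝ,
      ((Xᵀ * X) * P).trace = ∑ i, lam i * (Uᵀ * P * U) i i := by
    intro P
    rw [hspec, Matrix.mul_assoc (U * Matrix.diagonal lam) Uᵀ P,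
      Matrix.mul_assoc U (Matrix.diagonal lam) (Uᵀ * P), Matrix.trace_mul_comm,
      Matrix.mul_assoc, EY.trace_diagonal_mul]
  constructor
  · -- lower bound
    intro Y hY
    obtain ⟨P, hPt, hPP, hYP, hPtr⟩ := EY.exists_proj m n r hrn Y hY
    have hQt : (1 - P)ᵀ = 1 - P := by
      rw [Matrix.transpose_sub, Matrix.transpose_one, hPt]
    have hQP : (1 - P) * (1 - P) = 1 - P := by
      have hexp : (1 - P) * (1 - P) = 1 - P - P + P * P := by noncomm_ring
      rw [hexp, hPP]
      abel
    have ht0 : ∀ i, 0 ≤ (Uᵀ * P * U) i i := fun i => EY.diag_conj_nonneg U P hPt hPP i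
    have ht1 : ∀ i, (Uᵀ * P * U) i i ≤ 1 := by
      intro i
      have h := EY.diag_conj_nonneg U (1 - P) hQt hQP i
      have hexp : Uᵀ * (1 - P) * U = 1 - Uᵀ * P * U := by
        rw [Matrix.mul_sub, Matrix.mul_one, Matrix.sub_mul, hU2]
      rw [hexp, Matrix.sub_apply, Matrix.one_apply_eq] at h
      linarith
    have htsum : (n : ℝ) - r ≤ ∑ i, (Uᵀ * P * U) i i := by
      have h1 : ∑ i, (Uᵀ * P * U) i i = (Uᵀ * P * U).trace := rfl
      have h2 : (Uᵀ * P * U).trace = P.trace := by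
        rw [Matrix.trace_mul_comm (Uᵀ * P) U, ← Matrix.mul_assoc, hU1, Matrix.one_mul]
      rw [h1, h2]
      exact hPtr
    rw [EY.mfrob_sq, hsum_eq]
    have hle1 : ((X - Y)ᵀ * (X - Y) * P).trace ≤ ((X - Y)ᵀ * (X - Y)).trace := by
      have h := EY.trace_tmul_proj (X - Y) (1 - P) hQt hQP
      have h0 : 0 ≤ ((X - Y)ᵀ * (X - Y) * (1 - P)).trace := by
        rw [h]; exact EY.trace_tmul_nonneg _
      rw [Matrix.mul_sub, Matrix.mul_one, Matrix.trace_sub] at h0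
      linarith
    have hMP : (X - Y) * P = X * P := by
      rw [Matrix.sub_mul, hYP, sub_zero]
    have heq : ((X - Y)ᵀ * (X - Y) * P).trace = ((Xᵀ * X) * P).trace := by
      rw [EY.trace_tmul_proj (X - Y) P hPt hPP, hMP, ← EY.trace_tmul_proj X P hPt hPP]
    have hfin : (∑ i : Fin n, if r ≤ (i : ℕ) then σ i ^ 2 else 0) ≤ ((Xᵀ * X) * P).trace := by
      rw [htraceAP P]
      have hre : ∑ i, lam i * (Uᵀ * P * U) i i
          = ∑ j, σ j ^ 2 * (Uᵀ * P * U) (e j) (e j) := by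
        rw [← Equiv.sum_comp e (fun i => lam i * (Uᵀ * P * U) i i)]
        exact Finset.sum_congr rfl fun j _ => by rw [← he j]
      rw [hre]
      exact EY.key_arith n r hrn σ hσnonneg hσmono (fun j => (Uᵀ * P * U) (e j) (e j))
        (fun j => ht0 (e j)) (fun j => ht1 (e j))
        (by rw [Equiv.sum_comp e (fun i => (Uᵀ * P * U) i i)]; exact htsum)
    linarith
  · -- attainment
    set χ : Fin n → ℝ := fun i => if ((e.symm i : Fin n) : ℕ) < r then 1 else 0 with hχ
    refine ⟨X * (U * Matrix.diagonal χ * Uᵀ), ?_, ?_⟩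
    · calc (X * (U * Matrix.diagonal χ * Uᵀ)).rank
          ≤ (U * Matrix.diagonal χ * Uᵀ).rank := Matrix.rank_mul_le_right _ _
        _ ≤ (U * Matrix.diagonal χ).rank := Matrix.rank_mul_le_left _ _
        _ ≤ (Matrix.diagonal χ).rank := Matrix.rank_mul_le_right _ _
        _ ≤ r := by
            rw [Matrix.rank_diagonal]
            have he1 : ∀ i : Fin n, χ i ≠ 0 ↔ ((e.symm i : Fin n) : ℕ) < r := by
              intro i
              rw [hχ]
              by_cases h : ((e.symm i : Fin n) : ℕ) < r <;> simp [h]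
            have he2 : {i : Fin n // χ i ≠ 0} ≃ {j : Fin n // (j : ℕ) < r} :=
              Equiv.subtypeEquiv e.symm he1
            rw [Fintype.card_congr he2, Fintype.card_subtype, EY.card_filter_lt n r hrn]
    · have hd2 : ∀ i : Fin n, (1 - χ i) * (1 - χ i) = 1 - χ i := by
        intro i
        rw [hχ]
        by_cases h : ((e.symm i : Fin n) : ℕ) < r <;> simp [h]
      set P2 : Matrix (Fin n) (Fin n) ℝ := U * Matrix.diagonal (fun i => 1 - χ i) * Uᵀ
        with hP2
      have hP2t : P2ᵀ = P2 := by
        rw [hP2, Matrix.transpose_mul, Matrix.transpose_mul, Matrix.transpose_transpose,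
          Matrix.diagonal_transpose, Matrix.mul_assoc]
      have hP2P : P2 * P2 = P2 := by
        rw [hP2]
        simp only [Matrix.mul_assoc]
        rw [← Matrix.mul_assoc Uᵀ U, hU2, Matrix.one_mul,
          ← Matrix.mul_assoc (Matrix.diagonal _) (Matrix.diagonal _) Uᵀ,
          Matrix.diagonal_mul_diagonal,
          show (fun i : Fin n => (1 - χ i) * (1 - χ i)) = fun i : Fin n => 1 - χ i
            from funext fun i => hd2 i]
      have hdd : Matrix.diagonal (fun i : Fin n => (1:ℝ) - χ i)
          = 1 - Matrix.diagonal χ := by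
        ext i j
        rcases eq_or_ne i j with h | h
        · subst h; simp
        · simp [Matrix.diagonal_apply_ne _ h, Matrix.one_apply_ne h]
      have hsplit : P2 = 1 - U * Matrix.diagonal χ * Uᵀ := by
        rw [hP2, hdd, Matrix.mul_sub, Matrix.mul_one, Matrix.sub_mul, hU1]
      have hXmY : X - X * (U * Matrix.diagonal χ * Uᵀ) = X * P2 := by
        rw [hsplit, Matrix.mul_sub, Matrix.mul_one]
      rw [hXmY, EY.mfrob_sq, ← EY.trace_tmul_proj X P2 hP2t hP2P, htraceAP P2, hsum_eq]
      have hUPU : Uᵀ * P2 * U = Matrix.diagonal (fun i => 1 - χ i) := by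
        rw [hP2]
        simp only [Matrix.mul_assoc]
        rw [hU2, Matrix.mul_one, ← Matrix.mul_assoc, hU2, Matrix.one_mul]
      rw [hUPU]
      rw [← Equiv.sum_comp e (fun i => lam i * Matrix.diagonal (fun i => 1 - χ i) i i)]
      apply Finset.sum_congr rfl
      intro j _
      simp only [Matrix.diagonal_apply_eq, ← he j, hχ, Equiv.symm_apply_apply]
      by_cases h : (j : ℕ) < r
      · rw [if_pos h, if_neg (by omega)]
        ring
      · rw [if_neg h, if_pos (by omega)]
        ring
end

section
/- Let X ∈ ℝ^{n₁×…×n_d} be a d-dimensional tensor (d ≥ 2) with tensor-train rank (r₁,…,r_{d−1}), i.e., rank(X_{<k>}) = r_k for each 1 ≤ k ≤ d−1. Then there exist matrices G₁ ∈ ℝ^{n₁×r₁} and G_d ∈ ℝ^{r_{d−1}×n_d} and three-dimensional tensors G_k ∈ ℝ^{r_{k−1}×n_k×r_k} for 2 ≤ k ≤ d−1 such that X(i₁,…,i_d) = Σ_{α₁,…,α_{d−1}} G₁(i₁,α₁) G₂(α₁,i₂,α₂) ⋯ G_{d−1}(α_{d−2},i_{d−1},α_{d−1}) G_d(α_{d−1},i_d)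 for all indices, where each α_k ranges over {1,…,r_k}. -/
/-- The matricization of a `d`-dimensional tensor `X` splitting the indices after position `k`
(0-based): for `k : Fin (d-1)`, `matricize n X k.val` is the `(k+1)`-st matricization
`X_{<k+1>}` in 1-based notation. -/
def matricize {d : ℕ} (n : Fin d → ℕ) (X : (∀ k, Fin (n k)) → ℝ) (k : ℕ) :
    Matrix (∀ j : {j : Fin d // j.val ≤ k}, Fin (n j.1))
      (∀ j : {j : Fin d // k < j.val}, Fin (n j.1)) ℝ :=
  Matrix.of fun row col =>
    X (fun j => if h : j.val ≤ k then row ⟨j, h⟩ else col ⟨j, Nat.lt_of_not_le h⟩)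

/-- The bond dimensions of a tensor-train decomposition with TT-ranks `r = (r₁, …, r_{d-1})`:
the `b`-th bond (for `b : Fin (d+1)`) has dimension `r b` in the interior (`1 ≤ b ≤ d-1`) and
dimension `1` at the two boundaries, so that the first and last cores are matrices
`G₁ ∈ ℝ^{n₁ × r₁}` and `G_d ∈ ℝ^{r_{d-1} × n_d}`. -/
def ttDims (d : ℕ) (r : Fin (d - 1) → ℕ) : Fin (d + 1) → ℕ :=
  fun b => if h : 1 ≤ b.val ∧ b.val ≤ d - 1 then r ⟨b.val - 1, by omega⟩ else 1

/-- Evaluation of a tensor train with bond dimensions `ρ` and cores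
`G k ∈ ℝ^{ρ_k × n_k × ρ_{k+1}}` at a multi-index `i`:
`Σ_{α₁,…,α_{d-1}} G₁(i₁,α₁) G₂(α₁,i₂,α₂) ⋯ G_d(α_{d-1},i_d)` (the boundary bonds have
dimension 1, so the sum effectively ranges over the interior bond indices only). -/
noncomputable def ttEval {d : ℕ} (n : Fin d → ℕ) (ρ : Fin (d + 1) → ℕ)
    (G : ∀ k : Fin d, Fin (ρ k.castSucc) → Fin (n k) → Fin (ρ k.succ) → ℝ)
    (i : ∀ k, Fin (n k)) : ℝ :=
  ∑ α : ∀ b : Fin (d + 1), Fin (ρ b), ∏ k : Fin d, G k (α k.castSucc) (i k) (α k.succ)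

/-! ### Auxiliary machinery: transfer-matrix chains -/

noncomputable def ttChain : (m : ℕ) → (ρ : Fin (m+1) → ℕ) →
    (∀ k : Fin m, Fin (ρ k.castSucc) → Fin (ρ k.succ) → ℝ) →
    Fin (ρ ⟨0, Nat.succ_pos m⟩) → Fin (ρ (Fin.last m)) → ℝ
  | 0, _, _, a, b => if a.val = b.val then 1 else 0
  | (m+1), ρ, T, a, b =>
      ∑ c : Fin (ρ (⟨0, Nat.succ_pos m⟩ : Fin (m+1)).succ),
        T ⟨0, Nat.succ_pos m⟩ a c *
          ttChain m (fun b' => ρ b'.succ) (fun k => T k.succ) c b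

theorem ttChain_eq : ∀ (m : ℕ) (ρ : Fin (m+1) → ℕ)
    (T : ∀ k : Fin m, Fin (ρ k.castSucc) → Fin (ρ k.succ) → ℝ)
    (u : ∀ b : Fin (m+1), Fin (ρ b) → ℝ)
    (_ : ∀ (k : Fin m) (a : Fin (ρ k.castSucc)), u k.castSucc a = ∑ c, T k a c * u k.succ c)
    (a : Fin (ρ ⟨0, Nat.succ_pos m⟩)),
    u ⟨0, Nat.succ_pos m⟩ a = ∑ b, ttChain m ρ T a b * u (Fin.last m) b
  | 0, ρ, T, u, h, a => by
    simp only [ttChain]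
    have key : ∀ b, ((if a.val = b.val then (1:ℝ) else 0) * u (Fin.last 0) b)
        = if a = b then u (Fin.last 0) b else 0 := by
      intro b
      split
      · next hab =>
          rw [if_pos (Fin.ext hab)]; simp
      · next hab =>
          rw [if_neg (fun e => hab (congrArg Fin.val e))]; simp
    rw [Finset.sum_congr rfl fun b _ => key b, Finset.sum_ite_eq]
    simp
  | (m+1), ρ, T, u, h, a => by
    simp only [ttChain]
    have h0 := h ⟨0, Nat.succ_pos m⟩ a
    have IH := ttChain_eq m (fun b' => ρ b'.succ) (fun k => T k.succ) (fun b => u b.succ)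
      (fun k a => h k.succ a)
    calc u ⟨0, Nat.succ_pos (m+1)⟩ a
        = ∑ c, T ⟨0, Nat.succ_pos m⟩ a c * u (⟨0, Nat.succ_pos m⟩ : Fin (m+1)).succ c := h0
      _ = ∑ c, T ⟨0, Nat.succ_pos m⟩ a c *
            ∑ b, ttChain m (fun b' => ρ b'.succ) (fun k => T k.succ) c b * u (Fin.last m).succ b := by
          refine Finset.sum_congr rfl (fun c _ => ?_)
          exact congrArg (fun z => T ⟨0, Nat.succ_pos m⟩ a c * z) (IH c)
      _ = ∑ b, (∑ c, T ⟨0, Nat.succ_pos m⟩ a c *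
            ttChain m (fun b' => ρ b'.succ) (fun k => T k.succ) c b) * u (Fin.last (m+1)) b := by
          simp only [Finset.mul_sum, Finset.sum_mul, mul_assoc]
          exact Finset.sum_comm

theorem ttSum_chain : ∀ (m : ℕ) (ρ : Fin (m+1) → ℕ)
    (T : ∀ k : Fin m, Fin (ρ k.castSucc) → Fin (ρ k.succ) → ℝ)
    (a : Fin (ρ ⟨0, Nat.succ_pos m⟩)),
    ∑ β : (∀ k : Fin m, Fin (ρ k.succ)),
        ∏ k : Fin m, T k (Fin.cons (α := fun b => Fin (ρ b)) a β k.castSucc) (β k)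
      = ∑ b, ttChain m ρ T a b
  | 0, ρ, T, a => by
    simp [ttChain]
    have : (Finset.filter (fun x : Fin (ρ (Fin.last 0)) => (a : ℕ) = (x : ℕ)) Finset.univ) = {a} := by
      ext x
      simp [Fin.val_eq_val, eq_comm]
    rw [Finset.card_eq_one.mpr ⟨a, by ext x; simp [Fin.val_eq_val, eq_comm]⟩]
    simp
  | (m+1), ρ, T, a => by
    simp only [ttChain]
    rw [← Equiv.sum_comp (Fin.consEquiv (fun k : Fin (m+1) => Fin (ρ k.succ)))
        (fun β => ∏ k : Fin (m+1), T k (Fin.cons (α := fun b => Fin (ρ b)) a β k.castSucc) (β k)),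
      Fintype.sum_prod_type]
    have hprod : ∀ (x : Fin (ρ (Fin.succ ⟨0, Nat.succ_pos m⟩))) (y : ∀ i : Fin m, Fin (ρ i.succ.succ)),
        (∏ k : Fin (m+1), T k
            (Fin.cons (α := fun b => Fin (ρ b)) a ((Fin.consEquiv fun k : Fin (m+1) => Fin (ρ k.succ)) (x, y)) k.castSucc)
            (((Fin.consEquiv fun k : Fin (m+1) => Fin (ρ k.succ)) (x, y)) k))
        = T ⟨0, Nat.succ_pos m⟩ a x *
            ∏ k : Fin m, T k.succ (Fin.cons (α := fun b : Fin (m+1) => Fin (ρ b.succ)) x y k.castSucc) (y k) := by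
      intro x y
      rw [Fin.prod_univ_succ]
      simp only [Fin.consEquiv, Equiv.coe_fn_mk, ← Fin.succ_castSucc, Fin.cons_succ,
        Fin.cons_zero, Fin.castSucc_zero]
      rfl
    refine Eq.trans (Finset.sum_congr rfl fun x _ => ?_) Finset.sum_comm
    exact Eq.trans (Finset.sum_congr rfl fun y _ => hprod x y)
      (Eq.trans (Finset.mul_sum _ _ _).symm
        (Eq.trans (congrArg (fun z => T ⟨0, Nat.succ_pos m⟩ a x * z)
           (ttSum_chain m (fun b' => ρ b'.succ) (fun k => T k.succ) x))
          (Finset.mul_sum _ _ _)))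

theorem ttEval_eq_chain (m : ℕ) (n' : Fin m → ℕ) (ρ : Fin (m+1) → ℕ)
    (G : ∀ k : Fin m, Fin (ρ k.castSucc) → Fin (n' k) → Fin (ρ k.succ) → ℝ)
    (i : ∀ k, Fin (n' k)) :
    ttEval n' ρ G i = ∑ a : Fin (ρ ⟨0, Nat.succ_pos m⟩), ∑ b : Fin (ρ (Fin.last m)),
      ttChain m ρ (fun k a b => G k a (i k) b) a b := by
  unfold ttEval
  rw [← Equiv.sum_comp (Fin.consEquiv (fun b : Fin (m+1) => Fin (ρ b)))
      (fun α => ∏ k : Fin m, G k (α k.castSucc) (i k) (α k.succ)),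
    Fintype.sum_prod_type]
  refine Finset.sum_congr rfl fun a _ => ?_
  refine Eq.trans (Finset.sum_congr rfl fun β _ => ?_)
    (ttSum_chain m ρ (fun k a b => G k a (i k) b) a)
  refine Finset.prod_congr rfl fun k _ => ?_
  simp only [Fin.consEquiv, Equiv.coe_fn_mk, Fin.cons_succ]

/-! ### Auxiliary machinery: index gluing -/

section glue
variable {d : ℕ} (n : Fin d → ℕ)

def restrTT (t : ℕ) (i : ∀ k, Fin (n k)) : ∀ j : {j : Fin d // t < j.val}, Fin (n j.1) :=
  fun j => i j.1

def rowRestrTT (t : ℕ) (i : ∀ k, Fin (n k)) : ∀ j : {j : Fin d // j.val ≤ t}, Fin (n j.1) :=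
  fun j => i j.1

def extFunTT (t : ℕ) (p : Fin d) (hp : p.val = t + 1) (y : Fin (n p))
    (col' : ∀ j : {j : Fin d // p.val < j.val}, Fin (n j.1)) :
    ∀ j : {j : Fin d // t < j.val}, Fin (n j.1) := fun j =>
  if h : p.val < j.1.val then col' ⟨j.1, h⟩
  else Fin.cast (congrArg n (Fin.ext (show p.val = j.1.val by have := j.2; omega))) y

def rowExtTT (t : ℕ) (p : Fin d) (hp : p.val = t + 1) (y : Fin (n p))
    (row : ∀ j : {j : Fin d // j.val ≤ t}, Fin (n j.1)) :
    ∀ j : {j : Fin d // j.val ≤ p.val}, Fin (n j.1) := fun j =>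
  if h : j.1.val ≤ t then row ⟨j.1, h⟩
  else Fin.cast (congrArg n (Fin.ext (show p.val = j.1.val by have := j.2; omega))) y

def rowOfTT (k : Fin d) (h0 : k.val = 0) (y : Fin (n k)) :
    ∀ j : {j : Fin d // j.val ≤ k.val}, Fin (n j.1) :=
  fun j => Fin.cast (congrArg n (Fin.ext (show k.val = j.1.val by have := j.2; omega))) y

def singleColTT (k : Fin d) (hl : k.val = d - 1) (y : Fin (n k)) :
    ∀ j : {j : Fin d // k.val - 1 < j.val}, Fin (n j.1) :=
  fun j => Fin.cast (congrArg n (Fin.ext (show k.val = j.1.val by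
    have := j.2; have := j.1.isLt; omega))) y

theorem cast_apply_TT (i : ∀ k, Fin (n k)) {p q : Fin d} (h : p = q) (h' : n p = n q) :
    Fin.cast h' (i p) = i q := by cases h; rfl

theorem extFun_restr (t : ℕ) (p : Fin d) (hp : p.val = t + 1) (i : ∀ k, Fin (n k)) :
    extFunTT n t p hp (i p) (restrTT n p.val i) = restrTT n t i := by
  funext j
  by_cases h : p.val < j.1.val
  · simp only [extFunTT, restrTT, dif_pos h]
  · simp only [extFunTT, restrTT, dif_neg h]
    exact cast_apply_TT n i (Fin.ext (show p.val = j.1.val by have := j.2; omega)) _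

variable (X : (∀ k, Fin (n k)) → ℝ)

theorem matricize_rowOf (k : Fin d) (h0 : k.val = 0) (i : ∀ k, Fin (n k)) :
    matricize n X k.val (rowOfTT n k h0 (i k)) (restrTT n k.val i) = X i := by
  refine congrArg X (funext fun j => ?_)
  by_cases h : j.val ≤ k.val
  · rw [dif_pos h]
    exact cast_apply_TT n i (Fin.ext (show k.val = j.val by omega)) _
  · rw [dif_neg h]
    rfl

theorem matricize_ext (t : ℕ) (p : Fin d) (hp : p.val = t + 1) (y : Fin (n p))
    (row : ∀ j : {j : Fin d // j.val ≤ t}, Fin (n j.1))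
    (col' : ∀ j : {j : Fin d // p.val < j.val}, Fin (n j.1)) :
    matricize n X t row (extFunTT n t p hp y col')
      = matricize n X p.val (rowExtTT n t p hp y row) col' := by
  refine congrArg X (funext fun j => ?_)
  by_cases h1 : j.val ≤ t
  · rw [dif_pos h1, dif_pos (show j.val ≤ p.val by omega)]
    unfold rowExtTT
    rw [dif_pos h1]
  · rw [dif_neg h1]
    unfold extFunTT
    by_cases h2 : p.val < j.val
    · rw [dif_pos h2, dif_neg (show ¬ j.val ≤ p.val by omega)]
    · rw [dif_neg h2, dif_pos (show j.val ≤ p.val by omega)]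
      unfold rowExtTT
      rw [dif_neg h1]

theorem slice_mem_TT (t : ℕ) (p : Fin d) (hp : p.val = t + 1) (y : Fin (n p))
    (x : (∀ j : {j : Fin d // t < j.val}, Fin (n j.1)) → ℝ)
    (hx : x ∈ Submodule.span ℝ (Set.range (matricize n X t))) :
    (fun col' => x (extFunTT n t p hp y col'))
      ∈ Submodule.span ℝ (Set.range (matricize n X p.val)) := by
  induction hx using Submodule.span_induction with
  | mem z hz =>
      obtain ⟨row, rfl⟩ := hz
      refine Submodule.subset_span ⟨rowExtTT n t p hp y row, ?_⟩
      funext col'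
      exact (matricize_ext n X t p hp y row col').symm
  | zero => exact Submodule.zero_mem _
  | add f g hf hg ihf ihg => exact Submodule.add_mem _ ihf ihg
  | smul c f hf ihf => exact Submodule.smul_mem _ c ihf

end glue

set_option maxHeartbeats 1000000 in
/-- **Existence of the tensor-train decomposition.**  If `X ∈ ℝ^{n₁ × … × n_d}` (`d ≥ 2`) has
TT-rank `(r₁, …, r_{d-1})`, i.e. `rank(X_{<k>}) = r k` for each `k`, then there exist TT cores
`G₁ ∈ ℝ^{n₁ × r₁}`, `G_k ∈ ℝ^{r_{k-1} × n_k × r_k}` (`2 ≤ k ≤ d-1`), `G_d ∈ ℝ^{r_{d-1} × n_d}`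
(encoded uniformly via boundary bond dimensions equal to 1) such that
`X(i₁,…,i_d) = Σ_{α₁,…,α_{d-1}} G₁(i₁,α₁) G₂(α₁,i₂,α₂) ⋯ G_d(α_{d-1},i_d)`. -/
theorem tt_decomposition_exists (d : ℕ) (hd : 2 ≤ d) (n : Fin d → ℕ)
    (r : Fin (d - 1) → ℕ) (X : (∀ k, Fin (n k)) → ℝ)
    (hrank : ∀ k : Fin (d - 1), (matricize n X k.val).rank = r k) :
    ∃ G : ∀ k : Fin d,
        Fin (ttDims d r k.castSucc) → Fin (n k) → Fin (ttDims d r k.succ) → ℝ,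
      ∀ i : ∀ k, Fin (n k), X i = ttEval n (ttDims d r) G i := by
  classical
  -- choose spanning families for the row spaces of the matricizations
  have hVex : ∀ t : Fin (d-1), ∃ V : Fin (r t) →
      ((∀ j : {j : Fin d // t.val < j.val}, Fin (n j.1)) → ℝ),
      (∀ α, V α ∈ Submodule.span ℝ (Set.range (matricize n X t.val))) ∧
      (∀ x ∈ Submodule.span ℝ (Set.range (matricize n X t.val)), ∃ c : Fin (r t) → ℝ,
        ∀ col, x col = ∑ β, c β * V β col) := by
    intro t
    have hfr : Module.finrank ℝ (Submodule.span ℝ (Set.range (matricize n X t.val))) = r t := by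
      have h1 := Matrix.rank_eq_finrank_span_cols (matricize n X t.val).transpose
      rw [Matrix.rank_transpose] at h1
      change _ = Module.finrank ℝ (Submodule.span ℝ (Set.range (matricize n X t.val))) at h1
      rw [← h1]
      exact hrank t
    let B := Module.finBasisOfFinrankEq ℝ _ hfr
    refine ⟨fun α => (B α : _), fun α => (B α).2, ?_⟩
    intro x hx
    have hsum := B.sum_repr ⟨x, hx⟩
    refine ⟨fun β => B.repr ⟨x, hx⟩ β, fun col => ?_⟩
    have h2 := congrArg (fun z : (Submodule.span ℝ (Set.range (matricize n X t.val))) =>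
      (z : _ → ℝ) col) hsum
    simp only [AddSubmonoidClass.coe_finset_sum, SetLike.val_smul, Finset.sum_apply,
      Pi.smul_apply, smul_eq_mul] at h2
    exact h2.symm
  choose V hVmem hVrep using hVex
  have tmid : ∀ (b : Fin (d+1)) (h1 : 1 ≤ b.val) (h2 : b.val ≤ d - 1),
      ttDims d r b = r ⟨b.val - 1, by omega⟩ := fun b h1 h2 => dif_pos ⟨h1, h2⟩
  have tone : ∀ (b : Fin (d+1)), ¬(1 ≤ b.val ∧ b.val ≤ d - 1) → ttDims d r b = 1 :=
    fun b h => dif_neg h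
  -- coefficients for the first core
  have hAex : ∀ (k : Fin d) (h0 : k.val = 0) (y : Fin (n k)),
      ∃ c : Fin (r ⟨k.val, by omega⟩) → ℝ, ∀ col,
        matricize n X k.val (rowOfTT n k h0 y) col
          = ∑ β, c β * V ⟨k.val, by omega⟩ β col := by
    intro k h0 y
    exact hVrep ⟨k.val, by omega⟩ (matricize n X k.val (rowOfTT n k h0 y))
      (Submodule.subset_span ⟨_, rfl⟩)
  choose A hA using hAex
  -- coefficients for the middle cores
  have hBex : ∀ (k : Fin d) (h1 : 1 ≤ k.val) (h2 : k.val ≤ d - 2)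
      (a : Fin (r ⟨k.val - 1, by omega⟩)) (y : Fin (n k)),
      ∃ c : Fin (r ⟨k.val, by omega⟩) → ℝ, ∀ col',
        V ⟨k.val - 1, by omega⟩ a (extFunTT n (k.val - 1) k (by omega) y col')
          = ∑ β, c β * V ⟨k.val, by omega⟩ β col' := by
    intro k h1 h2 a y
    have m1 := hVmem ⟨k.val - 1, by omega⟩ a
    have m2 := slice_mem_TT n X (k.val - 1) k (by omega) y _ m1
    exact hVrep ⟨k.val, by omega⟩ _ m2
  choose B hB using hBex
  -- construct the cores
  obtain ⟨G, hG1, hG2, hG3⟩ : ∃ G : ∀ k : Fin d,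
      Fin (ttDims d r k.castSucc) → Fin (n k) → Fin (ttDims d r k.succ) → ℝ,
      (∀ (k : Fin d) (h0 : k.val = 0) a x c, G k a x c
        = A k h0 x (Fin.cast (tmid k.succ (show 1 ≤ k.val + 1 by omega)
            (show k.val + 1 ≤ d - 1 by omega)) c)) ∧
      (∀ (k : Fin d) (h1 : 1 ≤ k.val) (h2 : k.val ≤ d - 2) a x c, G k a x c
        = B k h1 h2 (Fin.cast (tmid k.castSucc (show 1 ≤ k.val from h1)
              (show k.val ≤ d - 1 by omega)) a) x
            (Fin.cast (tmid k.succ (show 1 ≤ k.val + 1 by omega)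
              (show k.val + 1 ≤ d - 1 by omega)) c)) ∧
      (∀ (k : Fin d) (hl : k.val = d - 1) a x c, G k a x c
        = V ⟨k.val - 1, by omega⟩ (Fin.cast (tmid k.castSucc (show 1 ≤ k.val by omega)
            (show k.val ≤ d - 1 by omega)) a) (singleColTT n k hl x)) := by
    refine ⟨fun k a x c =>
      if h0 : k.val = 0 then
        A k h0 x (Fin.cast (tmid k.succ (show 1 ≤ k.val + 1 by omega)
          (show k.val + 1 ≤ d - 1 by omega)) c)
      else if hl : k.val = d - 1 then
        V ⟨k.val - 1, by omega⟩ (Fin.cast (tmid k.castSucc (show 1 ≤ k.val by omega)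
          (show k.val ≤ d - 1 by omega)) a) (singleColTT n k hl x)
      else
        B k (by omega) (by omega) (Fin.cast (tmid k.castSucc (show 1 ≤ k.val by omega)
            (show k.val ≤ d - 1 by omega)) a) x
          (Fin.cast (tmid k.succ (show 1 ≤ k.val + 1 by omega)
            (show k.val + 1 ≤ d - 1 by omega)) c), ?_, ?_, ?_⟩
    · intro k h0 a x c
      exact dif_pos h0
    · intro k h1 h2 a x c
      exact (dif_neg (show ¬ k.val = 0 by omega)).trans
        (dif_neg (show ¬ k.val = d - 1 by omega))
    · intro k hl a x c
      exact (dif_neg (show ¬ k.val = 0 by omega)).trans (dif_pos hl)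
  refine ⟨G, fun i => ?_⟩
  -- boundary/interior evaluation vectors
  obtain ⟨u, hu1, hu2, hu3⟩ : ∃ u : ∀ b : Fin (d+1), Fin (ttDims d r b) → ℝ,
      (∀ (b : Fin (d+1)) (h : 1 ≤ b.val ∧ b.val ≤ d - 1) α,
        u b α = V ⟨b.val - 1, by omega⟩ (Fin.cast (tmid b h.1 h.2) α)
          (restrTT n (b.val - 1) i)) ∧
      (∀ (b : Fin (d+1)) (_ : b.val = 0) α, u b α = X i) ∧
      (∀ (b : Fin (d+1)) (_ : b.val = d) α, u b α = 1) := by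
    refine ⟨fun b α =>
      if h : 1 ≤ b.val ∧ b.val ≤ d - 1 then
        V ⟨b.val - 1, by omega⟩ (Fin.cast (tmid b h.1 h.2) α) (restrTT n (b.val - 1) i)
      else if b.val = 0 then X i else 1, ?_, ?_, ?_⟩
    · intro b h α; exact dif_pos h
    · intro b h α; exact (dif_neg (by omega)).trans (if_pos h)
    · intro b h α
      exact (dif_neg (show ¬(1 ≤ b.val ∧ b.val ≤ d - 1) by omega)).trans
        (if_neg (show ¬ b.val = 0 by omega))
  have hyp : ∀ (k : Fin d) (a : Fin (ttDims d r k.castSucc)),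
      u k.castSucc a = ∑ c, G k a (i k) c * u k.succ c := by
    intro k a
    rcases Nat.lt_or_ge k.val 1 with hk | hk
    · -- first core
      have h0 : k.val = 0 := by omega
      have e := tmid k.succ (show 1 ≤ k.val + 1 by omega) (show k.val + 1 ≤ d - 1 by omega)
      have step0 : u k.castSucc a = X i := hu2 k.castSucc (show k.castSucc.val = 0 from h0) a
      rw [step0]
      calc X i = matricize n X k.val (rowOfTT n k h0 (i k)) (restrTT n k.val i) :=
            (matricize_rowOf n X k h0 i).symm
        _ = ∑ β, A k h0 (i k) β * V ⟨k.val, by omega⟩ β (restrTT n k.val i) :=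
            hA k h0 (i k) (restrTT n k.val i)
        _ = ∑ c : Fin (ttDims d r k.succ), A k h0 (i k) (Fin.cast e c)
              * V ⟨k.val, by omega⟩ (Fin.cast e c) (restrTT n k.val i) :=
            (Fintype.sum_equiv (finCongr e) _ _ (fun c => rfl)).symm
        _ = ∑ c, G k a (i k) c * u k.succ c := by
            refine Finset.sum_congr rfl fun c _ => ?_
            rw [hG1 k h0 a (i k) c,
              hu1 k.succ ⟨show 1 ≤ k.val + 1 by omega, show k.val + 1 ≤ d - 1 by omega⟩ c]
            rfl
    rcases Nat.lt_or_ge k.val (d-1) with hk2 | hk2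
    · -- middle cores
      have h1 : 1 ≤ k.val := hk
      have h2 : k.val ≤ d - 2 := by omega
      have e := tmid k.succ (show 1 ≤ k.val + 1 by omega) (show k.val + 1 ≤ d - 1 by omega)
      have ec := tmid k.castSucc (show 1 ≤ k.val from h1) (show k.val ≤ d - 1 by omega)
      have step1 : u k.castSucc a
          = V ⟨k.val - 1, by omega⟩ (Fin.cast ec a) (restrTT n (k.val - 1) i) :=
        hu1 k.castSucc ⟨show 1 ≤ k.val from h1, show k.val ≤ d - 1 by omega⟩ a
      have hres : restrTT n (k.val - 1) i
          = extFunTT n (k.val - 1) k (show k.val = k.val - 1 + 1 by omega) (i k)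
              (restrTT n k.val i) :=
        (extFun_restr n (k.val - 1) k (show k.val = k.val - 1 + 1 by omega) i).symm
      rw [step1]
      calc V ⟨k.val - 1, by omega⟩ (Fin.cast ec a) (restrTT n (k.val - 1) i)
          = V ⟨k.val - 1, by omega⟩ (Fin.cast ec a)
              (extFunTT n (k.val - 1) k (show k.val = k.val - 1 + 1 by omega) (i k)
                (restrTT n k.val i)) :=
            congrArg (V ⟨k.val - 1, by omega⟩ (Fin.cast ec a)) hres
        _ = ∑ β, B k h1 h2 (Fin.cast ec a) (i k) β
              * V ⟨k.val, by omega⟩ β (restrTT n k.val i) :=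
            hB k h1 h2 (Fin.cast ec a) (i k) (restrTT n k.val i)
        _ = ∑ c : Fin (ttDims d r k.succ), B k h1 h2 (Fin.cast ec a) (i k) (Fin.cast e c)
              * V ⟨k.val, by omega⟩ (Fin.cast e c) (restrTT n k.val i) :=
            (Fintype.sum_equiv (finCongr e) _ _ (fun c => rfl)).symm
        _ = ∑ c, G k a (i k) c * u k.succ c := by
            refine Finset.sum_congr rfl fun c _ => ?_
            exact (congrArg₂ (· * ·) (hG2 k h1 h2 a (i k) c)
              (hu1 k.succ ⟨show 1 ≤ k.val + 1 by omega, show k.val + 1 ≤ d - 1 by omega⟩ c)).symm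
    · -- last core
      have hl : k.val = d - 1 := by omega
      have ec := tmid k.castSucc (show 1 ≤ k.val by omega) (show k.val ≤ d - 1 by omega)
      have step1 : u k.castSucc a
          = V ⟨k.val - 1, by omega⟩ (Fin.cast ec a) (restrTT n (k.val - 1) i) :=
        hu1 k.castSucc ⟨show 1 ≤ k.val by omega, show k.val ≤ d - 1 by omega⟩ a
      rw [step1]
      have hone : ttDims d r k.succ = 1 :=
        tone k.succ (show ¬(1 ≤ k.val + 1 ∧ k.val + 1 ≤ d - 1) by omega)
      have hsing : restrTT n (k.val - 1) i = singleColTT n k hl (i k) := by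
        funext j
        exact (cast_apply_TT n i (Fin.ext (show k.val = j.1.val by
          have := j.2; have := j.1.isLt; omega)) _).symm
      have hstep : ∀ c : Fin (ttDims d r k.succ), G k a (i k) c * u k.succ c
          = V ⟨k.val - 1, by omega⟩ (Fin.cast ec a) (singleColTT n k hl (i k)) * 1 := by
        intro c
        rw [hG3 k hl a (i k) c, hu3 k.succ (show k.val + 1 = d by omega) c]
      rw [Finset.sum_congr rfl fun c _ => hstep c, Finset.sum_const, Finset.card_univ,
        Fintype.card_fin, hone, one_smul, mul_one, hsing]
  have key := ttChain_eq d (ttDims d r) (fun k a b => G k a (i k) b) u hyp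
  rw [ttEval_eq_chain]
  have hcard : ttDims d r ⟨0, Nat.succ_pos d⟩ = 1 :=
    tone ⟨0, Nat.succ_pos d⟩ (show ¬(1 ≤ 0 ∧ 0 ≤ d - 1) by omega)
  have hXa : ∀ a : Fin (ttDims d r ⟨0, Nat.succ_pos d⟩),
      (∑ b, ttChain d (ttDims d r) (fun k a b => G k a (i k) b) a b) = X i := by
    intro a
    have k2 := key a
    rw [hu2 ⟨0, Nat.succ_pos d⟩ (show (0:ℕ) = 0 from rfl) a] at k2
    calc (∑ b, ttChain d (ttDims d r) (fun k a b => G k a (i k) b) a b)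
        = ∑ b, ttChain d (ttDims d r) (fun k a b => G k a (i k) b) a b * u (Fin.last d) b :=
          Finset.sum_congr rfl fun b _ => by
            rw [hu3 (Fin.last d) (show d = d from rfl) b, mul_one]
      _ = X i := k2.symm
  rw [Finset.sum_congr rfl fun a _ => hXa a, Finset.sum_const, Finset.card_univ,
    Fintype.card_fin, hcard, one_smul]
end

section
/- (HOSVD quasioptimality) Let X ∈ ℝ^{n₁×…×n_d} and let r = (r₁,…,r_d). For each k, let P_k ∈ ℝ^{n_k×n_k} be an orthogonal projection matrix (P_k² = P_k = P_kᵀ) of rank at most r_k such that ‖X_(k) − P_k X_(k)‖_F = min{‖X_(k) − Z‖_F : rank(Z) ≤ r_k} (i.e., P_k projects onto a span of r_k dominant left singular vectors of X_(k)). Set Y = X ×₁ P₁ ×₂ … ×_d P_d. Then Y has Tucker rank componentwise at most r, and ‖X − Y‖_F² ≤ Σ_{k=1}^d ‖X_(k) − P_k X_(k)‖_F² ≤ d · min{‖X − W‖_F² : W has Tucker rank ⪯ r}. In particular ‖X − Y‖_F ≤ √d · min{‖X − W‖_F : W has Tucker rank ⪯ r}. -/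
open Matrix

/-- The Frobenius norm of a `d`-dimensional real tensor. -/
noncomputable def tfrob {d : ℕ} {n : Fin d → ℕ} (X : (∀ k, Fin (n k)) → ℝ) : ℝ :=
  Real.sqrt (∑ i : ∀ k, Fin (n k), (X i) ^ 2)

/-- The mode-`k` unfolding of a `d`-dimensional tensor. -/
def unfold {d : ℕ} (n : Fin d → ℕ) (X : (∀ k, Fin (n k)) → ℝ) (k : Fin d) :
    Matrix (Fin (n k)) (∀ j : {j : Fin d // j ≠ k}, Fin (n j.1)) ℝ :=
  Matrix.of fun i rest =>
    X (fun j => if h : j = k then Fin.cast (by rw [h]) i else rest ⟨j, h⟩)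

namespace HOSVDaux

variable {d : ℕ} {n : Fin d → ℕ}

def glue (k : Fin d) (a : Fin (n k)) (rest : ∀ j : {j : Fin d // j ≠ k}, Fin (n j.1)) :
    ∀ j, Fin (n j) :=
  fun j => if h : j = k then Fin.cast (by rw [h]) a else rest ⟨j, h⟩

lemma glue_same (k : Fin d) (a : Fin (n k)) (rest) : glue k a rest k = a := by
  simp [glue]

lemma glue_ne (k : Fin d) (a : Fin (n k)) (rest) (j : Fin d) (h : j ≠ k) :
    glue k a rest j = rest ⟨j, h⟩ := by
  simp [glue, h]

lemma unfold_apply (X : (∀ k, Fin (n k)) → ℝ) (k : Fin d) (a rest) :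
    unfold n X k a rest = X (glue k a rest) := rfl

lemma update_eq_glue (i : ∀ j, Fin (n j)) (k : Fin d) (j : Fin (n k)) :
    Function.update i k j = glue k j (fun l => i l.1) := by
  funext l
  by_cases h : l = k
  · subst h; simp [glue]
  · simp [glue, h, Function.update_of_ne h]

lemma glue_restOf (i : ∀ j, Fin (n j)) (k : Fin d) :
    glue k (i k) (fun l => i l.1) = i := by
  funext l
  by_cases h : l = k
  · subst h; simp [glue]
  · simp [glue, h]

def modeEquiv (k : Fin d) :
    (∀ j, Fin (n j)) ≃ Fin (n k) × (∀ j : {j : Fin d // j ≠ k}, Fin (n j.1)) where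
  toFun i := (i k, fun j => i j.1)
  invFun p := glue k p.1 p.2
  left_inv i := glue_restOf i k
  right_inv p := by
    refine Prod.ext (glue_same _ _ _) ?_
    funext l
    exact glue_ne k p.1 p.2 l.1 l.2

lemma sum_glue (k : Fin d) (f : (∀ j, Fin (n j)) → ℝ) :
    ∑ i, f i = ∑ rest, ∑ a, f (glue k a rest) := by
  rw [← Equiv.sum_comp (modeEquiv k).symm f, Fintype.sum_prod_type, Finset.sum_comm]
  rfl

end HOSVDaux

namespace HOSVDaux

variable {d : ℕ} {n : Fin d → ℕ}

/-- Apply a matrix in mode `k`. -/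
def appM (k : Fin d) (A : Matrix (Fin (n k)) (Fin (n k)) ℝ) (X : (∀ j, Fin (n j)) → ℝ) :
    (∀ j, Fin (n j)) → ℝ :=
  fun i => ∑ j, A (i k) j * X (Function.update i k j)

lemma appM_glue (k : Fin d) (A : Matrix (Fin (n k)) (Fin (n k)) ℝ) (X) (a rest) :
    appM k A X (glue k a rest) = ∑ j, A a j * X (glue k j rest) := by
  unfold appM
  refine Finset.sum_congr rfl fun j _ => ?_
  rw [glue_same, update_eq_glue]
  have h2 : (fun l : {j : Fin d // j ≠ k} => glue k a rest l.1) = rest :=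
    funext fun l => glue_ne _ _ _ _ l.2
  rw [h2]

lemma unfold_appM (k : Fin d) (A : Matrix (Fin (n k)) (Fin (n k)) ℝ) (X) :
    unfold n (appM k A X) k = A * unfold n X k := by
  ext a rest
  rw [unfold_apply, appM_glue, Matrix.mul_apply]
  exact Finset.sum_congr rfl fun j _ => by rw [unfold_apply]

lemma appM_appM (k : Fin d) (A B : Matrix (Fin (n k)) (Fin (n k)) ℝ) (X) :
    appM k A (appM k B X) = appM k (A * B) X := by
  funext i
  unfold appM
  simp only [Function.update_self, Function.update_idem, Matrix.mul_apply,
    Finset.sum_mul, Finset.mul_sum]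
  rw [Finset.sum_comm]
  exact Finset.sum_congr rfl fun j _ => Finset.sum_congr rfl fun j' _ => by ring

lemma appM_comm (k l : Fin d) (h : k ≠ l) (A : Matrix (Fin (n k)) (Fin (n k)) ℝ)
    (B : Matrix (Fin (n l)) (Fin (n l)) ℝ) (X) :
    appM k A (appM l B X) = appM l B (appM k A X) := by
  funext i
  unfold appM
  simp only [Function.update_of_ne h, Function.update_of_ne (Ne.symm h),
    Finset.mul_sum]
  rw [Finset.sum_comm]
  refine Finset.sum_congr rfl fun j _ => Finset.sum_congr rfl fun j' _ => ?_
  rw [Function.update_comm h]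
  ring

lemma appM_sub (k : Fin d) (A : Matrix (Fin (n k)) (Fin (n k)) ℝ) (X Y) :
    appM k A (X - Y) = appM k A X - appM k A Y := by
  funext i
  simp [appM, mul_sub, Finset.sum_sub_distrib]

/-- tensor dot product -/
def tdot (X Y : (∀ j, Fin (n j)) → ℝ) : ℝ := ∑ i, X i * Y i

lemma tdot_comm (X Y : (∀ j, Fin (n j)) → ℝ) : tdot X Y = tdot Y X := by
  unfold tdot; exact Finset.sum_congr rfl fun i _ => mul_comm _ _

lemma tdot_self_nonneg (X : (∀ j, Fin (n j)) → ℝ) : 0 ≤ tdot X X :=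
  Finset.sum_nonneg fun i _ => mul_self_nonneg _

lemma tdot_sub_right (X Y Z : (∀ j, Fin (n j)) → ℝ) :
    tdot X (Y - Z) = tdot X Y - tdot X Z := by
  simp [tdot, mul_sub, Finset.sum_sub_distrib]

lemma tdot_appM (k : Fin d) (A : Matrix (Fin (n k)) (Fin (n k)) ℝ) (X Y) :
    tdot (appM k A X) Y = tdot X (appM k Aᵀ Y) := by
  unfold tdot
  rw [sum_glue k, sum_glue k]
  refine Finset.sum_congr rfl fun rest _ => ?_
  simp only [appM_glue, Finset.sum_mul, Finset.mul_sum, Matrix.transpose_apply]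
  rw [Finset.sum_comm]
  exact Finset.sum_congr rfl fun a _ => Finset.sum_congr rfl fun j _ => by ring

end HOSVDaux

namespace HOSVDaux

variable {d : ℕ} {n : Fin d → ℕ}

def cfac (P : ∀ k : Fin d, Matrix (Fin (n k)) (Fin (n k)) ℝ) (s : Finset (Fin d))
    (i α : ∀ j, Fin (n j)) (k : Fin d) : ℝ :=
  if k ∈ s then P k (i k) (α k) else if α k = i k then 1 else 0

def GG (P : ∀ k : Fin d, Matrix (Fin (n k)) (Fin (n k)) ℝ) (s : Finset (Fin d))
    (X : (∀ j, Fin (n j)) → ℝ) : (∀ j, Fin (n j)) → ℝ :=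
  fun i => ∑ α, X α * ∏ k, cfac P s i α k

lemma GG_empty (P) (X : (∀ j, Fin (n j)) → ℝ) : GG P ∅ X = X := by
  funext i
  unfold GG
  rw [Finset.sum_eq_single_of_mem i (Finset.mem_univ i)]
  · rw [Finset.prod_eq_one fun k _ => by simp [cfac], mul_one]
  · intro α _ hne
    obtain ⟨k, hk⟩ := Function.ne_iff.mp hne
    rw [Finset.prod_eq_zero (Finset.mem_univ k) (by simp [cfac, hk]), mul_zero]

lemma cfac_ne (P) (s : Finset (Fin d)) (i : ∀ j, Fin (n j)) (k l : Fin d) (h : l ≠ k)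
    (a a' : Fin (n k)) (rest) :
    cfac P s i (glue k a rest) l = cfac P s i (glue k a' rest) l := by
  unfold cfac
  rw [glue_ne _ _ _ _ h, glue_ne _ _ _ _ h]

lemma GG_insert (P) (k : Fin d) (s : Finset (Fin d)) (hk : k ∉ s)
    (X : (∀ j, Fin (n j)) → ℝ) :
    GG P (insert k s) X = appM k (P k) (GG P s X) := by
  funext i
  unfold GG appM
  have key : ∀ α : ∀ j, Fin (n j),
      ∑ j, P k (i k) j * (X α * ∏ l, cfac P s (Function.update i k j) α l)
        = X α * ∏ l, cfac P (insert k s) i α l := by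
    intro α
    have hprod : ∀ j : Fin (n k),
        ∏ l, cfac P s (Function.update i k j) α l
          = (if α k = j then (1:ℝ) else 0) * ∏ l ∈ Finset.univ.erase k, cfac P s i α l := by
      intro j
      rw [← Finset.mul_prod_erase _ _ (Finset.mem_univ k)]
      congr 1
      · simp [cfac, hk, Function.update_self]
      · refine Finset.prod_congr rfl fun l hl => ?_
        have hlk : l ≠ k := Finset.ne_of_mem_erase hl
        unfold cfac
        rw [Function.update_of_ne hlk]
    have hprod2 : ∏ l, cfac P (insert k s) i α l
        = P k (i k) (α k) * ∏ l ∈ Finset.univ.erase k, cfac P s i α l := by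
      rw [← Finset.mul_prod_erase _ _ (Finset.mem_univ k)]
      congr 1
      · simp [cfac]
      · refine Finset.prod_congr rfl fun l hl => ?_
        have hlk : l ≠ k := Finset.ne_of_mem_erase hl
        simp [cfac, Finset.mem_insert, hlk]
    simp only [hprod, hprod2]
    rw [Finset.sum_congr rfl (fun j _ => by
      rw [show P k (i k) j * (X α * ((if α k = j then (1:ℝ) else 0) *
          ∏ l ∈ Finset.univ.erase k, cfac P s i α l))
        = (if α k = j then P k (i k) j * (X α * ∏ l ∈ Finset.univ.erase k, cfac P s i α l)
            else 0) from by split <;> simp <;> ring])]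
    rw [Finset.sum_ite_eq]
    simp
    ring
  have hms : ∀ j : Fin (n k),
      P k (i k) j * (∑ α, X α * ∏ l, cfac P s (Function.update i k j) α l)
        = ∑ α, P k (i k) j * (X α * ∏ l, cfac P s (Function.update i k j) α l) :=
    fun j => Finset.mul_sum _ _ _
  simp only [hms]
  rw [Finset.sum_comm]
  exact Finset.sum_congr rfl fun α _ => (key α).symm

end HOSVDaux

namespace HOSVDaux

variable {d : ℕ} {n : Fin d → ℕ}

lemma GG_insert' (P) (k : Fin d) (s : Finset (Fin d)) (hk : k ∉ s)
    (X : (∀ j, Fin (n j)) → ℝ) :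
    GG P (insert k s) X = GG P s (appM k (P k) X) := by
  funext i
  unfold GG
  rw [sum_glue k, sum_glue k]
  refine Finset.sum_congr rfl fun rest _ => ?_
  -- RHS: collapse the b-sum using the delta at mode k
  have hsplit : ∀ (b : Fin (n k)) (t : Finset (Fin d)),
      ∏ l, cfac P t i (glue k b rest) l
        = cfac P t i (glue k b rest) k * ∏ l ∈ Finset.univ.erase k, cfac P t i (glue k b rest) l :=
    fun b t => (Finset.mul_prod_erase _ _ (Finset.mem_univ k)).symm
  have herase : ∀ (b b' : Fin (n k)) (t : Finset (Fin d)),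
      ∏ l ∈ Finset.univ.erase k, cfac P t i (glue k b rest) l
        = ∏ l ∈ Finset.univ.erase k, cfac P t i (glue k b' rest) l :=
    fun b b' t => Finset.prod_congr rfl fun l hl =>
      cfac_ne P t i k l (Finset.ne_of_mem_erase hl) b b' rest
  have herase2 : ∀ b : Fin (n k),
      ∏ l ∈ Finset.univ.erase k, cfac P (insert k s) i (glue k b rest) l
        = ∏ l ∈ Finset.univ.erase k, cfac P s i (glue k b rest) l :=
    fun b => Finset.prod_congr rfl fun l hl => by
      have hlk : l ≠ k := Finset.ne_of_mem_erase hl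
      simp [cfac, Finset.mem_insert, hlk]
  calc ∑ b, X (glue k b rest) * ∏ l, cfac P (insert k s) i (glue k b rest) l
      = ∑ b, P k (i k) b * X (glue k b rest)
          * ∏ l ∈ Finset.univ.erase k, cfac P s i (glue k (i k) rest) l := by
        refine Finset.sum_congr rfl fun b _ => ?_
        rw [hsplit b, herase2 b, herase b (i k)]
        have : cfac P (insert k s) i (glue k b rest) k = P k (i k) b := by
          simp [cfac, glue_same]
        rw [this]; ring
    _ = (∑ j, P k (i k) j * X (glue k j rest)) *
          ∏ l ∈ Finset.univ.erase k, cfac P s i (glue k (i k) rest) l := by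
        rw [Finset.sum_mul]
    _ = ∑ b, appM k (P k) X (glue k b rest) * ∏ l, cfac P s i (glue k b rest) l := by
        symm
        have hterm : ∀ b : Fin (n k),
            appM k (P k) X (glue k b rest) * ∏ l, cfac P s i (glue k b rest) l
              = if b = i k then (∑ j, P k (i k) j * X (glue k j rest)) *
                  ∏ l ∈ Finset.univ.erase k, cfac P s i (glue k (i k) rest) l else 0 := by
          intro b
          rw [hsplit b, herase b (i k), appM_glue]
          have hc : cfac P s i (glue k b rest) k = if b = i k then 1 else 0 := by
            simp [cfac, hk, glue_same]
          rw [hc]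
          by_cases hb : b = i k
          · subst hb; simp
          · simp [hb]
        simp only [hterm]
        rw [Finset.sum_ite_eq' Finset.univ (i k)]
        simp

end HOSVDaux

namespace HOSVDaux

variable {d : ℕ} {n : Fin d → ℕ}

lemma GG_sub (P) (s : Finset (Fin d)) (X Y : (∀ j, Fin (n j)) → ℝ) :
    GG P s (X - Y) = GG P s X - GG P s Y := by
  funext i
  simp [GG, sub_mul, Finset.sum_sub_distrib]

/-- An orthogonal-projection mode product is a contraction for `tdot`. -/
lemma appM_contract (k : Fin d) (A : Matrix (Fin (n k)) (Fin (n k)) ℝ)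
    (hA : A * A = A) (hAs : Aᵀ = A) (X : (∀ j, Fin (n j)) → ℝ) :
    tdot (appM k A X) (appM k A X) ≤ tdot X X := by
  set Z := appM k A X with hZ
  have h1 : tdot Z Z = tdot X Z := by
    rw [hZ, tdot_appM, hAs, appM_appM, hA]
  have h2 : tdot Z (X - Z) = 0 := by
    rw [tdot_sub_right, tdot_comm Z X, h1, sub_self]
  have h3 : tdot X X = tdot Z Z + tdot (X - Z) (X - Z) := by
    have hx : X = Z + (X - Z) := by ring
    calc tdot X X = tdot (Z + (X - Z)) (Z + (X - Z)) := by rw [← hx]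
      _ = tdot Z Z + tdot Z (X - Z) + (tdot Z (X - Z) + tdot (X - Z) (X - Z)) := by
          unfold tdot
          rw [← Finset.sum_add_distrib, ← Finset.sum_add_distrib, ← Finset.sum_add_distrib]
          refine Finset.sum_congr rfl fun i _ => ?_
          simp only [Pi.add_apply, Pi.sub_apply]
          ring
      _ = tdot Z Z + tdot (X - Z) (X - Z) := by rw [h2]; ring
  rw [h3]
  exact le_add_of_nonneg_right (tdot_self_nonneg _)

lemma GG_contract (P : ∀ k : Fin d, Matrix (Fin (n k)) (Fin (n k)) ℝ)
    (hidem : ∀ k, P k * P k = P k) (hsymm : ∀ k, (P k)ᵀ = P k) (s : Finset (Fin d)) :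
    ∀ X : (∀ j, Fin (n j)) → ℝ, tdot (GG P s X) (GG P s X) ≤ tdot X X := by
  induction s using Finset.induction_on with
  | empty => intro X; rw [GG_empty]
  | @insert k s hk ih =>
      intro X
      rw [GG_insert' P k s hk]
      exact le_trans (ih _) (appM_contract k (P k) (hidem k) (hsymm k) X)

lemma tdot_sum_sum {ι : Type*} (s : Finset ι) (T : ι → ((∀ j, Fin (n j)) → ℝ))
    (h : ∀ m ∈ s, ∀ l ∈ s, m ≠ l → tdot (T m) (T l) = 0) :
    tdot (∑ m ∈ s, T m) (∑ m ∈ s, T m) = ∑ m ∈ s, tdot (T m) (T m) := by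
  have expand : tdot (∑ m ∈ s, T m) (∑ m ∈ s, T m)
      = ∑ m ∈ s, ∑ l ∈ s, tdot (T m) (T l) := by
    unfold tdot
    simp only [Finset.sum_apply, Finset.sum_mul_sum]
    rw [Finset.sum_comm]
    refine Finset.sum_congr rfl fun m _ => ?_
    rw [Finset.sum_comm]
  rw [expand]
  refine Finset.sum_congr rfl fun m hm => ?_
  exact Finset.sum_eq_single_of_mem m hm fun l hl hne => h m hm l hl (Ne.symm hne)

end HOSVDaux

namespace HOSVDaux

variable {d : ℕ} {n : Fin d → ℕ}

lemma mfrob_nonneg {m n : Type*} [Fintype m] [Fintype n] (X : Matrix m n ℝ) :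
    0 ≤ mfrob X := Real.sqrt_nonneg _

lemma tfrob_nonneg (X : (∀ k, Fin (n k)) → ℝ) : 0 ≤ tfrob X := Real.sqrt_nonneg _

lemma tfrob_sq (X : (∀ k, Fin (n k)) → ℝ) : tfrob X ^ 2 = tdot X X := by
  unfold tfrob tdot
  rw [Real.sq_sqrt (Finset.sum_nonneg fun i _ => sq_nonneg _)]
  exact Finset.sum_congr rfl fun i _ => by ring

lemma mfrob_unfold (X : (∀ k, Fin (n k)) → ℝ) (k : Fin d) :
    mfrob (unfold n X k) = tfrob X := by
  unfold mfrob tfrob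
  congr 1
  rw [sum_glue k (f := fun i => X i ^ 2), Finset.sum_comm]
  exact Finset.sum_congr rfl fun a _ => Finset.sum_congr rfl fun rest _ => by
    rw [unfold_apply]

lemma mfrob_sq_eq_tdot (X : (∀ k, Fin (n k)) → ℝ) (k : Fin d) :
    mfrob (unfold n X k) ^ 2 = tdot X X := by
  rw [mfrob_unfold, tfrob_sq]

lemma unfold_sub (X Y : (∀ k, Fin (n k)) → ℝ) (k : Fin d) :
    unfold n (X - Y) k = unfold n X k - unfold n Y k := rfl

lemma unfold_zero (k : Fin d) : unfold n (0 : (∀ k, Fin (n k)) → ℝ) k = 0 := rfl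

end HOSVDaux

open HOSVDaux in
/-- **Quasioptimality of HOSVD.**  Let `P k` be orthogonal projection matrices
(`P² = P = Pᵀ`) of rank at most `r k`, each projecting onto a span of `r k` dominant left
singular vectors of `X_(k)` (i.e. `P_k X_(k)` is a best rank-`r k` approximation of `X_(k)`),
and let `Y = X ×₁ P₁ ×₂ … ×_d P_d`.  Then `Y` has Tucker rank componentwise at most `r`,
`‖X - Y‖_F² ≤ Σ_k ‖X_(k) - P_k X_(k)‖_F² ≤ d ⋅ min{‖X - W‖_F² : Tucker rank of W ⪯ r}`,
and in particular `‖X - Y‖_F ≤ √d ⋅ min{‖X - W‖_F : Tucker rank of W ⪯ r}`. -/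
theorem hosvd_quasioptimal (d : ℕ) (n r : Fin d → ℕ)
    (X : (∀ k, Fin (n k)) → ℝ)
    (P : ∀ k, Matrix (Fin (n k)) (Fin (n k)) ℝ)
    (hidem : ∀ k, P k * P k = P k)
    (hsymm : ∀ k, (P k)ᵀ = P k)
    (hPrank : ∀ k, (P k).rank ≤ r k)
    (hbest : ∀ k, ∀ Z : Matrix (Fin (n k)) (∀ j : {j : Fin d // j ≠ k}, Fin (n j.1)) ℝ,
      Z.rank ≤ r k →
        mfrob (unfold n X k - P k * unfold n X k) ≤ mfrob (unfold n X k - Z))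
    (Y : (∀ k, Fin (n k)) → ℝ)
    (hY : ∀ i : ∀ k, Fin (n k),
      Y i = ∑ α : ∀ k, Fin (n k), X α * ∏ k, P k (i k) (α k)) :
    (∀ k, (unfold n Y k).rank ≤ r k) ∧
    tfrob (X - Y) ^ 2 ≤ ∑ k, mfrob (unfold n X k - P k * unfold n X k) ^ 2 ∧
    (∑ k, mfrob (unfold n X k - P k * unfold n X k) ^ 2) ≤
      (d : ℝ) * sInf {t : ℝ | ∃ W : (∀ k, Fin (n k)) → ℝ,
        (∀ k, (unfold n W k).rank ≤ r k) ∧ t = tfrob (X - W) ^ 2} ∧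
    tfrob (X - Y) ≤ Real.sqrt d * sInf {t : ℝ | ∃ W : (∀ k, Fin (n k)) → ℝ,
        (∀ k, (unfold n W k).rank ≤ r k) ∧ t = tfrob (X - W)} := by
  classical
  -- `Y` as a full multilinear projection of `X`
  have hYG : Y = GG P Finset.univ X := by
    funext i
    rw [hY]
    exact Finset.sum_congr rfl fun α _ => by
      congr 1
      exact (Finset.prod_congr rfl fun k _ => by simp [cfac]).symm
  -- Part 1 : ranks
  have hrank : ∀ k, (unfold n Y k).rank ≤ r k := by
    intro k
    have hk : k ∉ Finset.univ.erase k := Finset.notMem_erase k _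
    have hYk : Y = appM k (P k) (GG P (Finset.univ.erase k) X) := by
      rw [hYG, ← GG_insert P k _ hk, Finset.insert_erase (Finset.mem_univ k)]
    rw [hYk, unfold_appM]
    exact le_trans (Matrix.rank_mul_le_left _ _) (hPrank k)
  -- notation
  set D : ∀ _ : Fin d, (∀ k, Fin (n k)) → ℝ := fun k => X - appM k (P k) X with hD
  have hDfrob : ∀ k, mfrob (unfold n X k - P k * unfold n X k) ^ 2 = tdot (D k) (D k) := by
    intro k
    rw [← unfold_appM k (P k) X, ← unfold_sub, mfrob_sq_eq_tdot]
  -- telescoping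
  set f : ℕ → ((∀ k, Fin (n k)) → ℝ) :=
    fun m => GG P (Finset.univ.filter fun j : Fin d => (j : ℕ) < m) X with hf
  set T : ℕ → ((∀ k, Fin (n k)) → ℝ) := fun m => f m - f (m + 1) with hT
  have hf0 : f 0 = X := by
    simp only [hf]
    have h0 : (Finset.univ.filter fun j : Fin d => (j : ℕ) < 0) = ∅ := by simp
    rw [h0, GG_empty]
  have hfd : f d = Y := by
    simp only [hf]
    rw [hYG]
    have huniv : (Finset.univ.filter fun j : Fin d => (j : ℕ) < d) = Finset.univ :=
      Finset.filter_true_of_mem fun (j : Fin d) _ => j.isLt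
    rw [huniv]
  have htel : X - Y = ∑ m ∈ Finset.range d, T m := by
    simp only [hT]
    rw [Finset.sum_range_sub' f d, hf0, hfd]
  have hsets : ∀ (m : ℕ) (hm : m < d),
      (Finset.univ.filter fun j : Fin d => (j : ℕ) < m + 1)
        = insert ⟨m, hm⟩ (Finset.univ.filter fun j : Fin d => (j : ℕ) < m) := by
    intro m hm
    ext j
    simp only [Finset.mem_filter, Finset.mem_univ, true_and, Finset.mem_insert, Fin.ext_iff]
    omega
  have hknot : ∀ (m : ℕ) (hm : m < d),
      (⟨m, hm⟩ : Fin d) ∉ (Finset.univ.filter fun j : Fin d => (j : ℕ) < m) := by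
    intro m hm
    simp
  have hfm1 : ∀ (m : ℕ) (hm : m < d),
      f (m + 1) = GG P (Finset.univ.filter fun j : Fin d => (j : ℕ) < m)
        (appM ⟨m, hm⟩ (P ⟨m, hm⟩) X) := by
    intro m hm
    simp only [hf]
    rw [hsets m hm, GG_insert' P _ _ (hknot m hm)]
  have hTm : ∀ (m : ℕ) (hm : m < d),
      T m = GG P (Finset.univ.filter fun j : Fin d => (j : ℕ) < m) (D ⟨m, hm⟩) := by
    intro m hm
    simp only [hT, hD]
    rw [GG_sub, hfm1 m hm]
  have hTbound : ∀ (m : ℕ) (hm : m < d),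
      tdot (T m) (T m) ≤ tdot (D ⟨m, hm⟩) (D ⟨m, hm⟩) := by
    intro m hm
    rw [hTm m hm]
    exact GG_contract P hidem hsymm _ _
  have hPT : ∀ (m : ℕ) (hm : m < d), appM ⟨m, hm⟩ (P ⟨m, hm⟩) (T m) = 0 := by
    intro m hm
    have hfm1' : f (m + 1) = appM ⟨m, hm⟩ (P ⟨m, hm⟩) (f m) := by
      simp only [hf]
      rw [hsets m hm, GG_insert P _ _ (hknot m hm)]
    simp only [hT]
    rw [hfm1', appM_sub, appM_appM, hidem, sub_self]
  have horth' : ∀ (m l : ℕ), m < l → l < d → tdot (T m) (T l) = 0 := by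
    intro m l hml hld
    have hmd : m < d := lt_trans hml hld
    set k : Fin d := ⟨m, hmd⟩ with hkdef
    have hmem : ∀ (p : ℕ), m < p → k ∈ (Finset.univ.filter fun j : Fin d => (j : ℕ) < p) := by
      intro p hp
      simp [hkdef, hp]
    have hfact : ∀ (p : ℕ), m < p → p ≤ d → ∃ S, f p = appM k (P k) S := by
      intro p hp _
      refine ⟨GG P ((Finset.univ.filter fun j : Fin d => (j : ℕ) < p).erase k) X, ?_⟩
      simp only [hf]
      rw [← GG_insert P k _ (Finset.notMem_erase k _),
        Finset.insert_erase (hmem p hp)]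
    obtain ⟨S1, hS1⟩ := hfact l hml hld.le
    obtain ⟨S2, hS2⟩ := hfact (l + 1) (lt_trans hml (Nat.lt_succ_self l)) hld
    have hTl : T l = appM k (P k) (S1 - S2) := by
      simp only [hT]
      rw [hS1, hS2, appM_sub]
    rw [hTl, tdot_comm, tdot_appM, hsymm, hPT m hmd]
    simp [tdot]
  have horth : ∀ m ∈ Finset.range d, ∀ l ∈ Finset.range d, m ≠ l → tdot (T m) (T l) = 0 := by
    intro m hm l hl hne
    rw [Finset.mem_range] at hm hl
    rcases lt_or_gt_of_ne hne with h | h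
    · exact horth' m l h hl
    · rw [tdot_comm]
      exact horth' l m h hm
  have hpyth : tfrob (X - Y) ^ 2 = ∑ m ∈ Finset.range d, tdot (T m) (T m) := by
    rw [tfrob_sq, htel, tdot_sum_sum _ _ horth]
  -- bridging Fin-sums and range-sums
  set F : ℕ → ℝ := fun m =>
    if h : m < d then mfrob (unfold n X ⟨m, h⟩ - P ⟨m, h⟩ * unfold n X ⟨m, h⟩) ^ 2 else 0
    with hF
  have hbridge : ∑ k, mfrob (unfold n X k - P k * unfold n X k) ^ 2
      = ∑ m ∈ Finset.range d, F m := by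
    rw [← Fin.sum_univ_eq_sum_range F d]
    refine Finset.sum_congr rfl fun k _ => ?_
    simp only [hF, Fin.is_lt, dif_pos, Fin.eta]
  -- Part 2
  have part2 : tfrob (X - Y) ^ 2 ≤ ∑ k, mfrob (unfold n X k - P k * unfold n X k) ^ 2 := by
    rw [hpyth, hbridge]
    refine Finset.sum_le_sum fun m hm => ?_
    rw [Finset.mem_range] at hm
    simp only [hF, hm, dif_pos]
    rw [hDfrob]
    exact hTbound m hm
  -- pointwise bound against any Tucker-rank-≤-r tensor
  have hWbound : ∀ W : (∀ k, Fin (n k)) → ℝ, (∀ k, (unfold n W k).rank ≤ r k) →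
      ∀ k, mfrob (unfold n X k - P k * unfold n X k) ≤ tfrob (X - W) := by
    intro W hW k
    have h := hbest k (unfold n W k) (hW k)
    rwa [← unfold_sub, mfrob_unfold] at h
  have hsum_le : ∀ W : (∀ k, Fin (n k)) → ℝ, (∀ k, (unfold n W k).rank ≤ r k) →
      (∑ k, mfrob (unfold n X k - P k * unfold n X k) ^ 2) ≤ (d : ℝ) * tfrob (X - W) ^ 2 := by
    intro W hW
    calc ∑ k, mfrob (unfold n X k - P k * unfold n X k) ^ 2
        ≤ ∑ _k : Fin d, tfrob (X - W) ^ 2 :=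
          Finset.sum_le_sum fun k _ =>
            pow_le_pow_left₀ (mfrob_nonneg _) (hWbound W hW k) 2
      _ = (d : ℝ) * tfrob (X - W) ^ 2 := by
          rw [Finset.sum_const, Finset.card_univ, Fintype.card_fin, nsmul_eq_mul]
  have hzero_mem : ∀ k, (unfold n (0 : (∀ k, Fin (n k)) → ℝ) k).rank ≤ r k := by
    intro k
    rw [unfold_zero, Matrix.rank_zero]
    exact Nat.zero_le _
  -- Part 3
  have part3 : (∑ k, mfrob (unfold n X k - P k * unfold n X k) ^ 2) ≤
      (d : ℝ) * sInf {t : ℝ | ∃ W : (∀ k, Fin (n k)) → ℝ,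
        (∀ k, (unfold n W k).rank ≤ r k) ∧ t = tfrob (X - W) ^ 2} := by
    rcases Nat.eq_zero_or_pos d with hd | hd
    · subst hd
      simp
    · have hdpos : (0 : ℝ) < d := by exact_mod_cast hd
      have hne : {t : ℝ | ∃ W : (∀ k, Fin (n k)) → ℝ,
          (∀ k, (unfold n W k).rank ≤ r k) ∧ t = tfrob (X - W) ^ 2}.Nonempty :=
        ⟨tfrob (X - 0) ^ 2, 0, hzero_mem, rfl⟩
      have hlow : (∑ k, mfrob (unfold n X k - P k * unfold n X k) ^ 2) / d ≤
          sInf {t : ℝ | ∃ W : (∀ k, Fin (n k)) → ℝ,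
            (∀ k, (unfold n W k).rank ≤ r k) ∧ t = tfrob (X - W) ^ 2} := by
        refine le_csInf hne ?_
        rintro t ⟨W, hW, rfl⟩
        rw [div_le_iff₀ hdpos]
        rw [mul_comm]
        exact hsum_le W hW
      rw [div_le_iff₀ hdpos] at hlow
      rw [mul_comm] at hlow
      exact hlow
  -- Part 4
  have part4 : tfrob (X - Y) ≤ Real.sqrt d * sInf {t : ℝ | ∃ W : (∀ k, Fin (n k)) → ℝ,
      (∀ k, (unfold n W k).rank ≤ r k) ∧ t = tfrob (X - W)} := by
    rcases Nat.eq_zero_or_pos d with hd | hd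
    · subst hd
      have hXY : X - Y = 0 := by rw [htel]; simp
      rw [hXY]
      have : tfrob (0 : (∀ k, Fin (n k)) → ℝ) = 0 := by simp [tfrob]
      rw [this]
      simp
    · have hdpos : (0 : ℝ) < d := by exact_mod_cast hd
      have hsq : (0 : ℝ) < Real.sqrt d := Real.sqrt_pos.mpr hdpos
      have hne : {t : ℝ | ∃ W : (∀ k, Fin (n k)) → ℝ,
          (∀ k, (unfold n W k).rank ≤ r k) ∧ t = tfrob (X - W)}.Nonempty :=
        ⟨tfrob (X - 0), 0, hzero_mem, rfl⟩
      have hub : ∀ t ∈ {t : ℝ | ∃ W : (∀ k, Fin (n k)) → ℝ,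
          (∀ k, (unfold n W k).rank ≤ r k) ∧ t = tfrob (X - W)},
          tfrob (X - Y) ≤ Real.sqrt d * t := by
        rintro t ⟨W, hW, rfl⟩
        have h1 : tfrob (X - Y) ^ 2 ≤ (d : ℝ) * tfrob (X - W) ^ 2 :=
          le_trans part2 (hsum_le W hW)
        have h2 : tfrob (X - Y) ≤ Real.sqrt ((d : ℝ) * tfrob (X - W) ^ 2) := by
          have := Real.sqrt_le_sqrt h1
          rwa [Real.sqrt_sq (tfrob_nonneg _)] at this
        rwa [Real.sqrt_mul hdpos.le, Real.sqrt_sq (tfrob_nonneg _)] at h2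
      have hlow : tfrob (X - Y) / Real.sqrt d ≤
          sInf {t : ℝ | ∃ W : (∀ k, Fin (n k)) → ℝ,
            (∀ k, (unfold n W k).rank ≤ r k) ∧ t = tfrob (X - W)} := by
        refine le_csInf hne ?_
        intro t ht
        rw [div_le_iff₀ hsq, mul_comm]
        exact hub t ht
      rw [div_le_iff₀ hsq, mul_comm] at hlow
      exact hlow
  exact ⟨hrank, part2, part3, part4⟩
end

section
/- (TTSVD quasioptimality) Let X ∈ ℝ^{n₁×…×n_d} (d ≥ 2) and let r = (r₁,…,r_{d−1}). For each 1 ≤ k ≤ d−1, set ε_k = min{‖X_{<k>} − Z‖_F : rank(Z) ≤ r_k}. Then there exists a tensor Y ∈ ℝ^{n₁×…×n_d} with rank(Y_{<k>}) ≤ r_k for all k such that ‖X − Y‖_F² ≤ Σ_{k=1}^{d−1} ε_k². Consequently, ‖X − Y‖_F ≤ √(d−1) · min{‖X − W‖_F : W has TT rank componentwise at most r}. -/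
namespace TTaux
open Finset Matrix

/-! ### Matrix Frobenius norm basics -/

section MatrixLemmas
variable {N C : Type*} [Fintype N] [Fintype C]

noncomputable def msq (X : Matrix N C ℝ) : ℝ := ∑ i, ∑ j, (X i j) ^ 2

lemma msq_nonneg (X : Matrix N C ℝ) : 0 ≤ msq X :=
  Finset.sum_nonneg fun _ _ => Finset.sum_nonneg fun _ _ => sq_nonneg _
lemma mfrob_eq (X : Matrix N C ℝ) : mfrob X = Real.sqrt (msq X) := rfl
lemma mfrob_nonneg (X : Matrix N C ℝ) : 0 ≤ mfrob X := Real.sqrt_nonneg _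
lemma mfrob_sq (X : Matrix N C ℝ) : mfrob X ^ 2 = msq X := Real.sq_sqrt (msq_nonneg X)

lemma cross_eq_trace (P R : Matrix N C ℝ) :
    ∑ i, ∑ j, P i j * R i j = Matrix.trace (Pᵀ * R) := by
  rw [Matrix.trace, Finset.sum_comm]
  refine Finset.sum_congr rfl fun j _ => ?_
  simp [Matrix.diag, Matrix.mul_apply, Matrix.transpose_apply]

lemma msq_add_of_orth {P R : Matrix N C ℝ} (h : Pᵀ * R = 0) :
    msq (P + R) = msq P + msq R := by
  have hc : ∑ i, ∑ j, P i j * R i j = 0 := by rw [cross_eq_trace, h, Matrix.trace_zero]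
  unfold msq
  have expand : ∀ i j, (P i j + R i j)^2 = P i j ^2 + R i j ^2 + 2 * (P i j * R i j) := by
    intro i j; ring
  simp only [Matrix.add_apply, expand, Finset.sum_add_distrib, ← Finset.mul_sum]
  rw [hc]
  ring

lemma msq_proj_err_le {Q : Matrix N N ℝ} (hs : Qᵀ = Q) (hi : Q * Q = Q)
    (W V : Matrix N C ℝ) (hV : Q * V = V) :
    msq (W - Q * W) ≤ msq (W - V) := by
  have hsplit : W - V = (W - Q * W) + (Q * W - V) := by abel
  have horth : (W - Q * W)ᵀ * (Q * W - V) = 0 := by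
    rw [Matrix.transpose_sub, Matrix.transpose_mul, hs]
    rw [Matrix.sub_mul, Matrix.mul_sub, Matrix.mul_sub]
    have e1 : Wᵀ * Q * (Q * W) = Wᵀ * Q * W := by
      rw [Matrix.mul_assoc Wᵀ Q (Q * W), ← Matrix.mul_assoc Q Q W, hi, Matrix.mul_assoc]
    have e2 : Wᵀ * Q * V = Wᵀ * V := by rw [Matrix.mul_assoc, hV]
    have e0 : Wᵀ * (Q * W) = Wᵀ * Q * W := (Matrix.mul_assoc _ _ _).symm
    rw [e1, e2, e0]
    abel
  calc msq (W - Q * W) ≤ msq (W - Q * W) + msq (Q * W - V) := by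
        have := msq_nonneg (Q * W - V); linarith
    _ = msq (W - V) := by rw [← msq_add_of_orth horth, ← hsplit]

lemma msq_proj_le {Q : Matrix N N ℝ} (hs : Qᵀ = Q) (hi : Q * Q = Q) (U : Matrix N C ℝ) :
    msq (Q * U) ≤ msq U := by
  have hsplit : U = (U - Q * U) + (Q * U) := by abel
  have horth : (U - Q * U)ᵀ * (Q * U) = 0 := by
    rw [Matrix.transpose_sub, Matrix.transpose_mul, hs]
    rw [Matrix.sub_mul]
    have e1 : Uᵀ * Q * (Q * U) = Uᵀ * Q * U := by
      rw [Matrix.mul_assoc Uᵀ Q (Q * U), ← Matrix.mul_assoc Q Q U, hi, Matrix.mul_assoc]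
    have e0 : Uᵀ * (Q * U) = Uᵀ * Q * U := (Matrix.mul_assoc _ _ _).symm
    rw [e1, e0]
    abel
  have hpy := msq_add_of_orth horth
  rw [← hsplit] at hpy
  have h0 := msq_nonneg (U - Q * U)
  linarith

noncomputable def toE (X : Matrix N C ℝ) : EuclideanSpace ℝ (N × C) :=
  (WithLp.equiv 2 (N × C → ℝ)).symm (fun p => X p.1 p.2)

lemma mfrob_eq_norm (X : Matrix N C ℝ) : mfrob X = ‖toE X‖ := by
  have h := EuclideanSpace.norm_eq (toE X)
  refine Eq.trans ?_ h.symm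
  rw [mfrob_eq, msq]
  congr 1
  rw [Fintype.sum_prod_type]
  exact Finset.sum_congr rfl fun p _ => Finset.sum_congr rfl fun q _ => by
    rw [Real.norm_eq_abs, sq_abs]; rfl

lemma mfrob_sub_le (A B : Matrix N C ℝ) : mfrob (A - B) ≤ mfrob A + mfrob B := by
  rw [mfrob_eq_norm, mfrob_eq_norm, mfrob_eq_norm]
  have e : toE (A - B) = toE A - toE B := rfl
  rw [e]
  exact norm_sub_le _ _

lemma abs_le_of_sq_le_sq' {a b : ℝ} (hb : 0 ≤ b) (h : a ^ 2 ≤ b ^ 2) : |a| ≤ b := by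
  have := Real.sqrt_le_sqrt h
  rwa [Real.sqrt_sq_eq_abs, Real.sqrt_sq hb] at this

lemma sum_dite_lt {M : Type*} [AddCommMonoid M] {r s : ℕ} (hsr : s ≤ r)
    (G : ∀ i, i < s → M) :
    (∑ i : Fin r, if h : i.val < s then G i.val h else 0) = ∑ i : Fin s, G i.val i.isLt := by
  set f : ℕ → M := fun m => if h : m < s then G m h else 0 with hf
  calc (∑ i : Fin r, if h : i.val < s then G i.val h else 0)
      = ∑ m ∈ Finset.range r, f m := Fin.sum_univ_eq_sum_range f r
    _ = ∑ m ∈ Finset.range s, f m :=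
        (Finset.sum_subset (Finset.range_subset_range.2 hsr)
          (fun m _ hm => dif_neg (by simpa using hm))).symm
    _ = ∑ i : Fin s, f i.val := (Fin.sum_univ_eq_sum_range f s).symm
    _ = ∑ i : Fin s, G i.val i.isLt := Finset.sum_congr rfl fun i _ => dif_pos i.isLt

end MatrixLemmas

/-! ### Orthonormal basis of the column space -/

lemma onb_col {N C : Type*} [Fintype N] [Fintype C] [DecidableEq N] [DecidableEq C]
    (M : Matrix N C ℝ) :
    ∃ b : Fin M.rank → (N → ℝ),
      (∀ i, b i ∈ LinearMap.range M.mulVecLin) ∧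
      (∀ i j, (∑ x, b i x * b j x) = if i = j then (1:ℝ) else 0) ∧
      (∀ c x, M x c = ∑ i, (∑ y, b i y * M y c) * b i x) := by
  classical
  let e : (N → ℝ) ≃ₗ[ℝ] EuclideanSpace ℝ N := (WithLp.linearEquiv 2 ℝ (N → ℝ)).symm
  let S : Submodule ℝ (EuclideanSpace ℝ N) := (LinearMap.range M.mulVecLin).map (e : (N → ℝ) →ₗ[ℝ] EuclideanSpace ℝ N)
  have hfin : Module.finrank ℝ S = M.rank := LinearEquiv.finrank_map_eq _ _
  let b0 : OrthonormalBasis (Fin (Module.finrank ℝ S)) ℝ S := stdOrthonormalBasis ℝ S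
  let b : Fin M.rank → (N → ℝ) := fun i =>
    ((b0 (Fin.cast hfin.symm i) : S) : EuclideanSpace ℝ N).ofLp
  have hinner : ∀ (u v : S), (inner (𝕜 := ℝ) u v : ℝ) =
      ∑ x, (u : EuclideanSpace ℝ N) x * (v : EuclideanSpace ℝ N) x := by
    intro u v
    rw [Submodule.coe_inner, PiLp.inner_apply]
    simp [RCLike.inner_apply, mul_comm]
  refine ⟨b, fun i => ?_, ?_, ?_⟩
  · obtain ⟨y, hy, hy'⟩ := Submodule.mem_map.1 (b0 (Fin.cast hfin.symm i)).2
    have hby : b i = y := by simp [b, ← hy', e]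
    rw [hby]
    exact hy
  · intro i j
    have hON := b0.orthonormal
    rw [orthonormal_iff_ite] at hON
    have h := hON (Fin.cast hfin.symm i) (Fin.cast hfin.symm j)
    rw [hinner] at h
    have hij : (Fin.cast hfin.symm i = Fin.cast hfin.symm j) ↔ i = j := by
      simp [Fin.ext_iff]
    exact h.trans (if_congr hij rfl rfl)
  · intro c x
    have hc : WithLp.toLp 2 (fun y => M y c) ∈ S := by
      refine Submodule.mem_map.2 ⟨fun y => M y c, ⟨Pi.single c 1, ?_⟩, rfl⟩
      ext y
      simp [Matrix.mulVec, dotProduct, Pi.single_apply]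
    have hrepr := b0.sum_repr' (⟨_, hc⟩ : S)
    have h1 : (∑ s : Fin (Module.finrank ℝ S),
        (inner (𝕜 := ℝ) (b0 s) (⟨_, hc⟩ : S) : ℝ) • ((b0 s : S) : EuclideanSpace ℝ N).ofLp) =
          fun y => M y c := by
      have h0 := congrArg (fun v : S => WithLp.ofLp (v : EuclideanSpace ℝ N)) hrepr
      rw [AddSubmonoidClass.coe_finset_sum] at h0
      simpa using h0
    have h3 := congrFun h1 x
    rw [Finset.sum_apply] at h3
    rw [← h3]
    refine Fintype.sum_equiv (finCongr hfin) (_ : Fin _ → ℝ) _ fun s => ?_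
    simp only [Pi.smul_apply, smul_eq_mul]
    rw [hinner]
    rfl

/-! ### Attainment of the best rank-`r` approximation error -/

lemma att {N C : Type*} [Fintype N] [Fintype C] [DecidableEq N] [DecidableEq C]
    (Xm : Matrix N C ℝ) (r : ℕ) :
    ∃ Z : Matrix N C ℝ, Z.rank ≤ r ∧
      mfrob (Xm - Z) = sInf {t : ℝ | ∃ Z' : Matrix N C ℝ, Z'.rank ≤ r ∧ t = mfrob (Xm - Z')} := by
  classical
  set SS := {t : ℝ | ∃ Z' : Matrix N C ℝ, Z'.rank ≤ r ∧ t = mfrob (Xm - Z')} with hSS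
  have hmem0 : mfrob (Xm - 0) ∈ SS := ⟨0, by simp [Matrix.rank_zero], rfl⟩
  have hne : SS.Nonempty := ⟨_, hmem0⟩
  have hbdd : BddBelow SS := ⟨0, by rintro t ⟨Z', _, rfl⟩; exact mfrob_nonneg _⟩
  set ρ := 2 * mfrob Xm + 1 with hρ
  have hρ0 : (0:ℝ) ≤ ρ := by have := mfrob_nonneg Xm; positivity
  set K : Set ((N → Fin r → ℝ) × (Fin r → C → ℝ)) :=
    (Set.univ.pi fun _ : N => Set.univ.pi fun _ : Fin r => Set.Icc (-1:ℝ) 1) ×ˢ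
    (Set.univ.pi fun _ : Fin r => Set.univ.pi fun _ : C => Set.Icc (-ρ) ρ) with hK
  have hKc : IsCompact K := IsCompact.prod
    (isCompact_univ_pi fun _ => isCompact_univ_pi fun _ => isCompact_Icc)
    (isCompact_univ_pi fun _ => isCompact_univ_pi fun _ => isCompact_Icc)
  have h0K : ((fun _ _ => 0, fun _ _ => 0) :
      (N → Fin r → ℝ) × (Fin r → C → ℝ)) ∈ K := by
    refine Set.mem_prod.2 ⟨?_, ?_⟩ <;>
      exact Set.mem_univ_pi.2 fun _ => Set.mem_univ_pi.2 fun _ => by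
        constructor <;> simp [hρ0]
  set F : ((N → Fin r → ℝ) × (Fin r → C → ℝ)) → ℝ :=
    fun p => mfrob (Xm - Matrix.of p.1 * Matrix.of p.2) with hF
  have hFc : Continuous F := by
    have h1 : Continuous fun p : ((N → Fin r → ℝ) × (Fin r → C → ℝ)) =>
        ∑ i, ∑ j, (Xm i j - ∑ l, p.1 i l * p.2 l j)^2 := by fun_prop
    have : F = fun p => Real.sqrt (∑ i, ∑ j, (Xm i j - ∑ l, p.1 i l * p.2 l j)^2) := by
      funext p
      rw [hF]
      simp only [mfrob, Matrix.sub_apply, Matrix.mul_apply, Matrix.of_apply]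
    rw [this]
    exact Real.continuous_sqrt.comp h1
  obtain ⟨p₀, hp₀K, hmin'⟩ := hKc.exists_isMinOn ⟨_, h0K⟩ hFc.continuousOn
  have hmin : ∀ q ∈ K, F p₀ ≤ F q := fun q hq => isMinOn_iff.mp hmin' q hq
  set Zs := Matrix.of p₀.1 * Matrix.of p₀.2 with hZs
  have hrank : Zs.rank ≤ r :=
    le_trans (Matrix.rank_mul_le_left _ _)
      (le_trans (Matrix.rank_le_card_width _) (by simp))
  refine ⟨Zs, hrank, le_antisymm ?_ (csInf_le hbdd ⟨Zs, hrank, rfl⟩)⟩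
  refine le_csInf hne ?_
  rintro t ⟨Z, hZr, rfl⟩
  have hminXm : F p₀ ≤ mfrob Xm := by
    have h := hmin _ h0K
    have e : (Matrix.of (fun _ _ => (0:ℝ)) : Matrix N (Fin r) ℝ) *
        (Matrix.of (fun _ _ => (0:ℝ)) : Matrix (Fin r) C ℝ) = 0 := by
      ext i j; simp [Matrix.mul_apply]
    rw [hF] at h
    simp only [e, sub_zero] at h
    exact h
  rcases le_total (mfrob Xm) (mfrob (Xm - Z)) with hcase | hcase
  · exact le_trans hminXm hcase
  · have hZb : mfrob Z ≤ 2 * mfrob Xm := by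
      have h1 : Z = Xm - (Xm - Z) := by abel
      calc mfrob Z = mfrob (Xm - (Xm - Z)) := by rw [← h1]
        _ ≤ mfrob Xm + mfrob (Xm - Z) := mfrob_sub_le _ _
        _ ≤ 2 * mfrob Xm := by linarith
    obtain ⟨b, hbmem, hbON, hbrep⟩ := onb_col Z
    have hsr : Z.rank ≤ r := hZr
    set A : N → Fin r → ℝ := fun x i => if h : i.val < Z.rank then b ⟨i.val, h⟩ x else 0 with hA
    set B : Fin r → C → ℝ :=
      fun i c => if h : i.val < Z.rank then ∑ y, b ⟨i.val, h⟩ y * Z y c else 0 with hB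
    have hprod : Matrix.of A * Matrix.of B = Z := by
      ext x c
      rw [Matrix.mul_apply]
      have hterm : ∀ i : Fin r, Matrix.of A x i * Matrix.of B i c =
          if h : i.val < Z.rank then (∑ y, b ⟨i.val,h⟩ y * Z y c) * b ⟨i.val,h⟩ x else 0 := by
        intro i
        by_cases h : i.val < Z.rank <;> simp [hA, hB, h, mul_comm]
      simp_rw [hterm]
      rw [sum_dite_lt hsr (fun m h => (∑ y, b ⟨m,h⟩ y * Z y c) * b ⟨m,h⟩ x)]
      simpa using (hbrep c x).symm
    have hbabs : ∀ (j : Fin Z.rank) x, |b j x| ≤ 1 := by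
      intro j x
      have hONjj : (∑ y, b j y * b j y) = 1 := by simpa using hbON j j
      have h1 : b j x ^ 2 ≤ 1 := by
        calc b j x ^ 2 = b j x * b j x := pow_two _
          _ ≤ ∑ y, b j y * b j y :=
            Finset.single_le_sum (f := fun y => b j y * b j y)
              (fun y _ => mul_self_nonneg _) (Finset.mem_univ x)
          _ = 1 := hONjj
      have h2 : b j x ^ 2 ≤ (1:ℝ) ^ 2 := by simpa using h1
      exact abs_le_of_sq_le_sq' zero_le_one h2
    have hBabs : ∀ (i : Fin r) c, |B i c| ≤ ρ := by
      intro i c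
      show |if h : i.val < Z.rank then ∑ y, b ⟨i.val, h⟩ y * Z y c else 0| ≤ ρ
      by_cases h : i.val < Z.rank
      · rw [dif_pos h]
        set j : Fin Z.rank := ⟨i.val, h⟩
        have hONjj : (∑ y, b j y * b j y) = 1 := by simpa using hbON j j
        have hcs := Finset.sum_mul_sq_le_sq_mul_sq Finset.univ (fun y => b j y)
          (fun y => Z y c)
        have hcol : (∑ y, (Z y c) ^ 2) ≤ msq Z := by
          unfold msq
          refine Finset.sum_le_sum fun y _ => ?_
          exact Finset.single_le_sum (f := fun c' => (Z y c')^2)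
            (fun c' _ => sq_nonneg _) (Finset.mem_univ c)
        have hb2 : (∑ y, b j y ^ 2) = 1 := by
          rw [← hONjj]; exact Finset.sum_congr rfl fun y _ => pow_two _
        have h1 : (∑ y, b j y * Z y c) ^ 2 ≤ msq Z := by
          calc (∑ y, b j y * Z y c) ^ 2 ≤ (∑ y, b j y ^ 2) * (∑ y, (Z y c) ^ 2) := hcs
            _ = ∑ y, (Z y c) ^ 2 := by rw [hb2, one_mul]
            _ ≤ msq Z := hcol
        have h2 : (∑ y, b j y * Z y c) ^ 2 ≤ ρ ^ 2 := by
          have hm := mfrob_sq Z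
          have hmz := mfrob_nonneg Z
          nlinarith [h1]
        exact abs_le_of_sq_le_sq' hρ0 h2
      · rw [dif_neg h]; simpa using hρ0
    have hABK : (A, B) ∈ K := by
      refine Set.mem_prod.2 ⟨Set.mem_univ_pi.2 fun x => Set.mem_univ_pi.2 fun i => ?_,
        Set.mem_univ_pi.2 fun i => Set.mem_univ_pi.2 fun c => ?_⟩
      · rw [Set.mem_Icc, ← abs_le]
        show |if h : i.val < Z.rank then b ⟨i.val, h⟩ x else 0| ≤ 1
        by_cases h : i.val < Z.rank
        · rw [dif_pos h]; exact hbabs _ _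
        · rw [dif_neg h]; simp
      · rw [Set.mem_Icc, ← abs_le]
        exact hBabs i c
    have hfin := hmin _ hABK
    rw [hF] at hfin
    show F p₀ ≤ mfrob (Xm - Z)
    calc F p₀ ≤ mfrob (Xm - Matrix.of A * Matrix.of B) := hfin
      _ = mfrob (Xm - Z) := by rw [hprod]

/-! ### The key one-step lemma -/

lemma key {N C : Type*} [Fintype N] [Fintype C] [DecidableEq N] [DecidableEq C]
    (Xm : Matrix N C ℝ) (r : ℕ) (Q' : Matrix N N ℝ) (hs : Q'ᵀ = Q') (hi : Q' * Q' = Q') :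
    ∃ Q : Matrix N N ℝ, Qᵀ = Q ∧ Q * Q = Q ∧ Q.rank ≤ r ∧ Q * Q' = Q ∧ Q' * Q = Q ∧
      mfrob (Q' * Xm - Q * (Q' * Xm)) ≤
        sInf {t : ℝ | ∃ Z : Matrix N C ℝ, Z.rank ≤ r ∧ t = mfrob (Xm - Z)} := by
  classical
  obtain ⟨Z, hZr, hZmin⟩ := att Xm r
  set M := Q' * Z with hM
  obtain ⟨b, hbmem, hbON, hbrep⟩ := onb_col M
  set A : Matrix N (Fin M.rank) ℝ := Matrix.of (fun x i => b i x) with hA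
  set Q : Matrix N N ℝ := A * Aᵀ with hQ
  have hAtA : Aᵀ * A = 1 := by
    ext i j
    rw [Matrix.mul_apply, Matrix.one_apply]
    simpa [hA] using hbON i j
  have hsym : Qᵀ = Q := by rw [hQ, Matrix.transpose_mul, Matrix.transpose_transpose]
  have hidem : Q * Q = Q := by
    rw [hQ, Matrix.mul_assoc, ← Matrix.mul_assoc Aᵀ A Aᵀ, hAtA, Matrix.one_mul]
  have hrank : Q.rank ≤ r := by
    refine le_trans (Matrix.rank_mul_le_left _ _) (le_trans (Matrix.rank_le_card_width A) ?_)
    rw [Fintype.card_fin]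
    exact le_trans (Matrix.rank_mul_le_right _ _) hZr
  have hQM : Q * M = M := by
    ext x c
    rw [Matrix.mul_apply]
    have h1 : ∀ y, Q x y * M y c = ∑ i, b i x * (b i y * M y c) := by
      intro y
      rw [hQ, Matrix.mul_apply, Finset.sum_mul]
      refine Finset.sum_congr rfl fun i _ => ?_
      simp only [hA, Matrix.of_apply, Matrix.transpose_apply]
      ring
    simp_rw [h1]
    rw [Finset.sum_comm]
    have h2 : ∀ i, (∑ y, b i x * (b i y * M y c)) = (∑ y, b i y * M y c) * b i x := by
      intro i; rw [← Finset.mul_sum]; ring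
    simp_rw [h2]
    exact (hbrep c x).symm
  have hcolfix : ∀ i, Q'.mulVec (b i) = b i := by
    intro i
    obtain ⟨w, hw⟩ := hbmem i
    have hbi : b i = M.mulVec w := by rw [← hw]; rfl
    rw [hbi, Matrix.mulVec_mulVec, hM, ← Matrix.mul_assoc, hi]
  have hQ'A : Q' * A = A := by
    ext x i
    have := congrFun (hcolfix i) x
    rw [Matrix.mul_apply]
    simpa [hA, Matrix.mulVec, dotProduct] using this
  have hQ'Q : Q' * Q = Q := by rw [hQ, ← Matrix.mul_assoc, hQ'A]
  have hQQ' : Q * Q' = Q := by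
    have h := congrArg Matrix.transpose hQ'Q
    rwa [Matrix.transpose_mul, hsym, hs] at h
  refine ⟨Q, hsym, hidem, hrank, hQQ', hQ'Q, ?_⟩
  have herr2 : msq (Q' * Xm - Q * (Q' * Xm)) ≤ msq (Xm - Z) := by
    have h1 := msq_proj_err_le hsym hidem (Q' * Xm) M hQM
    have h2 : Q' * Xm - M = Q' * (Xm - Z) := by rw [hM, Matrix.mul_sub]
    rw [h2] at h1
    exact le_trans h1 (msq_proj_le hs hi _)
  rw [← hZmin, mfrob_eq, mfrob_eq]
  exact Real.sqrt_le_sqrt herr2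

/-! ### Matricization machinery -/

variable {d : ℕ} (n : Fin d → ℕ)

abbrev Idx := ∀ k, Fin (n k)
abbrev Rt (k : ℕ) := ∀ j : {j : Fin d // j.val ≤ k}, Fin (n j.1)
abbrev Ct (k : ℕ) := ∀ j : {j : Fin d // k < j.val}, Fin (n j.1)

def resR (k : ℕ) (i : Idx n) : Rt n k := fun j => i j.1
def resC (k : ℕ) (i : Idx n) : Ct n k := fun j => i j.1
def glue (k : ℕ) (ρ : Rt n k) (γ : Ct n k) : Idx n :=
  fun j => if h : j.val ≤ k then ρ ⟨j, h⟩ else γ ⟨j, Nat.lt_of_not_le h⟩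

lemma resR_glue (k : ℕ) (ρ : Rt n k) (γ : Ct n k) : resR n k (glue n k ρ γ) = ρ :=
  funext fun j => by simp [resR, glue, j.2]

lemma resC_glue (k : ℕ) (ρ : Rt n k) (γ : Ct n k) : resC n k (glue n k ρ γ) = γ :=
  funext fun j => by simp [resC, glue, Nat.not_le.2 j.2]

lemma glue_res (k : ℕ) (i : Idx n) : glue n k (resR n k i) (resC n k i) = i :=
  funext fun j => by by_cases h : j.val ≤ k <;> simp [glue, resR, resC, h]

def esplit (k : ℕ) : Idx n ≃ Rt n k × Ct n k where
  toFun i := (resR n k i, resC n k i)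
  invFun p := glue n k p.1 p.2
  left_inv i := glue_res n k i
  right_inv p := by
    obtain ⟨ρ, γ⟩ := p
    exact Prod.ext (resR_glue n k ρ γ) (resC_glue n k ρ γ)

lemma matricize_apply (X : Idx n → ℝ) (k : ℕ) (ρ : Rt n k) (γ : Ct n k) :
    matricize n X k ρ γ = X (glue n k ρ γ) := rfl

noncomputable def Lift (k : ℕ) (Q : Matrix (Rt n k) (Rt n k) ℝ) : Matrix (Idx n) (Idx n) ℝ :=
  Matrix.of fun i i' =>
    Q (resR n k i) (resR n k i') * (if resC n k i = resC n k i' then 1 else 0)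

lemma mul_indic {P Q' : Prop} [Decidable P] [Decidable Q'] :
    (if P then (1:ℝ) else 0) * (if Q' then (1:ℝ) else 0) = if P ∧ Q' then 1 else 0 := by
  by_cases hP : P <;> by_cases hQ : Q' <;> simp [hP, hQ]

lemma Lift_transpose (k : ℕ) (Q : Matrix (Rt n k) (Rt n k) ℝ) :
    (Lift n k Q)ᵀ = Lift n k Qᵀ := by
  ext i i'
  show Q (resR n k i') (resR n k i) * (if resC n k i' = resC n k i then 1 else 0)
    = Q (resR n k i') (resR n k i) * (if resC n k i = resC n k i' then 1 else 0)
  congr 1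
  exact if_congr eq_comm rfl rfl

lemma Lift_mul (k : ℕ) (A B : Matrix (Rt n k) (Rt n k) ℝ) :
    Lift n k A * Lift n k B = Lift n k (A * B) := by
  classical
  ext i i'
  rw [Matrix.mul_apply]
  rw [← Equiv.sum_comp (esplit n k).symm
    (fun i'' => Lift n k A i i'' * Lift n k B i'' i')]
  rw [Fintype.sum_prod_type]
  have step : ∀ (ρ'' : Rt n k) (γ'' : Ct n k),
      Lift n k A i ((esplit n k).symm (ρ'', γ'')) * Lift n k B ((esplit n k).symm (ρ'', γ'')) i'
      = (A (resR n k i) ρ'' * B ρ'' (resR n k i')) *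
        ((if resC n k i = γ'' then (1:ℝ) else 0) * (if γ'' = resC n k i' then 1 else 0)) := by
    intro ρ'' γ''
    show (A (resR n k i) (resR n k (glue n k ρ'' γ'')) *
        (if resC n k i = resC n k (glue n k ρ'' γ'') then (1:ℝ) else 0)) *
        (B (resR n k (glue n k ρ'' γ'')) (resR n k i') *
        (if resC n k (glue n k ρ'' γ'') = resC n k i' then (1:ℝ) else 0)) = _
    rw [resR_glue, resC_glue]
    ring
  simp_rw [step]
  have inner : ∀ ρ'' : Rt n k,
      (∑ γ'' : Ct n k, (A (resR n k i) ρ'' * B ρ'' (resR n k i')) *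
        ((if resC n k i = γ'' then (1:ℝ) else 0) * (if γ'' = resC n k i' then 1 else 0)))
      = (A (resR n k i) ρ'' * B ρ'' (resR n k i')) *
        (if resC n k i = resC n k i' then 1 else 0) := by
    intro ρ''
    rw [← Finset.mul_sum]
    congr 1
    simp [ite_mul, Finset.sum_ite_eq, Finset.mem_univ]
  simp_rw [inner]
  rw [← Finset.sum_mul]
  show _ = (A * B) (resR n k i) (resR n k i') * _
  rw [Matrix.mul_apply]

lemma Lift_one (k : ℕ) : Lift n k (1 : Matrix (Rt n k) (Rt n k) ℝ) = 1 := by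
  classical
  ext i i'
  show (1 : Matrix (Rt n k) (Rt n k) ℝ) (resR n k i) (resR n k i') *
      (if resC n k i = resC n k i' then (1:ℝ) else 0) = (1 : Matrix (Idx n) (Idx n) ℝ) i i'
  rw [Matrix.one_apply, Matrix.one_apply, mul_indic]
  refine if_congr ?_ rfl rfl
  constructor
  · rintro ⟨h1, h2⟩
    have := congrArg (fun p : Rt n k × Ct n k => glue n k p.1 p.2) (Prod.ext h1 h2 :
      (resR n k i, resC n k i) = (resR n k i', resC n k i'))
    simpa [glue_res] using this
  · rintro rfl; exact ⟨rfl, rfl⟩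

lemma Lift_mulVec (k : ℕ) (Q : Matrix (Rt n k) (Rt n k) ℝ) (v : Idx n → ℝ) :
    matricize n ((Lift n k Q).mulVec v) k = Q * matricize n v k := by
  classical
  ext ρ γ
  rw [Matrix.mul_apply, matricize_apply, Matrix.mulVec]
  show ∑ i', Lift n k Q (glue n k ρ γ) i' * v i' = _
  rw [← Equiv.sum_comp (esplit n k).symm (fun i' => Lift n k Q (glue n k ρ γ) i' * v i')]
  rw [Fintype.sum_prod_type]
  have step : ∀ (ρ' : Rt n k) (γ' : Ct n k),
      Lift n k Q (glue n k ρ γ) ((esplit n k).symm (ρ', γ')) * v ((esplit n k).symm (ρ', γ'))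
      = Q ρ ρ' * ((if γ = γ' then (1:ℝ) else 0) * v (glue n k ρ' γ')) := by
    intro ρ' γ'
    show (Q (resR n k (glue n k ρ γ)) (resR n k (glue n k ρ' γ')) *
        (if resC n k (glue n k ρ γ) = resC n k (glue n k ρ' γ') then (1:ℝ) else 0)) *
        v (glue n k ρ' γ') = _
    rw [resR_glue, resC_glue, resR_glue, resC_glue]
    ring
  simp_rw [step]
  refine Finset.sum_congr rfl fun ρ' _ => ?_
  rw [← Finset.mul_sum]
  congr 1
  rw [matricize_apply]
  simp [ite_mul, Finset.sum_ite_eq, Finset.mem_univ]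

def jt (k : ℕ) (hk : k + 1 < d) : {j : Fin d // j.val ≤ k + 1} := ⟨⟨k+1, hk⟩, le_refl _⟩

def dn (k : ℕ) (ρ : Rt n (k+1)) : Rt n k := fun j => ρ ⟨j.1, le_trans j.2 (Nat.le_succ k)⟩

noncomputable def extQ (k : ℕ) (hk : k + 1 < d) (Q : Matrix (Rt n k) (Rt n k) ℝ) :
    Matrix (Rt n (k+1)) (Rt n (k+1)) ℝ :=
  Matrix.of fun ρ ρ' =>
    Q (dn n k ρ) (dn n k ρ') * (if ρ (jt k hk) = ρ' (jt k hk) then 1 else 0)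

lemma extQ_transpose (k : ℕ) (hk : k + 1 < d) (Q : Matrix (Rt n k) (Rt n k) ℝ) :
    (extQ n k hk Q)ᵀ = extQ n k hk Qᵀ := by
  ext ρ ρ'
  show Q (dn n k ρ') (dn n k ρ) * (if ρ' (jt k hk) = ρ (jt k hk) then (1:ℝ) else 0)
    = Q (dn n k ρ') (dn n k ρ) * (if ρ (jt k hk) = ρ' (jt k hk) then (1:ℝ) else 0)
  congr 1
  exact if_congr eq_comm rfl rfl

lemma Lift_ext (k : ℕ) (hk : k + 1 < d) (Q : Matrix (Rt n k) (Rt n k) ℝ) :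
    Lift n k Q = Lift n (k+1) (extQ n k hk Q) := by
  classical
  ext i i'
  show Q (resR n k i) (resR n k i') * (if resC n k i = resC n k i' then (1:ℝ) else 0)
    = (Q (dn n k (resR n (k+1) i)) (dn n k (resR n (k+1) i')) *
        (if resR n (k+1) i (jt k hk) = resR n (k+1) i' (jt k hk) then (1:ℝ) else 0)) *
      (if resC n (k+1) i = resC n (k+1) i' then (1:ℝ) else 0)
  have hdn : dn n k (resR n (k+1) i) = resR n k i := rfl
  have hdn' : dn n k (resR n (k+1) i') = resR n k i' := rfl
  rw [hdn, hdn', mul_assoc, mul_indic]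
  congr 1
  refine if_congr ?_ rfl rfl
  constructor
  · intro h
    constructor
    · exact congrFun h ⟨⟨k+1, hk⟩, Nat.lt_succ_self k⟩
    · funext j
      exact congrFun h ⟨j.1, lt_trans (Nat.lt_succ_self k) j.2⟩
  · rintro ⟨h1, h2⟩
    funext j
    by_cases hj : k + 1 < j.1.val
    · exact congrFun h2 ⟨j.1, hj⟩
    · have hjeq : j.1 = ⟨k+1, hk⟩ := Fin.ext (Nat.le_antisymm (Nat.not_lt.mp hj) j.2)
      show i j.1 = i' j.1
      rw [hjeq]
      exact h1

lemma Lift_inj (hpos : ∀ j, 0 < n j) (k : ℕ) {Q Q' : Matrix (Rt n k) (Rt n k) ℝ}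
    (h : Lift n k Q = Lift n k Q') : Q = Q' := by
  classical
  have γ₀ : Ct n k := fun j => ⟨0, hpos j.1⟩
  ext ρ ρ'
  have he := congrArg (fun M : Matrix (Idx n) (Idx n) ℝ =>
    M (glue n k ρ γ₀) (glue n k ρ' γ₀)) h
  simp only [Lift, Matrix.of_apply, resR_glue, resC_glue, if_pos rfl, mul_one] at he
  simpa using he


-- bridges
noncomputable def tsq (v : Idx n → ℝ) : ℝ := ∑ i, (v i) ^ 2
lemma tsq_nonneg (v : Idx n → ℝ) : 0 ≤ tsq n v := Finset.sum_nonneg fun _ _ => sq_nonneg _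
lemma tfrob_eq (v : Idx n → ℝ) : tfrob v = Real.sqrt (tsq n v) := rfl
lemma tfrob_nonneg (v : Idx n → ℝ) : 0 ≤ tfrob v := Real.sqrt_nonneg _
lemma tfrob_sq (v : Idx n → ℝ) : tfrob v ^ 2 = tsq n v := Real.sq_sqrt (tsq_nonneg n v)

lemma msq_matricize (v : Idx n → ℝ) (k : ℕ) : msq (matricize n v k) = tsq n v := by
  unfold msq tsq
  calc ∑ ρ, ∑ γ, (matricize n v k ρ γ) ^ 2
      = ∑ p : Rt n k × Ct n k, (matricize n v k p.1 p.2) ^ 2 :=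
        (Fintype.sum_prod_type (f := fun p : Rt n k × Ct n k =>
          (matricize n v k p.1 p.2) ^ 2)).symm
    _ = ∑ i : Idx n, (matricize n v k (resR n k i) (resC n k i)) ^ 2 :=
        (Equiv.sum_comp (esplit n k) (fun p : Rt n k × Ct n k =>
          (matricize n v k p.1 p.2) ^ 2)).symm
    _ = ∑ i : Idx n, (v i) ^ 2 := by
        refine Finset.sum_congr rfl fun i _ => ?_
        rw [matricize_apply, glue_res]

lemma mfrob_matricize (v : Idx n → ℝ) (k : ℕ) : mfrob (matricize n v k) = tfrob v := by
  show Real.sqrt (msq (matricize n v k)) = Real.sqrt (tsq n v)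
  rw [msq_matricize]

lemma matricize_sub (v w : Idx n → ℝ) (k : ℕ) :
    matricize n (v - w) k = matricize n v k - matricize n w k := rfl

-- orthogonality helpers
lemma dot_mulVec_eq_zero {A B : Matrix (Idx n) (Idx n) ℝ} (h : Aᵀ * B = 0) (x : Idx n → ℝ) :
    ∑ i, (A.mulVec x i) * (B.mulVec x i) = 0 := by
  have hib : ∀ p q, (∑ i, A i p * B i q) = 0 := by
    intro p q
    have := congrFun (congrFun h p) q
    simpa [Matrix.mul_apply, Matrix.transpose_apply] using this
  calc ∑ i, (A.mulVec x i) * (B.mulVec x i)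
      = ∑ i, ∑ p, ∑ q, (x p * x q) * (A i p * B i q) := by
        refine Finset.sum_congr rfl fun i _ => ?_
        rw [Matrix.mulVec, Matrix.mulVec, dotProduct, dotProduct,
          Finset.sum_mul_sum]
        exact Finset.sum_congr rfl fun p _ => Finset.sum_congr rfl fun q _ => by ring
    _ = ∑ p, ∑ q, (x p * x q) * (∑ i, A i p * B i q) := by
        rw [Finset.sum_comm]
        refine Finset.sum_congr rfl fun p _ => ?_
        rw [Finset.sum_comm]
        exact Finset.sum_congr rfl fun q _ => by rw [← Finset.mul_sum]
    _ = 0 := by simp [hib]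

lemma tsq_sum_orth (m : ℕ) (u : ℕ → Idx n → ℝ)
    (h : ∀ j k, j < m → k < m → j ≠ k → ∑ i, u j i * u k i = 0) :
    tsq n (∑ k ∈ Finset.range m, u k) = ∑ k ∈ Finset.range m, tsq n (u k) := by
  unfold tsq
  have expand : ∀ i : Idx n, ((∑ k ∈ Finset.range m, u k) i) ^ 2
      = ∑ j ∈ Finset.range m, ∑ k ∈ Finset.range m, u j i * u k i := by
    intro i
    rw [Finset.sum_apply, pow_two, Finset.sum_mul_sum]
  simp_rw [expand]
  rw [Finset.sum_comm]
  refine Finset.sum_congr rfl fun j hj => ?_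
  rw [Finset.sum_comm]
  have : ∀ k ∈ Finset.range m, (∑ i, u j i * u k i)
      = if k = j then ∑ i, (u j i)^2 else 0 := by
    intro k hk
    by_cases hkj : k = j
    · subst hkj
      simp [pow_two]
    · rw [if_neg hkj]
      exact h j k (Finset.mem_range.1 hj) (Finset.mem_range.1 hk) (Ne.symm hkj)
  rw [Finset.sum_congr rfl this, Finset.sum_ite_eq' (Finset.range m) j]
  simp [Finset.mem_range.1 hj]


/-! ### The master induction -/

noncomputable def eps (r : Fin (d-1) → ℕ) (X : Idx n → ℝ) (k : ℕ) (hk : k < d - 1) : ℝ :=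
  sInf {t : ℝ | ∃ Z : Matrix (Rt n k) (Ct n k) ℝ,
    Z.rank ≤ r ⟨k, hk⟩ ∧ t = mfrob (matricize n X k - Z)}

lemma master (hpos : ∀ j, 0 < n j) (r : Fin (d-1) → ℕ) (X : Idx n → ℝ) :
    ∀ m, ∀ (hm' : m ≤ d - 1), ∃ g : ℕ → Matrix (Idx n) (Idx n) ℝ,
      g 0 = 1 ∧
      (∀ j, j ≤ m → (g j)ᵀ = g j) ∧
      (∀ a b, a ≤ b → b ≤ m → g b * g a = g b) ∧
      (∀ k, (hk : k < m) → ∃ Q : Matrix (Rt n k) (Rt n k) ℝ,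
          Qᵀ = Q ∧ Q * Q = Q ∧ Q.rank ≤ r ⟨k, lt_of_lt_of_le hk hm'⟩ ∧ g (k+1) = Lift n k Q) ∧
      (∀ k, (hk : k < m) →
          tfrob ((g k).mulVec X - (g (k+1)).mulVec X) ≤ eps n r X k (lt_of_lt_of_le hk hm')) := by
  intro m
  induction m with
  | zero =>
    intro hm
    exact ⟨fun _ => 1, rfl, fun j _ => Matrix.transpose_one, fun a b _ _ => Matrix.one_mul 1,
      fun k hk => absurd hk (Nat.not_lt_zero k), fun k hk => absurd hk (Nat.not_lt_zero k)⟩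
  | succ m ih =>
    intro hm1
    have hm : m ≤ d - 1 := le_trans (Nat.le_succ m) hm1
    have hmd : m < d - 1 := hm1
    have hm1d : m + 1 < d := by omega
    obtain ⟨g, hg0, hgt, hgc, hgq, hge⟩ := ih hm
    have hrep : ∃ Q' : Matrix (Rt n m) (Rt n m) ℝ,
        Q'ᵀ = Q' ∧ Q' * Q' = Q' ∧ g m = Lift n m Q' := by
      cases m with
      | zero =>
        exact ⟨1, Matrix.transpose_one, Matrix.one_mul 1, by rw [hg0, Lift_one]⟩
      | succ k =>
        obtain ⟨Qk, hQks, hQki, hQkr, hQkL⟩ := hgq k (Nat.lt_succ_self k)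
        have hkd : k + 1 < d := by omega
        refine ⟨extQ n k hkd Qk, ?_, ?_, ?_⟩
        · rw [extQ_transpose, hQks]
        · apply Lift_inj n hpos (k+1)
          rw [← Lift_mul, ← Lift_ext n k hkd, Lift_mul, hQki]
        · rw [hQkL, Lift_ext n k hkd]
    obtain ⟨Q', hQ's, hQ'i, hgm⟩ := hrep
    obtain ⟨Q, hQs, hQi, hQr, hQQ', hQ'Q, hQerr⟩ :=
      key (matricize n X m) (r ⟨m, hmd⟩) Q' hQ's hQ'i
    set gn : ℕ → Matrix (Idx n) (Idx n) ℝ :=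
      fun j => if j = m + 1 then Lift n m Q else g j with hgn
    have hgnm1 : gn (m+1) = Lift n m Q := if_pos rfl
    have hgnsmall : ∀ j, j ≤ m → gn j = g j := fun j hj => if_neg (by omega)
    have hnewchain : ∀ a, a ≤ m → Lift n m Q * g a = Lift n m Q := by
      intro a ha
      have h1 : Lift n m Q * g m = Lift n m Q := by
        rw [hgm, Lift_mul, hQQ']
      calc Lift n m Q * g a = (Lift n m Q * g m) * g a := by rw [h1]
        _ = Lift n m Q * (g m * g a) := Matrix.mul_assoc _ _ _
        _ = Lift n m Q * g m := by rw [hgc a m ha le_rfl]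
        _ = Lift n m Q := h1
    refine ⟨gn, by rw [hgnsmall 0 (Nat.zero_le m)]; exact hg0, ?_, ?_, ?_, ?_⟩
    · intro j hj
      rcases Nat.lt_or_ge j (m+1) with h | h
      · rw [hgnsmall j (by omega)]; exact hgt j (by omega)
      · have hje : j = m+1 := by omega
        rw [hje, hgnm1, Lift_transpose, hQs]
    · intro a b hab hb
      rcases Nat.lt_or_ge b (m+1) with h | h
      · rw [hgnsmall a (by omega), hgnsmall b (by omega)]; exact hgc a b hab (by omega)
      · have hbe : b = m+1 := by omega
        subst hbe
        rw [hgnm1]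
        rcases Nat.lt_or_ge a (m+1) with ha | ha
        · rw [hgnsmall a (by omega)]
          exact hnewchain a (by omega)
        · have hae : a = m+1 := by omega
          subst hae
          rw [hgnm1, Lift_mul, hQi]
    · intro k hk
      rcases Nat.lt_or_ge k m with h | h
      · obtain ⟨Qk, h1, h2, h3, h4⟩ := hgq k h
        exact ⟨Qk, h1, h2, h3, by rw [hgnsmall (k+1) (by omega)]; exact h4⟩
      · have hke : k = m := by omega
        subst hke
        exact ⟨Q, hQs, hQi, hQr, hgnm1⟩
    · intro k hk
      rcases Nat.lt_or_ge k m with h | h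
      · rw [hgnsmall k (by omega), hgnsmall (k+1) (by omega)]
        exact hge k h
      · have hke : k = m := by omega
        subst hke
        rw [hgnsmall k le_rfl, hgnm1]
        have hb : mfrob (matricize n ((g k).mulVec X - (Lift n k Q).mulVec X) k)
            = tfrob ((g k).mulVec X - (Lift n k Q).mulVec X) := mfrob_matricize n _ k
        rw [← hb, matricize_sub, hgm, Lift_mulVec, Lift_mulVec]
        have hQx : Q * matricize n X k = Q * (Q' * matricize n X k) := by
          rw [← Matrix.mul_assoc, hQQ']
        rw [hQx]
        exact hQerr

end TTaux

open TTaux Matrix in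
/-- **Quasioptimality of TTSVD.**  Let `X ∈ ℝ^{n₁ × … × n_d}` (`d ≥ 2`) and, for each
`1 ≤ k ≤ d-1`, let `ε_k = min{‖X_{<k>} - Z‖_F : rank Z ≤ r k}`.  Then there exists a tensor
`Y` of TT rank componentwise at most `r` such that `‖X - Y‖_F² ≤ Σ_k ε_k²`, and consequently
`‖X - Y‖_F ≤ √(d-1) ⋅ min{‖X - W‖_F : TT rank of W ⪯ r}`. -/
theorem ttsvd_quasioptimal (d : ℕ) (hd : 2 ≤ d) (n : Fin d → ℕ)
    (r : Fin (d - 1) → ℕ) (X : (∀ k, Fin (n k)) → ℝ) :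
    ∃ Y : (∀ k, Fin (n k)) → ℝ,
      (∀ k : Fin (d - 1), (matricize n Y k.val).rank ≤ r k) ∧
      tfrob (X - Y) ^ 2 ≤ ∑ k : Fin (d - 1),
        (sInf {t : ℝ | ∃ Z : Matrix (∀ j : {j : Fin d // j.val ≤ k.val}, Fin (n j.1))
            (∀ j : {j : Fin d // k.val < j.val}, Fin (n j.1)) ℝ,
          Z.rank ≤ r k ∧ t = mfrob (matricize n X k.val - Z)}) ^ 2 ∧
      tfrob (X - Y) ≤ Real.sqrt ((d : ℝ) - 1) *
        sInf {t : ℝ | ∃ W : (∀ k, Fin (n k)) → ℝ,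
          (∀ k : Fin (d - 1), (matricize n W k.val).rank ≤ r k) ∧ t = tfrob (X - W)} := by
  classical
  by_cases hpos : ∀ j, 0 < n j
  case neg =>
    -- degenerate case: some `n j = 0`, all matricizations have an empty index type
    push_neg at hpos
    obtain ⟨j0, hj0⟩ := hpos
    have hj0' : n j0 = 0 := Nat.le_zero.mp hj0
    have hranks : ∀ (W : (∀ k, Fin (n k)) → ℝ) (k : Fin (d - 1)),
        (matricize n W k.val).rank ≤ r k := by
      intro W k
      rcases le_or_gt j0.val k.val with hle | hlt
      · have hempty : IsEmpty (∀ j : {j : Fin d // j.val ≤ k.val}, Fin (n j.1)) := by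
          refine ⟨fun f => ?_⟩
          have := f ⟨j0, hle⟩
          rw [hj0'] at this
          exact this.elim0
        refine le_trans (Matrix.rank_le_card_height _) ?_
        simp [Fintype.card_eq_zero]
      · have hempty : IsEmpty (∀ j : {j : Fin d // k.val < j.val}, Fin (n j.1)) := by
          refine ⟨fun f => ?_⟩
          have := f ⟨j0, hlt⟩
          rw [hj0'] at this
          exact this.elim0
        refine le_trans (Matrix.rank_le_card_width _) ?_
        simp [Fintype.card_eq_zero]
    refine ⟨X, hranks X, ?_, ?_⟩
    · have h0 : tfrob (X - X) = 0 := by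
        rw [sub_self]
        simp [tfrob]
      rw [h0]
      have h00 : (0:ℝ)^2 = 0 := by norm_num
      rw [h00]
      positivity
    · have h0 : tfrob (X - X) = 0 := by
        rw [sub_self]
        simp [tfrob]
      rw [h0]
      refine mul_nonneg (Real.sqrt_nonneg _) (Real.sInf_nonneg ?_)
      rintro t ⟨W, _, rfl⟩
      exact tfrob_nonneg n _
  case pos =>
  obtain ⟨g, hg0, hgt, hgc, hgq, hge⟩ := master n hpos r X (d-1) le_rfl
  have hgc' : ∀ a b, a ≤ b → b ≤ d-1 → g a * g b = g b := by
    intro a b hab hb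
    have h1 := hgc a b hab hb
    have h2 := congrArg Matrix.transpose h1
    rwa [Matrix.transpose_mul, hgt a (le_trans hab hb), hgt b hb] at h2
  set Y : (∀ k, Fin (n k)) → ℝ := (g (d-1)).mulVec X with hY
  -- rank conditions
  have hranks : ∀ k : Fin (d - 1), (matricize n Y k.val).rank ≤ r k := by
    intro k
    obtain ⟨Q, hQs, hQi, hQr, hQL⟩ := hgq k.val k.isLt
    have hchain : g (k.val+1) * g (d-1) = g (d-1) := hgc' (k.val+1) (d-1) k.isLt le_rfl
    have hYfix : Y = (g (k.val+1)).mulVec Y := by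
      rw [hY, Matrix.mulVec_mulVec, hchain]
    have heq : matricize n Y k.val = Q * matricize n Y k.val := by
      conv_lhs => rw [hYfix, hQL, Lift_mulVec]
    calc (matricize n Y k.val).rank = (Q * matricize n Y k.val).rank := by rw [← heq]
      _ ≤ Q.rank := Matrix.rank_mul_le_left _ _
      _ ≤ r k := hQr
  set u : ℕ → (∀ k, Fin (n k)) → ℝ :=
    fun k => (g k).mulVec X - (g (k+1)).mulVec X with hu
  have htel : ∑ k ∈ Finset.range (d-1), u k = X - Y := by
    rw [hu]
    rw [Finset.sum_range_sub' (f := fun k => (g k).mulVec X)]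
    rw [hg0, Matrix.one_mulVec]
  have horth : ∀ a b, a < d-1 → b < d-1 → a ≠ b → ∑ i, u a i * u b i = 0 := by
    have key2 : ∀ a b, a < b → b < d-1 → ∑ i, u a i * u b i = 0 := by
      intro a b hab hb
      have hmat : (g a - g (a+1))ᵀ * (g b - g (b+1)) = 0 := by
        rw [Matrix.transpose_sub, hgt a (by omega), hgt (a+1) (by omega)]
        rw [Matrix.sub_mul, Matrix.mul_sub, Matrix.mul_sub]
        rw [hgc' a b (by omega) (by omega), hgc' a (b+1) (by omega) (by omega),
          hgc' (a+1) b (by omega) (by omega), hgc' (a+1) (b+1) (by omega) (by omega)]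
        abel
      have hdz := dot_mulVec_eq_zero n hmat X
      rw [hu]
      simp only [Matrix.sub_mulVec] at hdz
      simpa using hdz
    intro a b ha hb hab
    rcases Nat.lt_or_ge a b with h | h
    · exact key2 a b h hb
    · have h' : b < a := by omega
      have := key2 b a h' ha
      rw [← this]
      exact Finset.sum_congr rfl fun i _ => mul_comm _ _
  have hpyth := tsq_sum_orth n (d-1) u horth
  rw [htel] at hpyth
  have herr : tsq n (X - Y) ≤ ∑ k : Fin (d - 1),
      (eps n r X k.val k.isLt) ^ 2 := by
    rw [hpyth]
    rw [← Fin.sum_univ_eq_sum_range (fun k => tsq n (u k)) (d-1)]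
    refine Finset.sum_le_sum fun k _ => ?_
    have h1 := hge k.val k.isLt
    have h2 : tsq n (u k.val) = tfrob (u k.val) ^ 2 := (tfrob_sq n _).symm
    rw [h2]
    exact pow_le_pow_left₀ (tfrob_nonneg n _) h1 2
  have heps_eq : ∀ k : Fin (d-1), eps n r X k.val k.isLt =
      sInf {t : ℝ | ∃ Z : Matrix (∀ j : {j : Fin d // j.val ≤ k.val}, Fin (n j.1))
            (∀ j : {j : Fin d // k.val < j.val}, Fin (n j.1)) ℝ,
          Z.rank ≤ r k ∧ t = mfrob (matricize n X k.val - Z)} := fun k => rfl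
  have hgoal2 : tfrob (X - Y) ^ 2 ≤ ∑ k : Fin (d - 1),
      (sInf {t : ℝ | ∃ Z : Matrix (∀ j : {j : Fin d // j.val ≤ k.val}, Fin (n j.1))
            (∀ j : {j : Fin d // k.val < j.val}, Fin (n j.1)) ℝ,
          Z.rank ≤ r k ∧ t = mfrob (matricize n X k.val - Z)}) ^ 2 := by
    rw [tfrob_sq]
    refine le_trans herr (le_of_eq (Finset.sum_congr rfl fun k _ => by rw [heps_eq k]))
  refine ⟨Y, hranks, hgoal2, ?_⟩
  -- third inequality
  set Sw := {t : ℝ | ∃ W : (∀ k, Fin (n k)) → ℝ,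
    (∀ k : Fin (d - 1), (matricize n W k.val).rank ≤ r k) ∧ t = tfrob (X - W)} with hSw
  have hSwne : Sw.Nonempty := ⟨tfrob (X - Y), Y, hranks, rfl⟩
  have hs0 : 0 ≤ sInf Sw := Real.sInf_nonneg (by rintro t ⟨W, _, rfl⟩; exact tfrob_nonneg n _)
  have hlow : ∀ k : Fin (d-1), eps n r X k.val k.isLt ≤ sInf Sw := by
    intro k
    refine le_csInf hSwne ?_
    rintro t ⟨W, hWr, rfl⟩
    have hmem : tfrob (X - W) ∈ {t : ℝ | ∃ Z : Matrix (Rt n k.val) (Ct n k.val) ℝ,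
        Z.rank ≤ r ⟨k.val, k.isLt⟩ ∧ t = mfrob (matricize n X k.val - Z)} := by
      refine ⟨matricize n W k.val, hWr k, ?_⟩
      rw [← matricize_sub, mfrob_matricize]
    exact csInf_le ⟨0, by rintro t' ⟨Z, _, rfl⟩; exact mfrob_nonneg _⟩ hmem
  have hsum : ∑ k : Fin (d - 1), (eps n r X k.val k.isLt) ^ 2 ≤ (d - 1 : ℕ) * sInf Sw ^ 2 := by
    calc ∑ k : Fin (d - 1), (eps n r X k.val k.isLt) ^ 2
        ≤ ∑ _k : Fin (d - 1), sInf Sw ^ 2 := by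
          refine Finset.sum_le_sum fun k _ => ?_
          have heps0 : 0 ≤ eps n r X k.val k.isLt := by
            refine Real.sInf_nonneg ?_
            rintro t ⟨Z, _, rfl⟩
            exact mfrob_nonneg _
          exact pow_le_pow_left₀ heps0 (hlow k) 2
      _ = (d - 1 : ℕ) * sInf Sw ^ 2 := by
          rw [Finset.sum_const, Finset.card_univ, Fintype.card_fin, nsmul_eq_mul]
  have hfinal2 : tfrob (X - Y) ^ 2 ≤ (d - 1 : ℕ) * sInf Sw ^ 2 := by
    rw [tfrob_sq]
    exact le_trans herr hsum
  have hsqrt := Real.sqrt_le_sqrt hfinal2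
  rw [Real.sqrt_sq (tfrob_nonneg n _)] at hsqrt
  have hcast : ((d - 1 : ℕ) : ℝ) = (d : ℝ) - 1 := by
    have : (1:ℕ) ≤ d := by omega
    push_cast [Nat.cast_sub this]
    ring
  have hrhs : Real.sqrt ((d - 1 : ℕ) * sInf Sw ^ 2) = Real.sqrt ((d:ℝ) - 1) * sInf Sw := by
    rw [Real.sqrt_mul (by positivity) (sInf Sw ^ 2), Real.sqrt_sq hs0, hcast]
  rw [hrhs] at hsqrt
  exact hsqrt
end

section
/- (von Neumann alternating projections) Let H be a real Hilbert space and let M, N be closed linear subspaces of H, with orthogonal projections P_M, P_N, and P_{M∩N} onto M, N, and M∩N respectively. Then for every x ∈ H, the iterates (P_N P_M)ⁿ x converge in norm to P_{M∩N} x as n → ∞. -/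
open Filter RealInnerProductSpace

section Aux

variable {H : Type*} [NormedAddCommGroup H] [InnerProductSpace ℝ H] [CompleteSpace H]
  (M N : Submodule ℝ H) [CompleteSpace M] [CompleteSpace N]

/-- The alternating sequence of subspaces. -/
noncomputable def altS (k : ℕ) : Submodule ℝ H := if k % 2 = 0 then M else N

instance altS_complete (k : ℕ) : CompleteSpace (altS M N k) := by
  unfold altS; by_cases h : k % 2 = 0 <;> [rw [if_pos h]; rw [if_neg h]] <;> infer_instance

lemma orthogonalProjection_congr' {K K' : Submodule ℝ H} [CompleteSpace K] [CompleteSpace K']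
    (h : K = K') (v : H) :
    (Submodule.orthogonalProjectionOnto K v : H) = (Submodule.orthogonalProjectionOnto K' v : H) := by
  subst h; rfl

/-- The alternating projection sequence. -/
noncomputable def altSeq (x : H) : ℕ → H
  | 0 => x
  | (k + 1) => Submodule.orthogonalProjectionOnto (altS M N k) (altSeq x k)

lemma altS_congr {j k : ℕ} (h : j % 2 = k % 2) : altS M N j = altS M N k := by
  unfold altS; rw [h]

lemma altSeq_mem (x : H) (k : ℕ) : altSeq M N x (k + 1) ∈ altS M N k := by
  simp [altSeq]

lemma altSeq_proj_eq (x : H) {j k : ℕ} (h : j % 2 = k % 2) :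
    (Submodule.orthogonalProjectionOnto (altS M N j) (altSeq M N x (k + 1)) : H) = altSeq M N x (k + 1) := by
  refine Submodule.starProjection_eq_self_iff.mpr ?_
  rw [altS_congr M N h]
  exact altSeq_mem M N x k

lemma altSeq_inner_succ (x : H) (k : ℕ) :
    ⟪altSeq M N x (k + 1), altSeq M N x k⟫ = ‖altSeq M N x (k + 1)‖ ^ 2 := by
  have h := Submodule.starProjection_inner_eq_zero (K := altS M N k) (altSeq M N x k)
      (altSeq M N x (k + 1)) (altSeq_mem M N x k)
  have h2 : (altS M N k).starProjection (altSeq M N x k) = altSeq M N x (k+1) := rfl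
  rw [h2, inner_sub_left, sub_eq_zero] at h
  rw [real_inner_comm, h, real_inner_self_eq_norm_sq]

lemma altSeq_norm_succ_le (x : H) (k : ℕ) :
    ‖altSeq M N x (k + 1)‖ ≤ ‖altSeq M N x k‖ := by
  have h := altSeq_inner_succ M N x k
  by_cases hz : altSeq M N x (k + 1) = 0
  · simp [hz]
  · have hpos : (0:ℝ) < ‖altSeq M N x (k + 1)‖ := norm_pos_iff.mpr hz
    have := real_inner_le_norm (altSeq M N x (k + 1)) (altSeq M N x k)
    rw [h] at this
    nlinarith

lemma altSeq_norm_anti (x : H) : Antitone fun k => ‖altSeq M N x k‖ :=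
  antitone_nat_of_succ_le (altSeq_norm_succ_le M N x)

/-- Key inequality: for `n ≥ 1`, `⟪y (n+d), y n⟫ ≥ ‖y (n+d)‖²`. -/
lemma altSeq_key (x : H) : ∀ d n : ℕ, 1 ≤ n →
    ‖altSeq M N x (n + d)‖ ^ 2 ≤ ⟪altSeq M N x (n + d), altSeq M N x n⟫ := by
  intro d
  induction d using Nat.strong_induction_on with
  | _ d ih =>
    intro n hn
    match d with
    | 0 => simp only [Nat.add_zero, real_inner_self_eq_norm_sq, le_refl]
    | 1 => rw [altSeq_inner_succ]
    | (e + 2) =>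
      obtain ⟨n', rfl⟩ : ∃ n', n = n' + 1 := ⟨n - 1, by omega⟩
      have hstep : altSeq M N x (n' + 1 + (e + 2)) =
          Submodule.orthogonalProjectionOnto (altS M N (n' + 1 + (e + 1))) (altSeq M N x (n' + 1 + (e + 1))) :=
        rfl
      have hadj : ⟪altSeq M N x (n' + 1 + (e + 2)), altSeq M N x (n' + 1)⟫ =
          ⟪altSeq M N x (n' + 1 + (e + 1)),
            (Submodule.orthogonalProjectionOnto (altS M N (n' + 1 + (e + 1))) (altSeq M N x (n' + 1)) : H)⟫ := by
        rw [hstep]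
        exact Submodule.inner_starProjection_left_eq_right _ _ _
      have hnorm : ‖altSeq M N x (n' + 1 + (e + 2))‖ ^ 2 ≤ ‖altSeq M N x (n' + 1 + (e + 1))‖ ^ 2 := by
        have h1 := altSeq_norm_succ_le M N x (n' + 1 + (e + 1))
        have h1' : ‖altSeq M N x (n' + 1 + (e + 2))‖ ≤ ‖altSeq M N x (n' + 1 + (e + 1))‖ := h1
        nlinarith [norm_nonneg (altSeq M N x (n' + 1 + (e + 2)))]
      rcases Nat.even_or_odd e with he | he
      · -- e even: altS (n'+1+(e+1)) = altS n', so projection fixes y (n'+1)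
        have hpar : (n' + 1 + (e + 1)) % 2 = n' % 2 := by
          obtain ⟨t, rfl⟩ := he; omega
        have hfix : (Submodule.orthogonalProjectionOnto (altS M N (n' + 1 + (e + 1)))
            (altSeq M N x (n' + 1)) : H) = altSeq M N x (n' + 1) :=
          altSeq_proj_eq M N x hpar
        rw [hadj, hfix]
        calc ‖altSeq M N x (n' + 1 + (e + 2))‖ ^ 2
            ≤ ‖altSeq M N x (n' + 1 + (e + 1))‖ ^ 2 := hnorm
          _ ≤ ⟪altSeq M N x (n' + 1 + (e + 1)), altSeq M N x (n' + 1)⟫ :=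
              ih (e + 1) (by omega) (n' + 1) (by omega)
      · -- e odd: altS (n'+1+(e+1)) = altS (n'+1), so projection of y (n'+1) is y (n'+2)
        have hpar : (n' + 1 + (e + 1)) % 2 = (n' + 1) % 2 := by
          obtain ⟨t, rfl⟩ := he; omega
        have hfix : (Submodule.orthogonalProjectionOnto (altS M N (n' + 1 + (e + 1)))
            (altSeq M N x (n' + 1)) : H) = altSeq M N x (n' + 2) := by
          rw [orthogonalProjection_congr' (altS_congr M N hpar)]; rfl
        rw [hadj, hfix]
        have h2 : ⟪altSeq M N x (n' + 2 + e), altSeq M N x (n' + 2)⟫ ≥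
            ‖altSeq M N x (n' + 2 + e)‖ ^ 2 := ih e (by omega) (n' + 2) (by omega)
        have heq : n' + 1 + (e + 1) = n' + 2 + e := by omega
        rw [heq]
        calc ‖altSeq M N x (n' + 1 + (e + 2))‖ ^ 2
            ≤ ‖altSeq M N x (n' + 2 + e)‖ ^ 2 := by rw [← heq]; exact hnorm
          _ ≤ ⟪altSeq M N x (n' + 2 + e), altSeq M N x (n' + 2)⟫ := h2

lemma altSeq_cauchy (x : H) : CauchySeq (altSeq M N x) := by
  -- the sequence of squared norms converges, hence is Cauchy
  set c : ℕ → ℝ := fun k => ‖altSeq M N x k‖ ^ 2 with hc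
  have hanti : Antitone c := fun i j hij => by
    have := altSeq_norm_anti M N x hij
    simp only [hc]
    nlinarith [norm_nonneg (altSeq M N x j)]
  have hbdd : BddBelow (Set.range c) := ⟨0, by rintro _ ⟨k, rfl⟩; positivity⟩
  have hconv : Tendsto c atTop (nhds (⨅ k, c k)) := tendsto_atTop_ciInf hanti hbdd
  have hcc : CauchySeq c := hconv.cauchySeq
  rw [Metric.cauchySeq_iff] at hcc ⊢
  intro ε hε
  obtain ⟨K, hK⟩ := hcc (ε ^ 2) (by positivity)
  refine ⟨K + 1, fun m hm n hn => ?_⟩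
  -- wlog m ≥ n
  wlog hmn : n ≤ m generalizing m n
  · rw [dist_comm]; exact this n hn m hm (by omega)
  have hkey := altSeq_key M N x (m - n) n (by omega)
  have hmn' : n + (m - n) = m := by omega
  rw [hmn'] at hkey
  have hexp : ‖altSeq M N x m - altSeq M N x n‖ ^ 2 =
      ‖altSeq M N x m‖ ^ 2 - 2 * ⟪altSeq M N x m, altSeq M N x n⟫ +
        ‖altSeq M N x n‖ ^ 2 := norm_sub_sq_real _ _
  have hle : ‖altSeq M N x m - altSeq M N x n‖ ^ 2 ≤ c n - c m := by
    simp only [hc]; nlinarith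
  have hdist := hK m (by omega) n (by omega)
  rw [Real.dist_eq] at hdist
  have hcm : c m ≤ c n := hanti hmn
  have : ‖altSeq M N x m - altSeq M N x n‖ ^ 2 < ε ^ 2 := by
    calc ‖altSeq M N x m - altSeq M N x n‖ ^ 2 ≤ c n - c m := hle
      _ ≤ |c m - c n| := by rw [abs_sub_comm, abs_of_nonneg (by linarith)]
      _ < ε ^ 2 := hdist
  rw [dist_eq_norm]
  nlinarith [norm_nonneg (altSeq M N x m - altSeq M N x n)]

end Aux

/-- **von Neumann's alternating projection theorem.**  Let `M` and `N` be closed linear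
subspaces of a real Hilbert space `H`.  Then for every `x ∈ H` the alternating-projection
iterates `(P_N P_M)ⁿ x` converge in norm to `P_{M ∩ N} x`. -/
theorem alternating_projections_subspaces
    {H : Type*} [NormedAddCommGroup H] [InnerProductSpace ℝ H] [CompleteSpace H]
    (M N : Submodule ℝ H) [CompleteSpace M] [CompleteSpace N]
    [CompleteSpace (M ⊓ N : Submodule ℝ H)] (x : H) :
    Filter.Tendsto
      (fun n : ℕ =>
        (fun y : H => (Submodule.orthogonalProjectionOnto N (Submodule.orthogonalProjectionOnto M y : H) : H))^[n] x)
      Filter.atTop (nhds ((Submodule.orthogonalProjectionOnto (M ⊓ N : Submodule ℝ H) x : H))) := by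
  -- the full alternating sequence converges to some z
  obtain ⟨z, hz⟩ := cauchySeq_tendsto_of_complete (altSeq_cauchy M N x)
  -- the iterates are the even subsequence
  have hiter : ∀ n : ℕ,
      (fun y : H => (Submodule.orthogonalProjectionOnto N (Submodule.orthogonalProjectionOnto M y : H) : H))^[n] x =
        altSeq M N x (2 * n) := by
    intro n
    induction n with
    | zero => rfl
    | succ n ih =>
      rw [Function.iterate_succ_apply', ih]
      have h1 : altS M N (2 * n) = M := by unfold altS; simp [Nat.mul_mod_right]
      have h2 : altS M N (2 * n + 1) = N := by
        unfold altS; have : (2 * n + 1) % 2 = 1 := by omega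
        simp [this]
      have e1 : altSeq M N x (2 * (n + 1)) =
          Submodule.orthogonalProjectionOnto (altS M N (2 * n + 1)) (altSeq M N x (2 * n + 1)) := by
        have : 2 * (n + 1) = (2 * n + 1) + 1 := by omega
        rw [this]; rfl
      have e2 : altSeq M N x (2 * n + 1) =
          Submodule.orthogonalProjectionOnto (altS M N (2 * n)) (altSeq M N x (2 * n)) := rfl
      rw [e1, e2, orthogonalProjection_congr' h2,
        show (Submodule.orthogonalProjectionOnto (altS M N (2 * n)) (altSeq M N x (2 * n)) : H) =
          (Submodule.orthogonalProjectionOnto M (altSeq M N x (2 * n)) : H) from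
            orthogonalProjection_congr' h1 _]
  -- z is the projection of x onto M ⊓ N
  have hzM : z ∈ M := by
    have hclosed : IsClosed (M : Set H) :=
      (completeSpace_coe_iff_isComplete.mp ‹_›).isClosed
    have htend : Tendsto (fun k : ℕ => altSeq M N x (2 * k + 1)) atTop (nhds z) :=
      hz.comp (tendsto_atTop_atTop.mpr fun b => ⟨b, fun a ha => by omega⟩)
    refine hclosed.mem_of_tendsto htend (Filter.Eventually.of_forall fun k => ?_)
    have := altSeq_mem M N x (2 * k)
    have h1 : altS M N (2 * k) = M := by unfold altS; simp [Nat.mul_mod_right]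
    rwa [h1] at this
  have hzN : z ∈ N := by
    have hclosed : IsClosed (N : Set H) :=
      (completeSpace_coe_iff_isComplete.mp ‹_›).isClosed
    have htend : Tendsto (fun k : ℕ => altSeq M N x (2 * k + 2)) atTop (nhds z) :=
      hz.comp (tendsto_atTop_atTop.mpr fun b => ⟨b, fun a ha => by omega⟩)
    refine hclosed.mem_of_tendsto htend (Filter.Eventually.of_forall fun k => ?_)
    have := altSeq_mem M N x (2 * k + 1)
    have h2 : altS M N (2 * k + 1) = N := by
      unfold altS; have : (2 * k + 1) % 2 = 1 := by omega
      simp [this]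
    rwa [h2] at this
  have hinner : ∀ w ∈ (M ⊓ N : Submodule ℝ H), ⟪x - z, w⟫ = 0 := by
    intro w hw
    obtain ⟨hwM, hwN⟩ := Submodule.mem_inf.mp hw
    have hconst : ∀ k, ⟪altSeq M N x k, w⟫ = ⟪x, w⟫ := by
      intro k
      induction k with
      | zero => rfl
      | succ k ih =>
        have hstep : altSeq M N x (k + 1) =
            (altS M N k).starProjection (altSeq M N x k) := rfl
        have hwS : w ∈ altS M N k := by unfold altS; split <;> assumption
        have hfix : (altS M N k).starProjection w = w :=
          Submodule.starProjection_eq_self_iff.mpr hwS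
        rw [hstep, Submodule.inner_starProjection_left_eq_right, hfix, ih]
    have hlim : Tendsto (fun k => ⟪altSeq M N x k, w⟫) atTop (nhds ⟪z, w⟫) :=
      hz.inner tendsto_const_nhds
    have : ⟪z, w⟫ = ⟪x, w⟫ :=
      tendsto_nhds_unique (by simpa only [hconst] using hlim) tendsto_const_nhds
    rw [inner_sub_left, this, sub_self]
  have hproj : (Submodule.orthogonalProjectionOnto (M ⊓ N : Submodule ℝ H) x : H) = z :=
    Submodule.eq_starProjection_of_mem_of_inner_eq_zero (Submodule.mem_inf.mpr ⟨hzM, hzN⟩) hinner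
  rw [hproj]
  have : Tendsto (fun n : ℕ => altSeq M N x (2 * n)) atTop (nhds z) :=
    hz.comp (tendsto_atTop_atTop.mpr fun b => ⟨b, fun a ha => by omega⟩)
  simpa only [hiter] using this
end

section
/- (Linear rate via the Friedrichs angle) Let H be a real Hilbert space and M, N closed linear subspaces. Define c = sup{⟨u, v⟩ : u ∈ M ∩ (M∩N)^⊥, v ∈ N ∩ (M∩N)^⊥, ‖u‖ ≤ 1, ‖v‖ ≤ 1} (the cosine of the Friedrichs angle between M and N). Then for every x ∈ H and every n ≥ 1, ‖(P_N P_M)ⁿ x − P_{M∩N} x‖ ≤ c^{2n−1} ‖x‖. -/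
open scoped RealInnerProductSpace

section Aux

variable {H : Type*} [NormedAddCommGroup H] [InnerProductSpace ℝ H] [CompleteSpace H]

private lemma proj_norm_le (K : Submodule ℝ H) [CompleteSpace K] (v : H) :
    ‖(K.orthogonalProjectionOnto v : H)‖ ≤ ‖v‖ := by
  have h := (K.orthogonalProjectionOnto).le_opNorm v
  have h2 : ‖(K.orthogonalProjectionOnto v : H)‖ = ‖K.orthogonalProjectionOnto v‖ := rfl
  calc ‖(K.orthogonalProjectionOnto v : H)‖ = ‖K.orthogonalProjectionOnto v‖ := rfl
    _ ≤ ‖K.orthogonalProjectionOnto‖ * ‖v‖ := h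
    _ ≤ 1 * ‖v‖ := by
        exact mul_le_mul_of_nonneg_right K.orthogonalProjectionOnto_norm_le (norm_nonneg v)
    _ = ‖v‖ := one_mul _

/-- Orthogonal projection onto `K` preserves `Lᗮ` when `L ≤ K`. -/
private lemma proj_mem_orth {K L : Submodule ℝ H} [CompleteSpace K] (hLK : L ≤ K) {w : H}
    (hw : w ∈ Lᗮ) : (K.orthogonalProjectionOnto w : H) ∈ Lᗮ := by
  rw [Submodule.mem_orthogonal]
  intro s hs
  have h1 : ⟪(K.orthogonalProjectionOnto s : H), w⟫ = ⟪s, (K.orthogonalProjectionOnto w : H)⟫ :=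
    K.inner_starProjection_left_eq_right s w
  have h2 : (K.orthogonalProjectionOnto s : H) = s := Submodule.starProjection_eq_self_iff (K := K) |>.mpr (hLK hs)
  rw [← h1, h2]
  exact hw s hs

variable (M N : Submodule ℝ H)

private def fSet : Set ℝ :=
  {c : ℝ | ∃ u ∈ M ⊓ (M ⊓ N)ᗮ, ∃ v ∈ N ⊓ (M ⊓ N)ᗮ, ‖u‖ ≤ 1 ∧ ‖v‖ ≤ 1 ∧ c = ⟪u, v⟫}

private lemma zero_mem_fSet : (0 : ℝ) ∈ fSet M N :=
  ⟨0, zero_mem _, 0, zero_mem _, by simp, by simp, by simp⟩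

private lemma fSet_bddAbove : BddAbove (fSet M N) := by
  refine ⟨1, fun c hc => ?_⟩
  obtain ⟨u, hu, v, hv, hu1, hv1, rfl⟩ := hc
  calc ⟪u, v⟫ ≤ ‖u‖ * ‖v‖ := real_inner_le_norm u v
    _ ≤ 1 * 1 := mul_le_mul hu1 hv1 (norm_nonneg v) zero_le_one
    _ = 1 := one_mul 1

private lemma fSup_nonneg : 0 ≤ sSup (fSet M N) :=
  le_csSup (fSet_bddAbove M N) (zero_mem_fSet M N)

private lemma inner_le_fSup {u v : H} (hu : u ∈ M ⊓ (M ⊓ N)ᗮ) (hv : v ∈ N ⊓ (M ⊓ N)ᗮ) :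
    ⟪u, v⟫ ≤ sSup (fSet M N) * (‖u‖ * ‖v‖) := by
  rcases eq_or_ne u 0 with rfl | hu0
  · simp
  rcases eq_or_ne v 0 with rfl | hv0
  · simp
  have hun : (0:ℝ) < ‖u‖ := norm_pos_iff.mpr hu0
  have hvn : (0:ℝ) < ‖v‖ := norm_pos_iff.mpr hv0
  set u' := ‖u‖⁻¹ • u with hu'
  set v' := ‖v‖⁻¹ • v with hv'
  have hu'mem : u' ∈ M ⊓ (M ⊓ N)ᗮ := Submodule.smul_mem _ _ hu
  have hv'mem : v' ∈ N ⊓ (M ⊓ N)ᗮ := Submodule.smul_mem _ _ hv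
  have hu'n : ‖u'‖ ≤ 1 := by
    rw [hu', norm_smul, norm_inv, norm_norm, inv_mul_cancel₀ hun.ne']
  have hv'n : ‖v'‖ ≤ 1 := by
    rw [hv', norm_smul, norm_inv, norm_norm, inv_mul_cancel₀ hvn.ne']
  have hmem : ⟪u', v'⟫ ∈ fSet M N := ⟨u', hu'mem, v', hv'mem, hu'n, hv'n, rfl⟩
  have hle : ⟪u', v'⟫ ≤ sSup (fSet M N) := le_csSup (fSet_bddAbove M N) hmem
  have heq : ⟪u', v'⟫ = ‖u‖⁻¹ * (‖v‖⁻¹ * ⟪u, v⟫) := by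
    rw [hu', hv', real_inner_smul_left, real_inner_smul_right]
  rw [heq] at hle
  have := mul_le_mul_of_nonneg_left hle (le_of_lt (mul_pos hun hvn))
  calc ⟪u, v⟫ = ‖u‖ * ‖v‖ * (‖u‖⁻¹ * (‖v‖⁻¹ * ⟪u, v⟫)) := by
        field_simp
    _ ≤ ‖u‖ * ‖v‖ * sSup (fSet M N) := this
    _ = sSup (fSet M N) * (‖u‖ * ‖v‖) := by ring

/-- Key contraction: projecting an element of `M ⊓ (M ⊓ N)ᗮ` onto `N` shrinks by `c`. -/
private lemma contractN [CompleteSpace N] {u : H} (hu : u ∈ M ⊓ (M ⊓ N)ᗮ) :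
    ‖(N.orthogonalProjectionOnto u : H)‖ ≤ sSup (fSet M N) * ‖u‖ := by
  set v := (N.orthogonalProjectionOnto u : H) with hv
  have hvN : v ∈ N := (N.orthogonalProjectionOnto u).2
  have hvO : v ∈ (M ⊓ N)ᗮ := proj_mem_orth inf_le_right hu.2
  have hinner : ⟪u, v⟫ = ‖v‖ * ‖v‖ := by
    have h0 : ⟪u - v, v⟫ = 0 := Submodule.starProjection_inner_eq_zero (K := N) u v hvN
    have : ⟪u, v⟫ - ⟪v, v⟫ = 0 := by rw [← inner_sub_left]; exact h0
    rw [← real_inner_self_eq_norm_mul_norm]; linarith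
  have hle : ‖v‖ * ‖v‖ ≤ sSup (fSet M N) * (‖u‖ * ‖v‖) := by
    rw [← hinner]; exact inner_le_fSup M N hu ⟨hvN, hvO⟩
  rcases eq_or_lt_of_le (norm_nonneg v) with h0 | h0
  · rw [← h0]; exact mul_nonneg (fSup_nonneg M N) (norm_nonneg u)
  · have := (mul_le_mul_iff_of_pos_right h0).mp (by linarith [hle] : ‖v‖ * ‖v‖ ≤ sSup (fSet M N) * ‖u‖ * ‖v‖)
    exact this

/-- Key contraction: projecting an element of `N ⊓ (M ⊓ N)ᗮ` onto `M` shrinks by `c`. -/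
private lemma contractM [CompleteSpace M] {v : H} (hv : v ∈ N ⊓ (M ⊓ N)ᗮ) :
    ‖(M.orthogonalProjectionOnto v : H)‖ ≤ sSup (fSet M N) * ‖v‖ := by
  set u := (M.orthogonalProjectionOnto v : H) with hu
  have huM : u ∈ M := (M.orthogonalProjectionOnto v).2
  have huO : u ∈ (M ⊓ N)ᗮ := proj_mem_orth inf_le_left hv.2
  have hinner : ⟪u, v⟫ = ‖u‖ * ‖u‖ := by
    have h0 : ⟪v - u, u⟫ = 0 := Submodule.starProjection_inner_eq_zero (K := M) v u huM
    have h1 : ⟪v, u⟫ - ⟪u, u⟫ = 0 := by rw [← inner_sub_left]; exact h0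
    have h2 : ⟪u, v⟫ = ⟪v, u⟫ := real_inner_comm v u
    rw [← real_inner_self_eq_norm_mul_norm]; linarith
  have hle : ‖u‖ * ‖u‖ ≤ sSup (fSet M N) * (‖u‖ * ‖v‖) := by
    rw [← hinner]; exact inner_le_fSup M N ⟨huM, huO⟩ hv
  rcases eq_or_lt_of_le (norm_nonneg u) with h0 | h0
  · rw [← h0]; exact mul_nonneg (fSup_nonneg M N) (norm_nonneg v)
  · have : ‖u‖ * ‖u‖ ≤ sSup (fSet M N) * ‖v‖ * ‖u‖ := by linarith [hle]
    exact (mul_le_mul_iff_of_pos_right h0).mp this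

end Aux

/-- **Linear convergence rate of alternating projections via the Friedrichs angle.**
Let `M`, `N` be closed linear subspaces of a real Hilbert space `H` and let
`c = sup{⟨u, v⟩ : u ∈ M ∩ (M∩N)^⊥, v ∈ N ∩ (M∩N)^⊥, ‖u‖ ≤ 1, ‖v‖ ≤ 1}` be the cosine of the
Friedrichs angle between `M` and `N`.  Then for every `x ∈ H` and every `n ≥ 1`,
`‖(P_N P_M)ⁿ x − P_{M∩N} x‖ ≤ c^(2n−1) ‖x‖`. -/
theorem alternating_projections_rate_friedrichs
    {H : Type*} [NormedAddCommGroup H] [InnerProductSpace ℝ H] [CompleteSpace H]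
    (M N : Submodule ℝ H) [CompleteSpace M] [CompleteSpace N]
    [CompleteSpace (M ⊓ N : Submodule ℝ H)] (x : H) (n : ℕ) (hn : 1 ≤ n) :
    ‖(fun y : H => (N.orthogonalProjectionOnto (M.orthogonalProjectionOnto y : H) : H))^[n] x
        - ((M ⊓ N : Submodule ℝ H).orthogonalProjectionOnto x : H)‖ ≤
      (sSup {c : ℝ | ∃ u ∈ M ⊓ (M ⊓ N)ᗮ, ∃ v ∈ N ⊓ (M ⊓ N)ᗮ,
        ‖u‖ ≤ 1 ∧ ‖v‖ ≤ 1 ∧ c = ⟪u, v⟫}) ^ (2 * n - 1) * ‖x‖ := by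
  set c := sSup (fSet M N) with hc
  have hc0 : 0 ≤ c := fSup_nonneg M N
  set Q : H → H := fun y : H => (N.orthogonalProjectionOnto (M.orthogonalProjectionOnto y : H) : H)
    with hQ
  set p : H := ((M ⊓ N : Submodule ℝ H).orthogonalProjectionOnto x : H) with hp
  have hpM : p ∈ M := ((M ⊓ N : Submodule ℝ H).orthogonalProjectionOnto x).2.1
  have hpN : p ∈ N := ((M ⊓ N : Submodule ℝ H).orthogonalProjectionOnto x).2.2
  have hQadd : ∀ a b : H, Q (a + b) = Q a + Q b := by
    intro a b
    simp only [hQ, map_add, Submodule.coe_add]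
  have hQfix : Q p = p := by
    have h1 : (M.orthogonalProjectionOnto p : H) = p := Submodule.starProjection_eq_self_iff (K := M) |>.mpr hpM
    simp only [hQ, h1]
    exact Submodule.starProjection_eq_self_iff (K := N) |>.mpr hpN
  set z : H := x - p with hz
  have hzO : z ∈ (M ⊓ N)ᗮ := Submodule.sub_starProjection_mem_orthogonal (K := M ⊓ N) x
  -- iterate splits
  have hsplit : ∀ m : ℕ, Q^[m] x = Q^[m] z + p := by
    intro m
    induction m with
    | zero =>
      rw [Function.iterate_zero_apply, Function.iterate_zero_apply, hz, sub_add_cancel]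
    | succ k ih =>
      rw [Function.iterate_succ_apply', ih, hQadd, hQfix, Function.iterate_succ_apply']
  -- the key estimate by induction
  have key : ∀ m : ℕ, 1 ≤ m → Q^[m] z ∈ N ⊓ (M ⊓ N)ᗮ ∧ ‖Q^[m] z‖ ≤ c ^ (2 * m - 1) * ‖z‖ := by
    intro m hm
    induction m with
    | zero => omega
    | succ k ih =>
      rcases Nat.eq_or_lt_of_le hm with h1 | h1
      · -- k + 1 = 1, i.e. k = 0
        have hk : k = 0 := by omega
        subst hk
        have h01 : Q^[0 + 1] z = Q z := by
          rw [Function.iterate_succ_apply', Function.iterate_zero_apply]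
        rw [h01]
        have huM : (M.orthogonalProjectionOnto z : H) ∈ M ⊓ (M ⊓ N)ᗮ :=
          ⟨(M.orthogonalProjectionOnto z).2, proj_mem_orth inf_le_left hzO⟩
        constructor
        · exact ⟨(N.orthogonalProjectionOnto _).2, proj_mem_orth inf_le_right huM.2⟩
        · calc ‖Q z‖ ≤ c * ‖(M.orthogonalProjectionOnto z : H)‖ := contractN M N huM
            _ ≤ c * ‖z‖ := mul_le_mul_of_nonneg_left (proj_norm_le M z) hc0
            _ = c ^ (2 * 1 - 1) * ‖z‖ := by norm_num
      · -- k ≥ 1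
        have hk : 1 ≤ k := by omega
        obtain ⟨hmem, hnorm⟩ := ih hk
        set w : H := Q^[k] z with hw
        have huM : (M.orthogonalProjectionOnto w : H) ∈ M ⊓ (M ⊓ N)ᗮ :=
          ⟨(M.orthogonalProjectionOnto w).2, proj_mem_orth inf_le_left hmem.2⟩
        have hQw : Q^[k + 1] z = Q w := by rw [Function.iterate_succ_apply']
        constructor
        · rw [hQw]
          exact ⟨(N.orthogonalProjectionOnto _).2, proj_mem_orth inf_le_right huM.2⟩
        · rw [hQw]
          have h2 : ‖(M.orthogonalProjectionOnto w : H)‖ ≤ c * ‖w‖ := contractM M N hmem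
          calc ‖Q w‖ ≤ c * ‖(M.orthogonalProjectionOnto w : H)‖ := contractN M N huM
            _ ≤ c * (c * ‖w‖) := mul_le_mul_of_nonneg_left h2 hc0
            _ ≤ c * (c * (c ^ (2 * k - 1) * ‖z‖)) := by
                refine mul_le_mul_of_nonneg_left (mul_le_mul_of_nonneg_left ?_ hc0) hc0
                exact hnorm
            _ = c ^ (2 * (k + 1) - 1) * ‖z‖ := by
                rw [show 2 * (k + 1) - 1 = (2 * k - 1) + 2 by omega]
                ring
  obtain ⟨_, hkey⟩ := key n hn
  have hzx : ‖z‖ ≤ ‖x‖ := by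
    have horto : ⟪p, z⟫ = 0 := by
      have := hzO
      rw [Submodule.mem_orthogonal] at this
      exact this p ((M ⊓ N : Submodule ℝ H).orthogonalProjectionOnto x).2
    have hxpz : x = p + z := by rw [hz]; abel
    have hsq := norm_add_sq_real p z
    rw [horto] at hsq
    have h3 : ‖x‖ ^ 2 = ‖p‖ ^ 2 + ‖z‖ ^ 2 := by rw [hxpz]; linarith
    nlinarith [norm_nonneg p, norm_nonneg z, norm_nonneg x, h3]
  have hfinal : ‖Q^[n] x - p‖ ≤ c ^ (2 * n - 1) * ‖z‖ := by
    rw [hsplit n]; simpa using hkey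
  calc ‖Q^[n] x - p‖ ≤ c ^ (2 * n - 1) * ‖z‖ := hfinal
    _ ≤ c ^ (2 * n - 1) * ‖x‖ := mul_le_mul_of_nonneg_left hzx (pow_nonneg hc0 _)
end

section
/- (Weak convergence of alternating projections for convex sets) Let H be a real Hilbert space and let C, D ⊆ H be closed convex sets with C ∩ D ≠ ∅. Let P_C and P_D denote the metric projections onto C and D. Then for any starting point x₀ ∈ H, the sequence defined by x_{n+1} = P_D(P_C(x_n)) converges weakly to a point of C ∩ D. -/
open scoped RealInnerProductSpace

open Filter

/-- Every bounded sequence in a real Hilbert space has a weak limit along any ultrafilter. -/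
lemma exists_weak_ultrafilter_limit
    {H : Type*} [NormedAddCommGroup H] [InnerProductSpace ℝ H] [CompleteSpace H]
    (y : ℕ → H) (M : ℝ) (hM : ∀ n, ‖y n‖ ≤ M) (U : Ultrafilter ℕ) :
    ∃ p : H, ∀ w : H, Tendsto (fun n => ⟪y n, w⟫) U (nhds ⟪p, w⟫) := by
  have hM0 : 0 ≤ M := le_trans (norm_nonneg (y 0)) (hM 0)
  have hbd : ∀ w : H, ∀ n, |⟪y n, w⟫| ≤ M * ‖w‖ := by
    intro w n
    refine le_trans (abs_real_inner_le_norm _ _) ?_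
    exact mul_le_mul_of_nonneg_right (hM n) (norm_nonneg w)
  have hex : ∀ w : H, ∃ c : ℝ, Tendsto (fun n => ⟪y n, w⟫) U (nhds c) := by
    intro w
    have hmem : (U.map (fun n => ⟪y n, w⟫) : Filter ℝ) ≤
        Filter.principal (Set.Icc (-(M * ‖w‖)) (M * ‖w‖)) := by
      rw [Ultrafilter.coe_map]
      exact Filter.tendsto_principal.mpr
        (Filter.Eventually.of_forall fun n => Set.mem_Icc.mpr (abs_le.mp (hbd w n)))
    obtain ⟨c, _, hc⟩ := (isCompact_Icc (a := -(M * ‖w‖)) (b := M * ‖w‖)).ultrafilter_le_nhds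
      (U.map (fun n => ⟪y n, w⟫)) hmem
    rw [Ultrafilter.coe_map] at hc
    exact ⟨c, hc⟩
  choose g hg using hex
  have hadd : ∀ w w' : H, g (w + w') = g w + g w' := by
    intro w w'
    refine tendsto_nhds_unique (hg (w + w')) ?_
    have := (hg w).add (hg w')
    refine this.congr fun n => ?_
    rw [inner_add_right]
  have hsmul : ∀ (c : ℝ) (w : H), g (c • w) = c * g w := by
    intro c w
    refine tendsto_nhds_unique (hg (c • w)) ?_
    have := (hg w).const_mul c
    refine this.congr fun n => ?_
    rw [real_inner_smul_right]
  have hgbd : ∀ w : H, |g w| ≤ M * ‖w‖ := by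
    intro w
    exact le_of_tendsto (hg w).abs (Filter.Eventually.of_forall fun n => hbd w n)
  let φ : H →ₗ[ℝ] ℝ :=
    { toFun := g
      map_add' := hadd
      map_smul' := hsmul }
  let Φ : H →L[ℝ] ℝ := φ.mkContinuous M (fun w => by
    simpa [Real.norm_eq_abs, φ] using hgbd w)
  refine ⟨(InnerProductSpace.toDual ℝ H).symm Φ, fun w => ?_⟩
  have : ⟪(InnerProductSpace.toDual ℝ H).symm Φ, w⟫ = Φ w :=
    InnerProductSpace.toDual_symm_apply
  rw [this]
  exact hg w

/-- **Weak convergence of alternating projections between convex sets.**  Let `C`, `D` be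
closed convex subsets of a real Hilbert space `H` with `C ∩ D ≠ ∅`, and let `PC`, `PD` be the
metric projections onto `C` and `D` (the maps sending a point to its nearest point of the
set).  Then for every starting point `x₀`, the sequence `x_{n+1} = P_D (P_C x_n)` converges
weakly to a point of `C ∩ D`. -/
theorem alternating_projections_convex_weak_convergence
    {H : Type*} [NormedAddCommGroup H] [InnerProductSpace ℝ H] [CompleteSpace H]
    (C D : Set H) (hCclosed : IsClosed C) (hDclosed : IsClosed D)
    (hCconv : Convex ℝ C) (hDconv : Convex ℝ D) (hCD : (C ∩ D).Nonempty)
    (PC PD : H → H)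
    (hPC : ∀ x, PC x ∈ C ∧ ∀ y ∈ C, ‖x - PC x‖ ≤ ‖x - y‖)
    (hPD : ∀ x, PD x ∈ D ∧ ∀ y ∈ D, ‖x - PD x‖ ≤ ‖x - y‖)
    (x₀ : H) (x : ℕ → H) (hx0 : x 0 = x₀) (hxrec : ∀ m : ℕ, x (m + 1) = PD (PC (x m))) :
    ∃ z ∈ C ∩ D, ∀ w : H,
      Filter.Tendsto (fun m : ℕ => ⟪x m, w⟫) Filter.atTop (nhds ⟪z, w⟫) := by
  obtain ⟨z₀, hz₀C, hz₀D⟩ := hCD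
  -- variational characterization of the projections
  have hvar : ∀ (P : H → H) (S : Set H), Convex ℝ S →
      (∀ a, P a ∈ S ∧ ∀ y ∈ S, ‖a - P a‖ ≤ ‖a - y‖) →
      ∀ a, ∀ c ∈ S, ⟪a - P a, c - P a⟫ ≤ 0 := by
    intro P S hSconv hP a
    haveI : Nonempty S := ⟨⟨P a, (hP a).1⟩⟩
    have hnorm : ‖a - P a‖ = ⨅ w : S, ‖a - w‖ := by
      refine le_antisymm (le_ciInf fun w => (hP a).2 w w.2) ?_
      have hbdd : BddBelow (Set.range fun w : S => ‖a - (w : H)‖) :=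
        ⟨0, by rintro r ⟨w, rfl⟩; exact norm_nonneg _⟩
      exact ciInf_le hbdd ⟨P a, (hP a).1⟩
    exact (norm_eq_iInf_iff_real_inner_le_zero hSconv (hP a).1).mp hnorm
  have hvarC := hvar PC C hCconv hPC
  have hvarD := hvar PD D hDconv hPD
  -- key (firm nonexpansiveness at a fixed point) inequality
  have key : ∀ (P : H → H) (S : Set H), (∀ a, ∀ c ∈ S, ⟪a - P a, c - P a⟫ ≤ 0) →
      ∀ a, ∀ z ∈ S, ‖P a - z‖ ^ 2 + ‖a - P a‖ ^ 2 ≤ ‖a - z‖ ^ 2 := by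
    intro P S hv a z hz
    have h := hv a z hz
    have expand : ‖a - z‖ ^ 2 =
        ‖a - P a‖ ^ 2 + 2 * ⟪a - P a, P a - z⟫ + ‖P a - z‖ ^ 2 := by
      have e : a - z = (a - P a) + (P a - z) := by abel
      rw [e, norm_add_sq_real]
    have h2 : ⟪a - P a, P a - z⟫ = -⟪a - P a, z - P a⟫ := by
      rw [← inner_neg_right]
      congr 1
      abel
    nlinarith [h, expand, h2]
  -- Fejér monotonicity with gap terms
  have fejer : ∀ z, z ∈ C ∩ D → ∀ n,
      ‖x (n + 1) - z‖ ^ 2 + (‖x n - PC (x n)‖ ^ 2 + ‖PC (x n) - x (n + 1)‖ ^ 2)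
        ≤ ‖x n - z‖ ^ 2 := by
    rintro z ⟨hzC, hzD⟩ n
    have h1 := key PC C hvarC (x n) z hzC
    have h2 := key PD D hvarD (PC (x n)) z hzD
    rw [← hxrec n] at h2
    linarith [h1, h2]
  -- the distance to any point of `C ∩ D` is antitone
  have hanti : ∀ z, z ∈ C ∩ D → Antitone fun n => ‖x n - z‖ := by
    intro z hz
    refine antitone_nat_of_succ_le fun n => ?_
    have := fejer z hz n
    nlinarith [norm_nonneg (x (n + 1) - z), norm_nonneg (x n - z),
      norm_nonneg (x n - PC (x n)), norm_nonneg (PC (x n) - x (n + 1))]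
  -- distances converge
  have hdist : ∀ z, z ∈ C ∩ D →
      Tendsto (fun n => ‖x n - z‖) atTop (nhds (⨅ n, ‖x n - z‖)) := by
    intro z hz
    exact tendsto_atTop_ciInf (hanti z hz)
      ⟨0, by rintro r ⟨n, rfl⟩; exact norm_nonneg _⟩
  have hdistsq : ∀ z, z ∈ C ∩ D →
      Tendsto (fun n => ‖x n - z‖ ^ 2) atTop (nhds ((⨅ n, ‖x n - z‖) ^ 2)) :=
    fun z hz => (hdist z hz).pow 2
  -- the gaps tend to zero
  have hz₀ : z₀ ∈ C ∩ D := ⟨hz₀C, hz₀D⟩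
  have hgap : Tendsto
      (fun n => ‖x n - PC (x n)‖ ^ 2 + ‖PC (x n) - x (n + 1)‖ ^ 2) atTop (nhds 0) := by
    have h1 := hdistsq z₀ hz₀
    have h2 : Tendsto (fun n => ‖x (n + 1) - z₀‖ ^ 2) atTop
        (nhds ((⨅ n, ‖x n - z₀‖) ^ 2)) := h1.comp (tendsto_add_atTop_nat 1)
    have h3 : Tendsto (fun n => ‖x n - z₀‖ ^ 2 - ‖x (n + 1) - z₀‖ ^ 2) atTop (nhds 0) := by
      simpa using h1.sub h2
    refine tendsto_of_tendsto_of_tendsto_of_le_of_le tendsto_const_nhds h3 ?_ ?_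
    · intro n
      dsimp only
      positivity
    · intro n
      have := fejer z₀ hz₀ n
      dsimp only
      linarith
  have hgap1 : Tendsto (fun n => ‖x n - PC (x n)‖) atTop (nhds 0) := by
    have hsq : Tendsto (fun n => ‖x n - PC (x n)‖ ^ 2) atTop (nhds 0) := by
      refine tendsto_of_tendsto_of_tendsto_of_le_of_le tendsto_const_nhds hgap
        (fun n => by dsimp only; positivity)
        (fun n => by dsimp only; nlinarith [sq_nonneg ‖PC (x n) - x (n + 1)‖])
    have := (Real.continuous_sqrt.tendsto 0).comp hsq
    simp only [Real.sqrt_zero] at this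
    refine this.congr fun n => ?_
    simp [Real.sqrt_sq (norm_nonneg _)]
  have hgap2 : Tendsto (fun n => ‖PC (x n) - x (n + 1)‖) atTop (nhds 0) := by
    have hsq : Tendsto (fun n => ‖PC (x n) - x (n + 1)‖ ^ 2) atTop (nhds 0) := by
      refine tendsto_of_tendsto_of_tendsto_of_le_of_le tendsto_const_nhds hgap
        (fun n => by dsimp only; positivity)
        (fun n => by dsimp only; nlinarith [sq_nonneg ‖x n - PC (x n)‖])
    have := (Real.continuous_sqrt.tendsto 0).comp hsq
    simp only [Real.sqrt_zero] at this
    refine this.congr fun n => ?_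
    simp [Real.sqrt_sq (norm_nonneg _)]
  -- boundedness of the sequence
  set M : ℝ := ‖x 0 - z₀‖ + ‖z₀‖ with hMdef
  have hbound : ∀ n, ‖x n‖ ≤ M := by
    intro n
    have h1 : ‖x n - z₀‖ ≤ ‖x 0 - z₀‖ := hanti z₀ hz₀ (Nat.zero_le n)
    calc ‖x n‖ = ‖(x n - z₀) + z₀‖ := by rw [sub_add_cancel]
    _ ≤ ‖x n - z₀‖ + ‖z₀‖ := norm_add_le _ _
    _ ≤ M := by linarith
  -- any ultrafilter finer than atTop gives a weak limit point lying in C ∩ D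
  have hU : ∀ U : Ultrafilter ℕ, (U : Filter ℕ) ≤ atTop →
      ∃ p ∈ C ∩ D, ∀ w : H, Tendsto (fun n => ⟪x n, w⟫) U (nhds ⟪p, w⟫) := by
    intro U hUle
    obtain ⟨p, hp⟩ := exists_weak_ultrafilter_limit x M hbound U
    -- the sequence PC (x n) has the same weak limit along U
    have hPCw : ∀ w : H, Tendsto (fun n => ⟪PC (x n), w⟫) U (nhds ⟪p, w⟫) := by
      intro w
      have hdiff : Tendsto (fun n => ⟪PC (x n) - x n, w⟫) atTop (nhds 0) := by
        refine squeeze_zero_norm (fun n => ?_) (by simpa using hgap1.const_mul ‖w‖)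
        calc ‖⟪PC (x n) - x n, w⟫‖ ≤ ‖PC (x n) - x n‖ * ‖w‖ := abs_real_inner_le_norm _ _
        _ = ‖w‖ * ‖x n - PC (x n)‖ := by rw [norm_sub_rev]; ring
      have := (hp w).add (hdiff.mono_left hUle)
      simp only [add_zero] at this
      refine this.congr fun n => ?_
      rw [← inner_add_left]
      congr 1
      abel
    have hxsw : ∀ w : H, Tendsto (fun n => ⟪x (n + 1), w⟫) U (nhds ⟪p, w⟫) := by
      intro w
      have hdiff : Tendsto (fun n => ⟪x (n + 1) - PC (x n), w⟫) atTop (nhds 0) := by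
        refine squeeze_zero_norm (fun n => ?_) (by simpa using hgap2.const_mul ‖w‖)
        calc ‖⟪x (n + 1) - PC (x n), w⟫‖ ≤ ‖x (n + 1) - PC (x n)‖ * ‖w‖ :=
          abs_real_inner_le_norm _ _
        _ = ‖w‖ * ‖PC (x n) - x (n + 1)‖ := by rw [norm_sub_rev]; ring
      have := (hPCw w).add (hdiff.mono_left hUle)
      simp only [add_zero] at this
      refine this.congr fun n => ?_
      rw [← inner_add_left]
      congr 1
      abel
    -- membership in a closed convex set from weak convergence
    have weakmem : ∀ (S : Set H), Convex ℝ S → IsClosed S → ∀ u : ℕ → H,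
        (∀ n, u n ∈ S) → (∀ w : H, Tendsto (fun n => ⟪u n, w⟫) U (nhds ⟪p, w⟫)) →
        p ∈ S := by
      intro S hconv hcl u hmem hw
      by_contra hpS
      obtain ⟨f, u0, hfp, hfb⟩ := geometric_hahn_banach_point_closed hconv hcl hpS
      set v := (InnerProductSpace.toDual ℝ H).symm f with hv
      have hfv : ∀ y : H, f y = ⟪v, y⟫ := fun y =>
        (InnerProductSpace.toDual_symm_apply).symm
      have hten : Tendsto (fun n => f (u n)) U (nhds (f p)) := by
        have h := hw v
        have e1 : (fun n => f (u n)) = fun n => ⟪u n, v⟫ := by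
          funext n
          rw [hfv (u n), real_inner_comm]
        have e2 : f p = ⟪p, v⟫ := by rw [hfv p, real_inner_comm]
        rw [e1, e2]
        exact h
      have : u0 ≤ f p :=
        ge_of_tendsto hten (Filter.Eventually.of_forall fun n => (hfb _ (hmem n)).le)
      linarith
    have hpC : p ∈ C :=
      weakmem C hCconv hCclosed (fun n => PC (x n)) (fun n => (hPC (x n)).1) hPCw
    have hpD : p ∈ D := by
      refine weakmem D hDconv hDclosed (fun n => x (n + 1)) (fun n => ?_) hxsw
      show x (n + 1) ∈ D
      rw [hxrec n]
      exact (hPD (PC (x n))).1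
    exact ⟨p, ⟨hpC, hpD⟩, hp⟩
  -- key inner-product identity for weak limit points
  have hkey : ∀ U : Ultrafilter ℕ, (U : Filter ℕ) ≤ atTop → ∀ p : H,
      (∀ w : H, Tendsto (fun n => ⟪x n, w⟫) U (nhds ⟪p, w⟫)) →
      ∀ z z' : H, z ∈ C ∩ D → z' ∈ C ∩ D →
      ⟪p, z' - z⟫ = ((⨅ n, ‖x n - z‖) ^ 2 - (⨅ n, ‖x n - z'‖) ^ 2
        - ‖z‖ ^ 2 + ‖z'‖ ^ 2) / 2 := by
    intro U hUle p hp z z' hz hz'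
    have h1 := hdistsq z hz
    have h2 := hdistsq z' hz'
    have h3 : Tendsto (fun n => ⟪x n, z' - z⟫) atTop
        (nhds (((⨅ n, ‖x n - z‖) ^ 2 - (⨅ n, ‖x n - z'‖) ^ 2
          - ‖z‖ ^ 2 + ‖z'‖ ^ 2) / 2)) := by
      have := ((h1.sub h2).sub_const (‖z‖ ^ 2)).add_const (‖z'‖ ^ 2)
      have h4 := this.div_const 2
      refine h4.congr fun n => ?_
      rw [norm_sub_sq_real, norm_sub_sq_real, inner_sub_right]
      ring
    exact tendsto_nhds_unique (hp (z' - z)) (h3.mono_left hUle)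
  -- uniqueness of the weak limit point
  have huniq : ∀ (U U' : Ultrafilter ℕ), (U : Filter ℕ) ≤ atTop →
      (U' : Filter ℕ) ≤ atTop → ∀ p q : H, p ∈ C ∩ D → q ∈ C ∩ D →
      (∀ w : H, Tendsto (fun n => ⟪x n, w⟫) U (nhds ⟪p, w⟫)) →
      (∀ w : H, Tendsto (fun n => ⟪x n, w⟫) U' (nhds ⟪q, w⟫)) → p = q := by
    intro U U' hUle hU'le p q hpCD hqCD hp hq
    have c1 := hkey U hUle p hp p q hpCD hqCD
    have c2 := hkey U' hU'le q hq p q hpCD hqCD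
    have : ⟪q - p, q - p⟫ = 0 := by
      rw [inner_sub_left]
      linarith
    have := inner_self_eq_zero.mp this
    have : q = p := by
      have h := sub_eq_zero.mp this
      exact h
    exact this.symm
  -- conclusion
  obtain ⟨z, hzCD, hz⟩ := hU (Ultrafilter.of atTop) (Ultrafilter.of_le _)
  refine ⟨z, hzCD, fun w => ?_⟩
  rw [tendsto_iff_ultrafilter]
  intro V hVle
  obtain ⟨p, hpCD, hp⟩ := hU V hVle
  have hpz : p = z := huniq V (Ultrafilter.of atTop) hVle (Ultrafilter.of_le _)
    p z hpCD hzCD hp hz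
  rw [← hpz]
  exact hp w
end

section
/- (Bunt–Motzkin) Let E = ℝⁿ with the Euclidean norm and let S ⊆ E be nonempty. Then every point of E has a unique nearest point in S (i.e., S is a Chebyshev set) if and only if S is closed and convex. -/
set_option maxHeartbeats 1000000

open Metric Set Filter
open scoped RealInnerProductSpace Topology

variable {E : Type*} [NormedAddCommGroup E] [InnerProductSpace ℝ E]

lemma bm_inner_id (x y s q : E) :
    ‖y - s‖ ^ 2 + ‖x - q‖ ^ 2 - ‖x - s‖ ^ 2 - ‖y - q‖ ^ 2 = 2 * ⟪y - x, q - s⟫ := by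
  simp only [norm_sub_sq_real, inner_sub_left, inner_sub_right]
  ring

lemma bm_halfspace_max (v : E) (F : Finset E) {p : E} (hp : p ∈ convexHull ℝ (F : Set E)) :
    ∃ s ∈ F, ⟪v, p⟫ ≤ ⟪v, s⟫ := by
  have hFne : F.Nonempty := by
    rcases F.eq_empty_or_nonempty with h | h
    · subst h; simp at hp
    · exact h
  set M := F.sup' hFne (fun s => ⟪v, s⟫) with hM
  have hconv : Convex ℝ {x : E | ⟪v, x⟫ ≤ M} :=
    convex_halfSpace_le ⟨fun a b => inner_add_right _ _ _, fun c a => real_inner_smul_right _ _ _⟩ M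
  have hsub : (F : Set E) ⊆ {x : E | ⟪v, x⟫ ≤ M} := fun s hs =>
    Finset.le_sup' (fun s => ⟪v, s⟫) hs
  have := convexHull_min hsub hconv hp
  obtain ⟨s, hs, hse⟩ := F.exists_mem_eq_sup' hFne (fun s => ⟪v, s⟫)
  exact ⟨s, hs, le_trans this hse.le⟩

lemma bm_basis_dir [FiniteDimensional ℝ E] {W : Submodule ℝ E}
    (hW : 1 ≤ Module.finrank ℝ W) (v : E) (hv : v ∈ W) :
    ∃ i : Fin (Module.finrank ℝ W),
      ‖v‖ / Real.sqrt (Module.finrank ℝ W) ≤ |⟪((stdOrthonormalBasis ℝ W) i : E), v⟫| := by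
  set d := Module.finrank ℝ W
  set b := stdOrthonormalBasis ℝ W
  set w : W := ⟨v, hv⟩
  have hnorm : ∑ i, ⟪(b i : E), v⟫ ^ 2 = ‖v‖ ^ 2 := by
    have h1 : ‖b.repr w‖ = ‖w‖ := b.repr.norm_map w
    have h2 : ‖b.repr w‖ ^ 2 = ∑ i, (b.repr w i) ^ 2 := by
      rw [EuclideanSpace.norm_eq]
      rw [Real.sq_sqrt (by positivity)]
      congr 1; funext i; rw [Real.norm_eq_abs, sq_abs]
    have h3 : ∀ i, b.repr w i = ⟪(b i : E), v⟫ := by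
      intro i
      rw [b.repr_apply_apply]
      rfl
    have h4 : ‖w‖ = ‖v‖ := rfl
    calc ∑ i, ⟪(b i : E), v⟫ ^ 2 = ∑ i, (b.repr w i) ^ 2 := by
          congr 1; funext i; rw [h3]
      _ = ‖b.repr w‖ ^ 2 := h2.symm
      _ = ‖v‖ ^ 2 := by rw [h1, h4]
  have hex : ∃ i : Fin d, ‖v‖ ^ 2 / d ≤ ⟪(b i : E), v⟫ ^ 2 := by
    by_contra hcon
    push_neg at hcon
    have huniv : (Finset.univ : Finset (Fin d)).Nonempty := by
      rw [Finset.univ_nonempty_iff]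
      exact Fin.pos_iff_nonempty.mp (by omega)
    have := Finset.sum_lt_sum_of_nonempty huniv (fun i _ => hcon i)
    rw [hnorm, Finset.sum_const, Finset.card_univ, Fintype.card_fin, nsmul_eq_mul] at this
    rw [mul_div_cancel₀] at this
    · exact lt_irrefl _ this
    · positivity
  obtain ⟨i, hi⟩ := hex
  refine ⟨i, ?_⟩
  have := Real.sqrt_le_sqrt hi
  rw [Real.sqrt_sq_eq_abs] at this
  refine le_trans (le_of_eq ?_) this
  rw [Real.sqrt_div (by positivity : (0:ℝ) ≤ ‖v‖ ^ 2) (d : ℝ), Real.sqrt_sq (norm_nonneg v)]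

lemma bm_proj_continuousAt [ProperSpace E] {S : Set E} (hcl : IsClosed S) (P : E → E)
    (hPS : ∀ x, P x ∈ S) (hPd : ∀ x, dist x (P x) = Metric.infDist x S)
    (hPu : ∀ x q, q ∈ S → dist x q = Metric.infDist x S → q = P x) (x : E) :
    ContinuousAt P x := by
  rw [Metric.continuousAt_iff]
  by_contra hcon
  push_neg at hcon
  obtain ⟨ε, hε, hbad⟩ := hcon
  have hseq : ∀ k : ℕ, ∃ y : E, dist y x < 1 / (k + 1) ∧ ε ≤ dist (P y) (P x) :=
    fun k => hbad (1 / (k + 1)) (by positivity)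
  choose u hu1 hu2 using hseq
  have hux : Tendsto u atTop (𝓝 x) := by
    rw [tendsto_iff_dist_tendsto_zero]
    refine squeeze_zero (fun k => dist_nonneg) (fun k => (hu1 k).le) ?_
    exact_mod_cast (tendsto_one_div_add_atTop_nhds_zero_nat : Tendsto (fun k : ℕ => (1/(k+1) : ℝ)) atTop (𝓝 0))
  have hlip : ∀ y : E, |Metric.infDist y S - Metric.infDist x S| ≤ dist y x := by
    intro y
    have := (Metric.lipschitz_infDist_pt S).dist_le_mul y x
    simpa [Real.dist_eq] using this
  have hball : ∀ k, P (u k) ∈ Metric.closedBall x (Metric.infDist x S + 2) := by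
    intro k
    have h1 : dist (P (u k)) x ≤ dist (P (u k)) (u k) + dist (u k) x := dist_triangle _ _ _
    have h2 : dist (u k) (P (u k)) = Metric.infDist (u k) S := hPd (u k)
    have h3 := abs_le.mp (hlip (u k))
    have h4 : dist (u k) x ≤ 1 := by
      have := (hu1 k).le
      have h5 : (1 : ℝ) / (k + 1) ≤ 1 := by
        rw [div_le_one (by positivity)]; linarith [Nat.cast_nonneg (α := ℝ) k]
      linarith
    rw [Metric.mem_closedBall]
    rw [dist_comm] at h2
    linarith
  obtain ⟨q, hqmem, φ, hφ, hqt⟩ :=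
    tendsto_subseq_of_bounded Metric.isBounded_closedBall hball
  have huφ : Tendsto (u ∘ φ) atTop (𝓝 x) := hux.comp hφ.tendsto_atTop
  have hqS : q ∈ S := hcl.mem_of_tendsto hqt (Eventually.of_forall fun k => hPS _)
  have hdq : dist x q = Metric.infDist x S := by
    have hd1 : Tendsto (fun k => dist (u (φ k)) (P (u (φ k)))) atTop (𝓝 (dist x q)) :=
      huφ.dist hqt
    have hd2 : Tendsto (fun k => Metric.infDist (u (φ k)) S) atTop (𝓝 (Metric.infDist x S)) :=
      ((Metric.continuous_infDist_pt S).tendsto x).comp huφ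
    have heq : (fun k => dist (u (φ k)) (P (u (φ k)))) = fun k => Metric.infDist (u (φ k)) S := by
      funext k; exact hPd _
    rw [heq] at hd1
    exact tendsto_nhds_unique hd1 hd2
  have hqPx : q = P x := hPu x q hqS hdq
  have hεle : ε ≤ dist q (P x) := by
    have : Tendsto (fun k => dist (P (u (φ k))) (P x)) atTop (𝓝 (dist q (P x))) :=
      hqt.dist tendsto_const_nhds
    exact le_of_tendsto_of_tendsto' tendsto_const_nhds this (fun k => hu2 _)
  rw [hqPx, dist_self] at hεle
  linarith

lemma bm_key [FiniteDimensional ℝ E] {S : Set E} (hcl : IsClosed S) (P : E → E)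
    (hPS : ∀ x, P x ∈ S) (hPd : ∀ x, dist x (P x) = Metric.infDist x S)
    (hPu : ∀ x q, q ∈ S → dist x q = Metric.infDist x S → q = P x)
    {s₀ : E} (hs₀ : s₀ ∈ convexHull ℝ S) {ε : ℝ} (hε : 0 < ε)
    (hball : ∀ u ∈ (affineSpan ℝ (convexHull ℝ S)).direction, ‖u‖ < ε →
      s₀ + u ∈ convexHull ℝ S) :
    s₀ ∈ S := by
  classical
  set C := convexHull ℝ S with hCdef
  set A := affineSpan ℝ C with hAdef
  set W := A.direction with hWdef
  have hSC : S ⊆ C := subset_convexHull ℝ S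
  have hCA : C ⊆ A := subset_affineSpan ℝ C
  have hs₀A : s₀ ∈ A := hCA hs₀
  set d := Module.finrank ℝ W with hddef
  by_cases hd0 : d = 0
  · -- degenerate case : W = ⊥, S is a single point
    have hWbot : W = ⊥ := Submodule.finrank_eq_zero.mp hd0
    have hSne : S.Nonempty := by
      by_contra h
      rw [Set.not_nonempty_iff_eq_empty] at h
      rw [hCdef, h, convexHull_empty] at hs₀
      exact hs₀
    obtain ⟨a, haS⟩ := hSne
    have haA : a ∈ A := hCA (hSC haS)
    have hmem : a -ᵥ s₀ ∈ W := AffineSubspace.vsub_mem_direction haA hs₀A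
    rw [hWbot] at hmem
    have hz : a - s₀ = 0 := by simpa using hmem
    have hsa : s₀ = a := (sub_eq_zero.mp hz).symm
    rw [hsa]; exact haS
  have hd1 : 1 ≤ d := Nat.one_le_iff_ne_zero.mpr hd0
  set b := stdOrthonormalBasis ℝ W with hbdef
  have hbnorm : ∀ i, ‖((b i : W) : E)‖ = 1 := by
    intro i
    have := b.orthonormal.1 i
    exact this
  set u : Fin d → Bool → E := fun i σ => (if σ then (ε/2) else -(ε/2)) • ((b i : W) : E)
    with hudef
  have huW : ∀ i σ, u i σ ∈ W := fun i σ => W.smul_mem _ (SetLike.coe_mem _)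
  have hunorm : ∀ i σ, ‖u i σ‖ < ε := by
    intro i σ
    rw [hudef]
    simp only [norm_smul, hbnorm, mul_one]
    cases σ <;> simp [abs_of_pos hε, abs_of_pos (half_pos hε)] <;> linarith
  have hpC : ∀ i σ, s₀ + u i σ ∈ C := fun i σ => hball _ (huW i σ) (hunorm i σ)
  have hcara : ∀ i : Fin d, ∃ G : Finset E, ↑G ⊆ S ∧
      s₀ + u i true ∈ convexHull ℝ (↑G : Set E) ∧
      s₀ + u i false ∈ convexHull ℝ (↑G : Set E) := by
    intro i
    have h1 : s₀ + u i true ∈ convexHull ℝ S := hpC i true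
    have h2 : s₀ + u i false ∈ convexHull ℝ S := hpC i false
    rw [convexHull_eq_union_convexHull_finite_subsets] at h1 h2
    simp only [Set.mem_iUnion] at h1 h2
    obtain ⟨G1, hG1s, hG1m⟩ := h1
    obtain ⟨G2, hG2s, hG2m⟩ := h2
    refine ⟨G1 ∪ G2, ?_, ?_, ?_⟩
    · rw [Finset.coe_union]
      exact Set.union_subset hG1s hG2s
    · exact convexHull_mono (by rw [Finset.coe_union]; exact Set.subset_union_left) hG1m
    · exact convexHull_mono (by rw [Finset.coe_union]; exact Set.subset_union_right) hG2m
  choose G hG1 hG2 hG3 using hcara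
  set F : Finset E := (Finset.univ : Finset (Fin d)).biUnion G with hFdef
  have hFS : ↑F ⊆ S := by
    intro s hs
    rw [Finset.mem_coe, hFdef, Finset.mem_biUnion] at hs
    obtain ⟨i, -, hi⟩ := hs
    exact hG1 i hi
  have hGF : ∀ i : Fin d, G i ⊆ F := by
    intro i t ht
    rw [hFdef, Finset.mem_biUnion]
    exact ⟨i, Finset.mem_univ i, ht⟩
  set c : ℝ := ε / 2 / Real.sqrt d with hcdef
  have hsd : 0 < Real.sqrt d := Real.sqrt_pos.mpr (by exact_mod_cast hd1)
  have hc : 0 < c := by rw [hcdef]; positivity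
  have hdir : ∀ v ∈ W, ∃ s ∈ F, c * ‖v‖ ≤ ⟪v, s - s₀⟫ := by
    intro v hv
    obtain ⟨i, hi⟩ := bm_basis_dir hd1 v hv
    set a : ℝ := ⟪((b i : W) : E), v⟫ with hadef
    have hca : c * ‖v‖ ≤ (ε/2) * |a| := by
      have h4 : (ε/2) * (‖v‖ / Real.sqrt d) ≤ (ε/2) * |a| :=
        mul_le_mul_of_nonneg_left hi (by positivity)
      have h5 : c * ‖v‖ = (ε/2) * (‖v‖ / Real.sqrt d) := by
        rw [hcdef]; field_simp
      linarith
    by_cases ha : 0 ≤ a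
    · obtain ⟨s, hsG, hle⟩ := bm_halfspace_max v (G i) (hG2 i)
      refine ⟨s, hGF i hsG, ?_⟩
      have hip : ⟪v, s₀ + u i true⟫ = ⟪v, s₀⟫ + (ε/2) * a := by
        rw [inner_add_right, hudef]
        simp only [if_true]
        rw [real_inner_smul_right, hadef, real_inner_comm ((b i : W) : E) v]
      have h3 : ⟪v, s - s₀⟫ = ⟪v, s⟫ - ⟪v, s₀⟫ := inner_sub_right _ _ _
      rw [h3]
      rw [hip] at hle
      rw [abs_of_nonneg ha] at hca
      linarith
    · obtain ⟨s, hsG, hle⟩ := bm_halfspace_max v (G i) (hG3 i)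
      refine ⟨s, hGF i hsG, ?_⟩
      have hip : ⟪v, s₀ + u i false⟫ = ⟪v, s₀⟫ + -((ε/2) * a) := by
        rw [inner_add_right, hudef]
        simp only [Bool.false_eq_true, if_false]
        rw [real_inner_smul_right, hadef, real_inner_comm ((b i : W) : E) v]
        ring
      have h3 : ⟪v, s - s₀⟫ = ⟪v, s⟫ - ⟪v, s₀⟫ := inner_sub_right _ _ _
      rw [h3]
      rw [hip] at hle
      rw [abs_of_neg (lt_of_not_ge ha)] at hca
      linarith
  have hFne : F.Nonempty := by
    obtain ⟨s, hs, -⟩ := hdir 0 W.zero_mem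
    exact ⟨s, hs⟩
  set M : ℝ := F.sup' hFne (fun s => ‖s - s₀‖) with hMdef
  have hM0 : 0 ≤ M := by
    obtain ⟨s, hs⟩ := hFne
    exact le_trans (norm_nonneg (s - s₀)) (Finset.le_sup' (fun s => ‖s - s₀‖) hs)
  set k : E → ℝ := fun x => ‖x - s₀‖^2 - (Metric.infDist x S)^2 with hkdef
  have hkcont : Continuous k :=
    ((continuous_id.sub continuous_const).norm.pow 2).sub
      ((Metric.continuous_infDist_pt S).pow 2)
  have hlow : ∀ x, x ∈ A → 2 * c * ‖x - s₀‖ - M^2 ≤ k x := by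
    intro x hx
    have hv : x - s₀ ∈ W := by
      have := AffineSubspace.vsub_mem_direction hx hs₀A
      simpa using this
    obtain ⟨s, hsF, hs⟩ := hdir (x - s₀) hv
    have hsS : s ∈ S := hFS hsF
    have h1 : Metric.infDist x S ≤ ‖x - s‖ := by
      rw [← dist_eq_norm]; exact Metric.infDist_le_dist_of_mem hsS
    have h2 : (Metric.infDist x S)^2 ≤ ‖x - s‖^2 := by
      have h0 : (0:ℝ) ≤ Metric.infDist x S := Metric.infDist_nonneg
      nlinarith
    have h3 : ‖x - s‖^2 = ‖x - s₀‖^2 - 2*⟪x - s₀, s - s₀⟫ + ‖s - s₀‖^2 := by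
      have hxs : x - s = (x - s₀) - (s - s₀) := by abel
      rw [hxs, norm_sub_sq_real]
    have hMs : ‖s - s₀‖ ≤ M := Finset.le_sup' (fun s => ‖s - s₀‖) hsF
    simp only [hkdef]
    nlinarith [norm_nonneg (s - s₀)]
  set R : ℝ := (M^2 + 1) / (2*c) with hRdef
  have hR0 : 0 < R := by rw [hRdef]; positivity
  have hAcl : IsClosed (A : Set E) := A.closed_of_finiteDimensional
  have hK : IsCompact ((A : Set E) ∩ Metric.closedBall s₀ R) :=
    (isCompact_closedBall s₀ R).inter_left hAcl
  have hs₀K : s₀ ∈ (A : Set E) ∩ Metric.closedBall s₀ R :=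
    ⟨hs₀A, Metric.mem_closedBall_self hR0.le⟩
  obtain ⟨xb, hxbK, hxbmin⟩ := hK.exists_isMinOn ⟨s₀, hs₀K⟩ hkcont.continuousOn
  have hxbA : xb ∈ A := hxbK.1
  have hks₀ : k s₀ ≤ 0 := by
    simp only [hkdef, sub_self, norm_zero]
    nlinarith [Metric.infDist_nonneg (x := s₀) (s := S)]
  have hglob : ∀ x, x ∈ A → k xb ≤ k x := by
    intro x hx
    by_cases hxR : dist x s₀ ≤ R
    · exact isMinOn_iff.mp hxbmin x ⟨hx, Metric.mem_closedBall.mpr hxR⟩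
    · push_neg at hxR
      have h1 := hlow x hx
      have h2 : ‖x - s₀‖ = dist x s₀ := (dist_eq_norm _ _).symm
      have h3 : 2*c*R - M^2 = 1 := by
        rw [hRdef]; field_simp; ring
      have hkx : 1 ≤ k x := by
        rw [h2] at h1
        nlinarith
      have hkxb : k xb ≤ k s₀ := isMinOn_iff.mp hxbmin s₀ hs₀K
      linarith
  have hPc : ContinuousAt P xb := bm_proj_continuousAt hcl P hPS hPd hPu xb
  have hvar : ∀ v, v ∈ W → 0 ≤ ⟪v, P xb - s₀⟫ := by
    intro v hv
    have hstep : ∀ t : ℝ, 0 < t → 0 ≤ ⟪v, P (xb + t • v) - s₀⟫ := by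
      intro t ht
      set y := xb + t • v with hydef
      have hyA : y ∈ A := by
        have := AffineSubspace.vadd_mem_of_mem_direction (W.smul_mem t hv) hxbA
        simpa [hydef, add_comm] using this
      set q := P y with hqdef
      have hqS : q ∈ S := hPS y
      have h1 : (Metric.infDist xb S)^2 ≤ ‖xb - q‖^2 := by
        have h := Metric.infDist_le_dist_of_mem hqS (x := xb)
        rw [dist_eq_norm] at h
        have h0 : (0:ℝ) ≤ Metric.infDist xb S := Metric.infDist_nonneg
        nlinarith
      have h2 : (Metric.infDist y S)^2 = ‖y - q‖^2 := by
        rw [← hPd y, dist_eq_norm]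
      have h3 : k xb ≤ k y := hglob y hyA
      have h4 : ‖xb - s₀‖^2 + ‖y - q‖^2 ≤ ‖y - s₀‖^2 + ‖xb - q‖^2 := by
        simp only [hkdef] at h3
        nlinarith
      have h5 := bm_inner_id xb y s₀ q
      have h6 : 0 ≤ ⟪y - xb, q - s₀⟫ := by linarith
      have h7 : y - xb = t • v := by rw [hydef]; abel
      rw [h7, real_inner_smul_left] at h6
      exact (mul_nonneg_iff_of_pos_left ht).mp h6
    have h0eq : (fun t : ℝ => xb + t • v) 0 = xb := by simp
    have hPatt : ContinuousAt (fun t : ℝ => P (xb + t • v)) 0 := by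
      have hmap : ContinuousAt (fun t : ℝ => xb + t • v) 0 :=
        (continuous_const.add (continuous_id.smul continuous_const)).continuousAt
      have hPc' : ContinuousAt P ((fun t : ℝ => xb + t • v) 0) := by
        rw [h0eq]; exact hPc
      have := ContinuousAt.comp (g := P) (f := fun t : ℝ => xb + t • v) (x := (0:ℝ)) hPc' hmap
      exact this
    have hin : ContinuousAt (fun t : ℝ => ⟪v, P (xb + t • v) - s₀⟫) 0 :=
      continuousAt_const.inner (hPatt.sub continuousAt_const)
    have hg : Tendsto (fun t : ℝ => ⟪v, P (xb + t • v) - s₀⟫) (𝓝[>] (0:ℝ))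
        (𝓝 ⟪v, P xb - s₀⟫) := by
      have h := hin.tendsto
      simp only [zero_smul, add_zero] at h
      exact h.mono_left nhdsWithin_le_nhds
    refine ge_of_tendsto hg ?_
    filter_upwards [self_mem_nhdsWithin] with t ht
    exact hstep t ht
  have hvW : P xb - s₀ ∈ W := by
    have := AffineSubspace.vsub_mem_direction (hCA (hSC (hPS xb))) hs₀A
    simpa using this
  have h1 := hvar _ hvW
  have h2 := hvar _ (W.neg_mem hvW)
  rw [inner_neg_left] at h2
  have hns : ⟪P xb - s₀, P xb - s₀⟫ = ‖P xb - s₀‖^2 := real_inner_self_eq_norm_sq _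
  have hz : ‖P xb - s₀‖^2 ≤ 0 := by
    rw [← hns]; linarith
  have hzero : P xb - s₀ = 0 := by
    have hn0 : ‖P xb - s₀‖ = 0 := by nlinarith [norm_nonneg (P xb - s₀), sq_nonneg ‖P xb - s₀‖]
    exact norm_eq_zero.mp hn0
  have hfin : s₀ = P xb := (sub_eq_zero.mp hzero).symm
  rw [hfin]
  exact hPS xb

lemma bm_easy [ProperSpace E] {S : Set E} (hS : S.Nonempty) (hcl : IsClosed S)
    (hcv : Convex ℝ S) (x : E) :
    ∃! y, y ∈ S ∧ dist x y = Metric.infDist x S := by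
  obtain ⟨y, hyS, hyd⟩ := hcl.exists_infDist_eq_dist hS x
  refine ⟨y, ⟨hyS, hyd.symm⟩, ?_⟩
  rintro z ⟨hzS, hzd⟩
  have hmid : (1/2 : ℝ) • z + (1/2 : ℝ) • y ∈ S :=
    hcv hzS hyS (by norm_num) (by norm_num) (by norm_num)
  have hmd : Metric.infDist x S ≤ dist x ((1/2 : ℝ) • z + (1/2 : ℝ) • y) :=
    Metric.infDist_le_dist_of_mem hmid
  set δ := Metric.infDist x S with hδ
  have h1 : ‖x - z‖ = δ := by rw [← dist_eq_norm]; exact hzd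
  have h2 : ‖x - y‖ = δ := by rw [← dist_eq_norm]; exact hyd.symm ▸ rfl
  have hpar := parallelogram_law_with_norm ℝ (x - z) (x - y)
  have hsum : x - z + (x - y) = (2 : ℝ) • (x - ((1/2 : ℝ) • z + (1/2 : ℝ) • y)) := by
    module
  have hdiff : x - z - (x - y) = y - z := by abel
  rw [hsum, hdiff, norm_smul, h1, h2] at hpar
  have hmd' : δ ≤ ‖x - ((1/2 : ℝ) • z + (1/2 : ℝ) • y)‖ := by
    rw [← dist_eq_norm]; exact hmd
  have hδ0 : 0 ≤ δ := Metric.infDist_nonneg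
  have hy0 : ‖y - z‖ ^ 2 ≤ 0 := by
    have hsq : (‖(2:ℝ)‖ * ‖x - ((1/2 : ℝ) • z + (1/2 : ℝ) • y)‖)^2 ≥ (2*δ)^2 := by
      have h2n : ‖(2:ℝ)‖ = 2 := by norm_num
      rw [h2n]
      have := mul_le_mul_of_nonneg_left hmd' (by norm_num : (0:ℝ) ≤ 2)
      nlinarith [norm_nonneg (x - ((1/2 : ℝ) • z + (1/2 : ℝ) • y))]
    nlinarith [hpar]
  have hn0 : ‖y - z‖ = 0 := by nlinarith [norm_nonneg (y - z), sq_nonneg ‖y - z‖]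
  have hyz : y = z := by
    have h := sub_eq_zero.mp (norm_eq_zero.mp hn0); exact h
  exact hyz.symm

/-- **Bunt–Motzkin theorem.**  A nonempty subset `S` of Euclidean space `ℝⁿ` is a Chebyshev
set (every point has a unique nearest point in `S`) if and only if `S` is closed and
convex. -/
theorem bunt_motzkin (n : ℕ) (S : Set (EuclideanSpace ℝ (Fin n))) (hS : S.Nonempty) :
    (∀ x : EuclideanSpace ℝ (Fin n), ∃! y, y ∈ S ∧ dist x y = Metric.infDist x S) ↔
      (IsClosed S ∧ Convex ℝ S) := by
  constructor
  · intro hCheb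
    have hex : ∀ x, ∃ y, y ∈ S ∧ dist x y = Metric.infDist x S := fun x => (hCheb x).exists
    choose P hP using hex
    have hPS : ∀ x, P x ∈ S := fun x => (hP x).1
    have hPd : ∀ x, dist x (P x) = Metric.infDist x S := fun x => (hP x).2
    have hPu : ∀ x q, q ∈ S → dist x q = Metric.infDist x S → q = P x :=
      fun x q h1 h2 => (hCheb x).unique ⟨h1, h2⟩ (hP x)
    have hclosed : IsClosed S := by
      apply isClosed_of_closure_subset
      intro x hx
      have h0 : Metric.infDist x S = 0 := Metric.infDist_zero_of_mem_closure hx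
      have hd : dist x (P x) = 0 := by rw [hPd x, h0]
      have hxe : x = P x := by rwa [dist_eq_zero] at hd
      rw [hxe]; exact hPS x
    refine ⟨hclosed, ?_⟩
    set C := convexHull ℝ S with hCdef
    have hCne : C.Nonempty := hS.mono (subset_convexHull ℝ S)
    obtain ⟨z, hz⟩ := Set.Nonempty.intrinsicInterior (convex_convexHull ℝ S) hCne
    have hzC : z ∈ C := intrinsicInterior_subset hz
    obtain ⟨y', hy'i, hy'e⟩ := mem_intrinsicInterior.mp hz
    rw [mem_interior_iff_mem_nhds, Metric.mem_nhds_iff] at hy'i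
    obtain ⟨ε, hε, hballsub⟩ := hy'i
    have hzkey : ∀ u ∈ (affineSpan ℝ C).direction, ‖u‖ < ε → z + u ∈ C := by
      intro u hu hun
      have hzA : z ∈ affineSpan ℝ C := by rw [← hy'e]; exact y'.2
      have hmem : z + u ∈ affineSpan ℝ C := by
        have := AffineSubspace.vadd_mem_of_mem_direction hu hzA
        simpa [add_comm] using this
      have hdist : dist (⟨z + u, hmem⟩ : affineSpan ℝ C) y' < ε := by
        rw [Subtype.dist_eq]
        have : dist (z + u) (y' : EuclideanSpace ℝ (Fin n)) = ‖u‖ := by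
          rw [hy'e, dist_eq_norm]
          simp
        rw [this]
        exact hun
      exact hballsub (Metric.mem_ball.mpr hdist)
    have hconvsub : C ⊆ S := by
      intro p hp
      have hseq : ∀ t : ℝ, 0 < t → t ≤ 1 → p + t • (z - p) ∈ S := by
        intro t ht ht1
        have hmemC : p + t • (z - p) ∈ convexHull ℝ S := by
          have heq : p + t • (z - p) = (1-t) • p + t • z := by module
          rw [heq]
          exact (convex_convexHull ℝ S) hp hzC (by linarith) ht.le (by ring)
        refine bm_key hclosed P hPS hPd hPu hmemC
          (by positivity : (0:ℝ) < t * ε) ?_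
        intro u hu hun
        have h2 : t⁻¹ • u ∈ (affineSpan ℝ C).direction := Submodule.smul_mem _ _ hu
        have h3 : ‖t⁻¹ • u‖ < ε := by
          rw [norm_smul, Real.norm_eq_abs, abs_of_pos (inv_pos.mpr ht)]
          calc t⁻¹ * ‖u‖ < t⁻¹ * (t * ε) := by
                exact mul_lt_mul_of_pos_left hun (inv_pos.mpr ht)
            _ = ε := by field_simp
        have h4 : z + t⁻¹ • u ∈ C := hzkey _ h2 h3
        have heq2 : p + t • (z - p) + u = (1-t) • p + t • (z + t⁻¹ • u) := by
          rw [smul_add, smul_smul, mul_inv_cancel₀ ht.ne', one_smul]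
          module
        rw [heq2]
        exact (convex_convexHull ℝ S) hp h4 (by linarith) ht.le (by ring)
      have hlim : Tendsto (fun k : ℕ => p + (1/(k+1) : ℝ) • (z - p)) atTop (𝓝 p) := by
        have h1 : Tendsto (fun k : ℕ => (1/(k+1) : ℝ)) atTop (𝓝 0) :=
          tendsto_one_div_add_atTop_nhds_zero_nat
        have h2 := (h1.smul_const (z - p)).const_add p
        simpa using h2
      have hmem : ∀ k : ℕ, p + (1/(k+1) : ℝ) • (z - p) ∈ S := by
        intro k
        refine hseq _ (by positivity) ?_
        rw [div_le_one (by positivity)]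
        linarith [Nat.cast_nonneg (α := ℝ) k]
      exact hclosed.mem_of_tendsto hlim (Eventually.of_forall hmem)
    have hSeq : S = C := Subset.antisymm (subset_convexHull ℝ S) hconvsub
    rw [hSeq]
    exact convex_convexHull ℝ S
  · rintro ⟨hcl, hcv⟩
    exact fun x => bm_easy hS hcl hcv x
end
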